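/- arXiv:1103.1099 — 11 statements merged into one kernel-verified Lean document; each statement's English description precedes it below -/
import Mathlib

section
/- Let G be a completely metrizable topological group and let κ be a cardinal with 1 ≤ κ ≤ ℵ₀. Then the set G_κ of κ-tuples of elements of G that freely generate a free subgroup is dense in G^κ (with the product topology) if and only if G_κ is comeagre in G^κ (i.e., G_κ belongs to the residual filter of G^κ). -/
universe u v

/-- The set of `ι`-tuples of elements of `G` that freely generate a free subgroup,
i.e. such that the induced homomorphism `FreeGroup ι →* G` is injective. -/
def freeTuples (G : Type v) [Group G] (ι : Type u) : Set (ι → G) :=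
  {g | Function.Injective (FreeGroup.lift g)}

/-- A topological group `G` is almost `κ`-free if the set of `κ`-tuples of elements of `G`
that freely generate a free subgroup is dense in `G^κ` (with the product topology),
for every (equivalently, some) index type of cardinality `κ`. -/
def AlmostFree (G : Type v) [Group G] [TopologicalSpace G] (κ : Cardinal.{u}) : Prop :=
  ∀ ι : Type u, Cardinal.mk ι = κ → Dense (freeTuples G ι)


lemma cont_eval {G : Type v} [Group G] [TopologicalSpace G] [IsTopologicalGroup G]
    {ι : Type u} (w : FreeGroup ι) :
    Continuous (fun g : ι → G => FreeGroup.lift g w) := by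
  induction w with
  | C1 => simpa only [map_one] using (continuous_const : Continuous fun _ : ι → G => (1 : G))
  | of i =>
      show Continuous fun g : ι → G => FreeGroup.lift g (FreeGroup.of i)
      simpa only [FreeGroup.lift_apply_of] using continuous_apply i
  | inv_of i h => simpa only [map_inv, Pi.inv_def] using h.inv
  | mul x y hx hy => simpa only [map_mul, Pi.mul_def] using hx.mul hy

lemma freeGroup_countable {ι : Type u} [Countable ι] : Countable (FreeGroup ι) := by
  unfold FreeGroup
  infer_instance

lemma freeTuples_eq (G : Type v) [Group G] (ι : Type u) :
    freeTuples G ι = ⋂ w : {w : FreeGroup ι // w ≠ 1}, {g : ι → G | FreeGroup.lift g w.1 ≠ 1} := by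
  ext g
  simp only [freeTuples, Set.mem_setOf_eq, Set.mem_iInter, Subtype.forall]
  constructor
  · intro h w hw hw1
    exact hw ((injective_iff_map_eq_one (FreeGroup.lift g)).1 h w hw1)
  · intro h
    rw [injective_iff_map_eq_one]
    intro w hw
    by_contra hne
    exact h w hne hw

/-- If `G` is a completely metrizable topological group and `1 ≤ κ ≤ ℵ₀`, then the set of
`κ`-tuples of elements of `G` freely generating a free subgroup is dense in `G^κ` if and
only if it is comeagre in `G^κ`. -/
theorem stmt_0 {G : Type u} [Group G] [tG : TopologicalSpace G] [IsTopologicalGroup G]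
    (hmetr : ∃ m : MetricSpace G, m.toUniformSpace.toTopologicalSpace = tG ∧
      @CompleteSpace G m.toUniformSpace)
    (κ : Cardinal.{u}) (hκ1 : 1 ≤ κ) (hκ2 : κ ≤ Cardinal.aleph0)
    (ι : Type u) (hι : Cardinal.mk ι = κ) :
    Dense (freeTuples G ι) ↔ freeTuples G ι ∈ residual (ι → G) := by
  have hcount : Countable ι := Cardinal.mk_le_aleph0_iff.1 (hι ▸ hκ2)
  haveI : Countable (FreeGroup ι) := freeGroup_countable
  obtain ⟨m, hm, hcomp⟩ := hmetr
  subst hm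
  letI : MetricSpace G := m
  constructor
  · intro hd
    rw [freeTuples_eq, countable_iInter_mem]
    rintro ⟨w, hw⟩
    apply residual_of_dense_open
    · exact isOpen_compl_singleton.preimage (cont_eval w)
    · apply hd.mono
      intro g hg hg1
      exact hw ((injective_iff_map_eq_one (FreeGroup.lift g)).1 hg w hg1)
  · intro hres
    haveI : CompleteSpace G := hcomp
    letI pm : PseudoMetricSpace (ι → G) := UniformSpace.pseudoMetricSpace _
    haveI : BaireSpace (ι → G) := BaireSpace.of_completelyPseudoMetrizable
    exact dense_of_mem_residual hres
end

section
/- Let κ > 0 be a cardinal and let G and H be topological groups. Then the direct product G × H (with the product topology) is almost κ-free if and only if at least one of G and H is almost κ-free. -/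
universe u v

universe w

section helpers

lemma dense_homeo_image {X Y : Type*} [TopologicalSpace X] [TopologicalSpace Y]
    (F : X ≃ₜ Y) {s : Set X} (hs : Dense s) : Dense (F '' s) := by
  rw [dense_iff_closure_eq] at hs ⊢
  rw [← F.image_closure, hs, Set.image_univ, F.surjective.range_eq]

/-- The product homeomorphism. -/
def prodPiHomeo (G : Type v) (H : Type w) (ι : Type u) [TopologicalSpace G]
    [TopologicalSpace H] : ((ι → G) × (ι → H)) ≃ₜ (ι → G × H) where
  toFun p := fun i => (p.1 i, p.2 i)
  invFun f := (fun i => (f i).1, fun i => (f i).2)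
  left_inv p := rfl
  right_inv f := rfl
  continuous_toFun := continuous_pi fun i =>
    (((continuous_apply i).comp continuous_fst).prodMk ((continuous_apply i).comp continuous_snd))
  continuous_invFun :=
    (continuous_pi fun i => continuous_fst.comp (continuous_apply i)).prodMk
      (continuous_pi fun i => continuous_snd.comp (continuous_apply i))

lemma dense_freeTuples_congr {G : Type v} [Group G] [TopologicalSpace G]
    {ι ι' : Type u} (e : ι ≃ ι') (hd : Dense (freeTuples G ι)) : Dense (freeTuples G ι') := by
  set E : (ι → G) ≃ₜ (ι' → G) := Homeomorph.piCongrLeft (Y := fun _ => G) e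
  have himg : E '' (freeTuples G ι) ⊆ freeTuples G ι' := by
    rintro _ ⟨g, hg, rfl⟩
    have hEg : (E g : ι' → G) = fun j => g (e.symm j) := by
      funext j
      conv_lhs => rw [← e.apply_symm_apply j]
      exact Equiv.piCongrLeft_apply_apply (fun _ => G) e g (e.symm j)
    have hcomp : FreeGroup.lift (E g : ι' → G) =
        (FreeGroup.lift g).comp (FreeGroup.freeGroupCongr e.symm).toMonoidHom := by
      apply FreeGroup.ext_hom; intro a; simp [hEg]
    show Function.Injective (FreeGroup.lift (E g : ι' → G))
    rw [hcomp]
    exact hg.comp (FreeGroup.freeGroupCongr e.symm).injective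
  exact (dense_homeo_image E hd).mono himg

end helpers

section alg

lemma liftOne_injective {S : Type*} [Subsingleton S] [Nonempty S] :
    Function.Injective (FreeGroup.lift (fun _ : S => Multiplicative.ofAdd (1:ℤ))) := by
  haveI : Unique S := uniqueOfSubsingleton (Classical.arbitrary S)
  have u : S ≃ Unit := Equiv.ofUnique S Unit
  have hcomp : FreeGroup.lift (fun _ : S => Multiplicative.ofAdd (1:ℤ)) =
      (FreeGroup.lift (fun _ : Unit => Multiplicative.ofAdd (1:ℤ))).comp
        (FreeGroup.freeGroupCongr u).toMonoidHom := by
    apply FreeGroup.ext_hom; intro a; simp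
  rw [hcomp]
  have hUnit : Function.Injective (FreeGroup.lift (fun _ : Unit => Multiplicative.ofAdd (1:ℤ))) := by
    rw [injective_iff_map_eq_one]
    intro x hx
    have hx2 : x = FreeGroup.of () ^ (FreeGroup.freeGroupUnitEquivInt x) :=
      (FreeGroup.freeGroupUnitEquivInt.symm_apply_apply x).symm
    rw [hx2, map_zpow, FreeGroup.lift_apply_of] at hx
    have : Multiplicative.toAdd ((Multiplicative.ofAdd (1:ℤ)) ^ (FreeGroup.freeGroupUnitEquivInt x)) = 0 := by rw [hx]; rfl
    rw [toAdd_zpow, toAdd_ofAdd, smul_eq_mul, mul_one] at this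
    rw [hx2, this, zpow_zero]
  exact hUnit.comp (FreeGroup.freeGroupCongr u).injective

lemma exists_injective_toInt (K : Type*) [Group K] [IsFreeGroup K]
    (hcomm : ∀ a b : K, a * b = b * a) :
    ∃ φ : K →* Multiplicative ℤ, Function.Injective φ := by
  classical
  by_cases hS : Subsingleton (IsFreeGroup.Generators K)
  · rcases isEmpty_or_nonempty (IsFreeGroup.Generators K) with hE | hNE
    · haveI : Subsingleton K := by
        constructor
        intro a b
        have := (IsFreeGroup.toFreeGroup K).injective
        exact this (Subsingleton.elim _ _)
      exact ⟨1, fun a b _ => Subsingleton.elim a b⟩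
    · refine ⟨(FreeGroup.lift (fun _ : IsFreeGroup.Generators K => Multiplicative.ofAdd (1:ℤ))).comp
        (IsFreeGroup.toFreeGroup K).toMonoidHom, ?_⟩
      exact liftOne_injective.comp (IsFreeGroup.toFreeGroup K).injective
  · exfalso
    rw [not_subsingleton_iff_nontrivial] at hS
    obtain ⟨a, b, hab⟩ := Nontrivial.exists_pair_ne (α := IsFreeGroup.Generators K)
    set σ := Equiv.swap (0:Fin 3) 1
    set τ := Equiv.swap (1:Fin 3) 2
    have hστ : σ * τ ≠ τ * σ := by decide
    set f : IsFreeGroup.Generators K → Equiv.Perm (Fin 3) := fun x => if x = a then σ else τ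
    have h1 : IsFreeGroup.lift f (IsFreeGroup.of a) = σ := by rw [IsFreeGroup.lift_of]; simp [f]
    have h2 : IsFreeGroup.lift f (IsFreeGroup.of b) = τ := by rw [IsFreeGroup.lift_of]; simp [f, Ne.symm hab]
    apply hστ
    have := hcomm (IsFreeGroup.of a) (IsFreeGroup.of b)
    calc σ * τ = IsFreeGroup.lift f (IsFreeGroup.of a * IsFreeGroup.of b) := by rw [map_mul, h1, h2]
    _ = IsFreeGroup.lift f (IsFreeGroup.of b * IsFreeGroup.of a) := by rw [this]
    _ = τ * σ := by rw [map_mul, h1, h2]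

lemma freeGroup_inj_or {ι : Type u} {G : Type*} {H : Type*} [Group G] [Group H]
    (g : ι → G) (h : ι → H)
    (hinj : Function.Injective (FreeGroup.lift (fun i => (g i, h i) : ι → G × H))) :
    Function.Injective (FreeGroup.lift g) ∨ Function.Injective (FreeGroup.lift h) := by
  set φg := FreeGroup.lift g with hφg
  set φh := FreeGroup.lift h with hφh
  have hpair : FreeGroup.lift (fun i => (g i, h i) : ι → G × H) = φg.prod φh := by
    apply FreeGroup.ext_hom; intro a; simp [φg, φh]
  have htriv : ∀ x : FreeGroup ι, φg x = 1 → φh x = 1 → x = 1 := by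
    intro x h1 h2
    apply hinj
    rw [hpair, map_one, MonoidHom.prod_apply, h1, h2]; rfl
  by_contra hc
  push_neg at hc
  obtain ⟨hg', hh'⟩ := hc
  rw [injective_iff_map_eq_one] at hg' hh'
  push_neg at hg' hh'
  obtain ⟨n, hn1, hn2⟩ := hg'
  obtain ⟨m, hm1, hm2⟩ := hh'
  have hcomm : ∀ a b : FreeGroup ι, φg a = 1 → φh b = 1 → a * b = b * a := by
    intro a b ha hb
    have hcg : φg (a * b * a⁻¹ * b⁻¹) = 1 := by
      simp [map_mul, map_inv, ha]
    have hch : φh (a * b * a⁻¹ * b⁻¹) = 1 := by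
      simp [map_mul, map_inv, hb]
    have := htriv _ hcg hch
    have h2 : a * b * a⁻¹ * b⁻¹ * (b * a) = 1 * (b * a) := by rw [this]
    rw [one_mul] at h2
    rw [← h2]; group
  set K := Subgroup.closure ({n, m} : Set (FreeGroup ι)) with hK
  have hnK : n ∈ K := Subgroup.subset_closure (by simp)
  have hmK : m ∈ K := Subgroup.subset_closure (by simp)
  have hKcomm : ∀ a b : K, a * b = b * a := by
    rintro ⟨a, ha⟩ ⟨b, hb⟩
    have : a * b = b * a := by
      refine Subgroup.closure_induction₂ (p := fun x y _ _ => x * y = y * x) ?_ ?_ ?_ ?_ ?_ ?_ ?_ ha hb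
      · rintro x y (rfl | rfl) (rfl | rfl)
        · rfl
        · exact hcomm _ _ hn1 hm1
        · exact (hcomm _ _ hn1 hm1).symm
        · rfl
      · intro x _; rw [one_mul, mul_one]
      · intro x _; rw [one_mul, mul_one]
      · intro x y z _ _ _ h1 h2
        rw [mul_assoc, h2, ← mul_assoc, h1, mul_assoc]
      · intro y z x _ _ _ h1 h2
        rw [← mul_assoc, h1, mul_assoc, h2, ← mul_assoc]
      · intro x y _ _ hxy
        exact (Commute.inv_left hxy).eq
      · intro x y _ _ hxy
        exact (Commute.inv_right hxy).eq
    exact Subtype.ext this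
  obtain ⟨φ, hφ⟩ := exists_injective_toInt K hKcomm
  set n' : K := ⟨n, hnK⟩
  set m' : K := ⟨m, hmK⟩
  set p := Multiplicative.toAdd (φ n') with hp
  set q := Multiplicative.toAdd (φ m') with hq
  have hzp : φ (n' ^ q) = φ (m' ^ p) := by
    have h0 : Multiplicative.toAdd (φ (n' ^ q)) = Multiplicative.toAdd (φ (m' ^ p)) := by
      rw [map_zpow φ n' q, map_zpow φ m' p, toAdd_zpow, toAdd_zpow, smul_eq_mul, smul_eq_mul]
      exact mul_comm q p
    exact Multiplicative.toAdd.injective h0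
  have hnq : (n : FreeGroup ι) ^ q = m ^ p := by
    have := hφ hzp
    have := congrArg (Subtype.val) this
    simpa using this
  have h1 : φg (n ^ q) = 1 := by rw [map_zpow, hn1, one_zpow]
  have h2 : φh (n ^ q) = 1 := by rw [hnq, map_zpow, hm1, one_zpow]
  have hnq1 : (n : FreeGroup ι) ^ q = 1 := htriv _ h1 h2
  have hn'q : n' ^ q = 1 := Subtype.ext (by push_cast; exact hnq1)
  have hfin : Multiplicative.toAdd (φ (n' ^ q)) = 0 := by rw [hn'q, map_one]; rfl
  rw [map_zpow φ n' q, toAdd_zpow, smul_eq_mul] at hfin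
  rcases mul_eq_zero.mp hfin with h | h
  · apply hm2
    have h1 : φ m' = 1 := Multiplicative.toAdd.injective h
    have := (injective_iff_map_eq_one φ).mp hφ _ h1
    exact congrArg Subtype.val this
  · apply hn2
    have h1 : φ n' = 1 := Multiplicative.toAdd.injective h
    have := (injective_iff_map_eq_one φ).mp hφ _ h1
    exact congrArg Subtype.val this

end alg

/-- For a cardinal `κ > 0` and topological groups `G` and `H`, the direct product `G × H`
(with the product topology) is almost `κ`-free if and only if at least one of `G` and `H`
is almost `κ`-free. -/
theorem stmt_1 (κ : Cardinal.{u}) (hκ : 0 < κ)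
    {G : Type v} [Group G] [TopologicalSpace G] [IsTopologicalGroup G]
    {H : Type w} [Group H] [TopologicalSpace H] [IsTopologicalGroup H] :
    AlmostFree (G × H) κ ↔ AlmostFree G κ ∨ AlmostFree H κ := by
  constructor
  · intro hGH
    by_contra hc
    push_neg at hc
    obtain ⟨hG, hH⟩ := hc
    simp only [AlmostFree, not_forall] at hG hH
    obtain ⟨ιG, hιG, hdG⟩ := hG
    obtain ⟨ιH, hιH, hdH⟩ := hH
    set ι₀ := κ.out
    have hι₀ : Cardinal.mk ι₀ = κ := Cardinal.mk_out κ
    -- transfer non-density to ι₀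
    have heG : Nonempty (ι₀ ≃ ιG) := Cardinal.eq.mp (by rw [hι₀, hιG])
    have heH : Nonempty (ι₀ ≃ ιH) := Cardinal.eq.mp (by rw [hι₀, hιH])
    obtain ⟨eG⟩ := heG
    obtain ⟨eH⟩ := heH
    have hdG0 : ¬ Dense (freeTuples G ι₀) := fun hd => hdG (dense_freeTuples_congr eG hd)
    have hdH0 : ¬ Dense (freeTuples H ι₀) := fun hd => hdH (dense_freeTuples_congr eH hd)
    -- pick points outside closures
    rw [dense_iff_closure_eq, ← Ne, ← Set.ssubset_univ_iff] at hdG0 hdH0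
    obtain ⟨g₀, -, hg₀⟩ := Set.exists_of_ssubset hdG0
    obtain ⟨h₀, -, hh₀⟩ := Set.exists_of_ssubset hdH0
    have hdense := hGH ι₀ hι₀
    set pG : (ι₀ → G × H) → (ι₀ → G) := fun f i => (f i).1 with hpG
    set pH : (ι₀ → G × H) → (ι₀ → H) := fun f i => (f i).2 with hpH
    have hpGc : Continuous pG := continuous_pi fun i => continuous_fst.comp (continuous_apply i)
    have hpHc : Continuous pH := continuous_pi fun i => continuous_snd.comp (continuous_apply i)
    have hsub : freeTuples (G × H) ι₀ ⊆
        (pG ⁻¹' freeTuples G ι₀) ∪ (pH ⁻¹' freeTuples H ι₀) := by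
      intro f hf
      have hf' : Function.Injective (FreeGroup.lift (fun i => ((f i).1, (f i).2) : ι₀ → G × H)) := by
        have : (fun i => ((f i).1, (f i).2) : ι₀ → G × H) = f := by funext i; rfl
        rw [this]; exact hf
      exact freeGroup_inj_or (fun i => (f i).1) (fun i => (f i).2) hf'
    have hdu : Dense ((pG ⁻¹' freeTuples G ι₀) ∪ (pH ⁻¹' freeTuples H ι₀)) :=
      hdense.mono hsub
    set f₀ : ι₀ → G × H := fun i => (g₀ i, h₀ i)
    have hf₀ := hdu f₀
    rw [closure_union] at hf₀
    rcases hf₀ with hf₀ | hf₀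
    · exact hg₀ (hpGc.closure_preimage_subset _ hf₀)
    · exact hh₀ (hpHc.closure_preimage_subset _ hf₀)
  · rintro (hG | hH) <;> intro ι hι
    · have hd : Dense ((freeTuples G ι) ×ˢ (Set.univ : Set (ι → H))) :=
        (hG ι hι).prod dense_univ
      refine (dense_homeo_image (prodPiHomeo G H ι) hd).mono ?_
      rintro _ ⟨⟨g, h⟩, ⟨hg, -⟩, rfl⟩
      show Function.Injective (FreeGroup.lift (fun i => (g i, h i) : ι → G × H))
      have hcomp : FreeGroup.lift g = (MonoidHom.fst G H).comp
          (FreeGroup.lift (fun i => (g i, h i) : ι → G × H)) := by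
        apply FreeGroup.ext_hom; intro a; simp
      have hg' : Function.Injective ⇑(FreeGroup.lift g) := hg
      rw [hcomp, MonoidHom.coe_comp] at hg'
      exact Function.Injective.of_comp hg'
    · have hd : Dense ((Set.univ : Set (ι → G)) ×ˢ (freeTuples H ι)) :=
        dense_univ.prod (hH ι hι)
      refine (dense_homeo_image (prodPiHomeo G H ι) hd).mono ?_
      rintro _ ⟨⟨g, h⟩, ⟨-, hh⟩, rfl⟩
      show Function.Injective (FreeGroup.lift (fun i => (g i, h i) : ι → G × H))
      have hcomp : FreeGroup.lift h = (MonoidHom.snd G H).comp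
          (FreeGroup.lift (fun i => (g i, h i) : ι → G × H)) := by
        apply FreeGroup.ext_hom; intro a; simp
      have hh' : Function.Injective ⇑(FreeGroup.lift h) := hh
      rw [hcomp, MonoidHom.coe_comp] at hh'
      exact Function.Injective.of_comp hh'
end

section
/- Let G be a topological group. Then G is almost free (i.e., almost n-free for every positive integer n) if and only if G is almost ℵ₀-free. -/
universe u v

open FreeGroup

lemma freeGroup_map_inj {α β : Type*} {g : α → β} (r : β → α) (hr : ∀ x, r (g x) = x) :
    Function.Injective (FreeGroup.map g) := by
  have h : Function.LeftInverse (FreeGroup.map r) (FreeGroup.map g) := fun x => by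
    rw [FreeGroup.map.comp]
    have : r ∘ g = id := funext hr
    rw [this]
    exact FreeGroup.map.id x
  exact h.injective

lemma key_free (A : Type u) :
    ∃ f : A ⊕ ℕ → FreeGroup (A ⊕ Fin 2),
      (∀ j : A, f (Sum.inl j) = FreeGroup.of (Sum.inl j)) ∧
      Function.Injective (FreeGroup.lift f) := by
  classical
  -- shift automorphism of FreeGroup (A ⊕ ℤ)
  set σ : MulAut (FreeGroup (A ⊕ ℤ)) :=
    FreeGroup.freeGroupCongr (Equiv.sumCongr (Equiv.refl A) (Equiv.addRight (1 : ℤ))) with hσ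
  have hσof : ∀ m : ℤ, σ (FreeGroup.of (Sum.inr m)) = FreeGroup.of (Sum.inr (m + 1)) := by
    intro m; simp [hσ, FreeGroup.freeGroupCongr]
  have hσpow : ∀ (k : ℕ) (m : ℤ), (σ ^ k) (FreeGroup.of (Sum.inr m))
      = FreeGroup.of (Sum.inr (m + k)) := by
    intro k
    induction k with
    | zero => intro m; simp
    | succ k ih =>
      intro m
      rw [pow_succ']
      show σ ((σ ^ k) (FreeGroup.of (Sum.inr m))) = _
      rw [ih m, hσof]
      congr 1
      push_cast
      ring_nf
  set φ : Multiplicative ℤ →* MulAut (FreeGroup (A ⊕ ℤ)) := zpowersHom _ σ with hφ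
  -- the family
  set f : A ⊕ ℕ → FreeGroup (A ⊕ Fin 2) :=
    Sum.elim (fun j => FreeGroup.of (Sum.inl j))
      (fun k => (FreeGroup.of (Sum.inr 1)) ^ k * FreeGroup.of (Sum.inr 0)
        * ((FreeGroup.of (Sum.inr 1)) ^ k)⁻¹) with hfdef
  refine ⟨f, fun j => rfl, ?_⟩
  set ρ : FreeGroup (A ⊕ Fin 2) →* FreeGroup (A ⊕ ℤ) ⋊[φ] Multiplicative ℤ :=
    FreeGroup.lift (Sum.elim (fun j => SemidirectProduct.inl (FreeGroup.of (Sum.inl j)))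
      (fun i => if i = 0 then SemidirectProduct.inl (FreeGroup.of (Sum.inr 0))
        else SemidirectProduct.inr (Multiplicative.ofAdd 1))) with hρ
  have hcomp : ρ.comp (FreeGroup.lift f)
      = SemidirectProduct.inl.comp (FreeGroup.map (Sum.map id (fun k : ℕ => (k : ℤ)))) := by
    apply FreeGroup.ext_hom
    rintro (j | k)
    · simp [hρ, hfdef]
    · simp only [MonoidHom.comp_apply, FreeGroup.lift_apply_of, FreeGroup.map.of, hfdef,
        Sum.elim_inr, Sum.map_inr, id]
      rw [MonoidHom.map_mul, MonoidHom.map_mul, MonoidHom.map_inv, MonoidHom.map_pow]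
      have h1 : ρ (FreeGroup.of (Sum.inr 1)) = SemidirectProduct.inr (Multiplicative.ofAdd 1) := by
        simp [hρ]
      have h0 : ρ (FreeGroup.of (Sum.inr 0)) = SemidirectProduct.inl (FreeGroup.of (Sum.inr 0)) := by
        simp [hρ]
      rw [h1, h0, ← MonoidHom.map_pow]
      rw [← MonoidHom.map_inv SemidirectProduct.inr, ← SemidirectProduct.inl_aut ((Multiplicative.ofAdd (1:ℤ)) ^ k)]
      congr 1
      have : φ ((Multiplicative.ofAdd (1:ℤ)) ^ k) = σ ^ k := by
        rw [hφ, zpowersHom_apply]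
        have : ((Multiplicative.ofAdd (1:ℤ)) ^ k).toAdd = (k : ℤ) := by
          simp
        rw [this, zpow_natCast]
      rw [this]
      have := hσpow k 0
      rw [zero_add] at this
      exact this
  have hinj : Function.Injective (ρ.comp (FreeGroup.lift f)) := by
    rw [hcomp]
    refine SemidirectProduct.inl_injective.comp ?_
    exact freeGroup_map_inj (Sum.map id Int.toNat) (by rintro (a | k) <;> simp)
  exact fun x y hxy => hinj (by simp [MonoidHom.comp_apply, hxy])

/-- A topological group `G` is almost free (i.e., almost `n`-free for every positive
integer `n`) if and only if it is almost `ℵ₀`-free. -/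
theorem stmt_4 {G : Type v} [Group G] [TopologicalSpace G] [IsTopologicalGroup G] :
    (∀ n : ℕ, 0 < n → AlmostFree.{u} G n) ↔ AlmostFree.{u} G Cardinal.aleph0 := by
  classical
  constructor
  · -- finite case implies countable case
    intro H ι hι
    rw [dense_iff_inter_open]
    rintro U hU ⟨x, hx⟩
    obtain ⟨s, V, hV, hsub⟩ := isOpen_pi_iff.mp hU x hx
    haveI : Countable ι := Cardinal.mk_le_aleph0_iff.mp hι.le
    haveI : Infinite ι := Cardinal.infinite_iff.mpr hι.ge
    haveI : Infinite {i : ι // i ∉ s} := by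
      have : ((s : Set ι))ᶜ.Infinite := Set.Finite.infinite_compl (s.finite_toSet)
      exact Set.infinite_coe_iff.mpr this
    obtain ⟨dnm⟩ := nonempty_denumerable {i : ι // i ∉ s}
    let eℕ : {i : ι // i ∉ s} ≃ ℕ := Denumerable.eqv _
    let e : ι ≃ ({i : ι // i ∈ s} ⊕ ℕ) :=
      (Equiv.sumCompl (· ∈ s)).symm.trans (Equiv.sumCongr (Equiv.refl _) eℕ)
    obtain ⟨f, hf1, hf2⟩ := key_free {i : ι // i ∈ s}
    -- apply almost-freeness at cardinality s.card + 2
    have hκ : Cardinal.mk ({i : ι // i ∈ s} ⊕ ULift.{u} (Fin 2))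
        = ((s.card + 2 : ℕ) : Cardinal) := by
      simp [Cardinal.mk_coe_finset]
    have hD := H (s.card + 2) (by omega) _ hκ
    let W : Set (({i : ι // i ∈ s} ⊕ ULift.{u} (Fin 2)) → G) :=
      ⋂ j : {i : ι // i ∈ s}, (fun t => t (Sum.inl j)) ⁻¹' (V j)
    have hWopen : IsOpen W := isOpen_iInter_of_finite fun j =>
      (hV j j.2).1.preimage (continuous_apply _)
    have hWne : W.Nonempty := by
      refine ⟨Sum.elim (fun j => x j) (fun _ => 1), ?_⟩
      simp only [W, Set.mem_iInter, Set.mem_preimage, Sum.elim_inl]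
      exact fun j => (hV j j.2).2
    obtain ⟨t, htW, htfree⟩ := dense_iff_inter_open.mp hD W hWopen hWne
    simp only [W, Set.mem_iInter, Set.mem_preimage] at htW
    let t' : ({i : ι // i ∈ s} ⊕ Fin 2) → G := t ∘ Sum.map id ULift.up
    let g : ι → G := fun i => FreeGroup.lift t' (f (e i))
    have hlift : FreeGroup.lift g
        = (FreeGroup.lift t').comp ((FreeGroup.lift f).comp (FreeGroup.map e)) := by
      apply FreeGroup.ext_hom
      intro i
      simp [g, MonoidHom.comp_apply]
    have hginj : Function.Injective (FreeGroup.lift g) := by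
      rw [hlift]
      simp only [MonoidHom.coe_comp]
      refine Function.Injective.comp ?_ (Function.Injective.comp hf2 ?_)
      · -- lift t' injective
        have htinj : Function.Injective (FreeGroup.lift t) := htfree
        have ht' : FreeGroup.lift t'
            = (FreeGroup.lift t).comp (FreeGroup.map (Sum.map id ULift.up)) := by
          apply FreeGroup.ext_hom
          intro y
          simp [t', MonoidHom.comp_apply]
        rw [ht']
        simp only [MonoidHom.coe_comp]
        exact htinj.comp
          (freeGroup_map_inj (g := Sum.map id ULift.up) (Sum.map id ULift.down)
            (by rintro (a | u) <;> simp))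
      · exact freeGroup_map_inj (g := ⇑e) e.symm (fun i => e.symm_apply_apply i)
    refine ⟨g, hsub ?_, hginj⟩
    intro i hi
    have hi' : i ∈ s := hi
    have he : e i = Sum.inl ⟨i, hi'⟩ := by
      simp [e, Equiv.sumCompl_symm_apply_of_pos (p := (· ∈ s)) hi']
    show g i ∈ V i
    simp only [g, he, hf1, FreeGroup.lift_apply_of]
    exact htW ⟨i, hi'⟩
  · -- countable case implies finite case
    intro H n hn ι hι
    haveI : Nonempty ι := Cardinal.mk_ne_zero_iff.mp (by rw [hι]; exact_mod_cast hn.ne')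
    have hκ : Cardinal.mk (ι ⊕ ULift.{u} ℕ) = Cardinal.aleph0 := by
      simp only [Cardinal.mk_sum, Cardinal.mk_uLift, Cardinal.mk_nat, Cardinal.lift_id, Cardinal.lift_aleph0, hι]
      exact Cardinal.add_eq_right le_rfl (Cardinal.nat_lt_aleph0 n).le
    have hD := H _ hκ
    rw [dense_iff_inter_open]
    intro U hU hUne
    let π : ((ι ⊕ ULift.{u} ℕ) → G) → (ι → G) := fun g => g ∘ Sum.inl
    have hπc : Continuous π := continuous_pi fun i => continuous_apply (Sum.inl i)
    have hπU : (π ⁻¹' U).Nonempty := by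
      obtain ⟨x, hx⟩ := hUne
      exact ⟨Sum.elim x 1, by simpa [π] using hx⟩
    obtain ⟨g, hgU, hgfree⟩ := dense_iff_inter_open.mp hD _ (hU.preimage hπc) hπU
    refine ⟨π g, hgU, ?_⟩
    have : FreeGroup.lift (π g) = (FreeGroup.lift g).comp (FreeGroup.map Sum.inl) := by
      apply FreeGroup.ext_hom
      intro i
      simp [π, MonoidHom.comp_apply]
    show Function.Injective (FreeGroup.lift (π g))
    rw [this]
    simp only [MonoidHom.coe_comp]
    exact Function.Injective.comp hgfree
      (freeGroup_map_inj (Sum.elim id (fun _ => Classical.arbitrary ι)) (fun i => rfl))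
end

section
/- Let ι be a type with at least two elements, and suppose the free group F = FreeGroup ι carries a group topology (i.e., F is a topological group) that is not discrete. Then every open neighborhood U of the identity in F is not commutative (there exist a, b ∈ U with a*b ≠ b*a); consequently, U contains two elements that freely generate a free subgroup of rank 2 (i.e., the homomorphism from the free group on two generators sending the generators to these two elements is injective). -/
universe u v

namespace FG

variable {ι : Type u}

/-- exponent sum at a generator -/
noncomputable def expSum (i : ι) : FreeGroup ι →* Multiplicative ℤ :=
  haveI := Classical.decEq ι
  FreeGroup.lift (fun j => if j = i then Multiplicative.ofAdd 1 else 1)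

@[simp] lemma expSum_of_self (i : ι) : expSum i (FreeGroup.of i) = Multiplicative.ofAdd 1 := by
  simp [expSum]

@[simp] lemma expSum_of_ne {i j : ι} (h : j ≠ i) : expSum i (FreeGroup.of j) = 1 := by
  simp [expSum, h]

lemma of_pow_eq_one {i : ι} {n : ℤ} (h : (FreeGroup.of i : FreeGroup ι) ^ n = 1) : n = 0 := by
  have h2 := congrArg (expSum i) h
  simp only [map_zpow, expSum_of_self, map_one] at h2
  have h3 := congrArg Multiplicative.toAdd h2
  simpa using h3

lemma eq_of_commute_of (i j : ι) (h : Commute (FreeGroup.of i : FreeGroup ι) (FreeGroup.of j)) :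
    i = j := by
  by_contra hne
  have hnc : ¬ Commute (Equiv.swap (0 : Fin 3) 1) (Equiv.swap 1 2) := by
    rw [Commute, SemiconjBy, Equiv.ext_iff]
    decide
  classical
  let f : ι → Equiv.Perm (Fin 3) := fun k =>
    if k = i then Equiv.swap 0 1 else if k = j then Equiv.swap 1 2 else 1
  have h2 : Commute (Equiv.swap (0 : Fin 3) 1) (Equiv.swap 1 2) := by
    have := h.map (FreeGroup.lift f)
    simpa [f, hne, Ne.symm hne] using this
  exact hnc h2

lemma subsingleton_of_comm {S : Type u} (h : ∀ a b : FreeGroup S, Commute a b) :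
    ∀ i j : S, i = j := fun i j => eq_of_commute_of i j (h _ _)

lemma exists_zpow_of_subsingleton {S : Type u} (hS : ∀ i j : S, i = j) (i₀ : S)
    (x : FreeGroup S) : ∃ n : ℤ, x = (FreeGroup.of i₀) ^ n := by
  induction x using FreeGroup.induction_on with
  | C1 => exact ⟨0, by simp⟩
  | of i => exact ⟨1, by rw [hS i₀ i, zpow_one]⟩
  | inv_of i ih => obtain ⟨n, hn⟩ := ih; exact ⟨-n, by rw [hn, zpow_neg]⟩
  | mul a b iha ihb =>
    obtain ⟨n, hn⟩ := iha; obtain ⟨m, hm⟩ := ihb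
    exact ⟨n + m, by rw [hn, hm, zpow_add]⟩
variable {ι : Type u}


lemma freeGroup_eq_one_of_isEmpty {S : Type u} [IsEmpty S] (x : FreeGroup S) : x = 1 := by
  induction x using FreeGroup.induction_on with
  | C1 => rfl
  | of i => exact isEmptyElim i
  | inv_of i ih => exact isEmptyElim i
  | mul a b iha ihb => rw [iha, ihb, one_mul]

/-- An abelian subgroup of a free group is cyclic with a torsion-free generator. -/
lemma cyclic_of_comm_subgroup (H : Subgroup (FreeGroup ι))
    (hcomm : ∀ x ∈ H, ∀ y ∈ H, Commute x y) :
    (∀ x ∈ H, x = 1) ∨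
      ∃ z ∈ H, (∀ k : ℤ, z ^ k = 1 → k = 0) ∧ ∀ x ∈ H, ∃ n : ℤ, x = z ^ n := by
  let S := IsFreeGroup.Generators H
  let e : FreeGroup S ≃* H := IsFreeGroup.mulEquiv H
  have hS : ∀ i j : S, i = j := by
    apply subsingleton_of_comm
    intro a b
    have h := hcomm (e a) (e a).2 (e b) (e b).2
    have : e (a * b) = e (b * a) := by
      rw [map_mul, map_mul]; exact Subtype.ext h
    exact e.injective this
  rcases isEmpty_or_nonempty S with hE | ⟨⟨i₀⟩⟩
  · left
    intro x hx
    have : e.symm ⟨x, hx⟩ = 1 := freeGroup_eq_one_of_isEmpty _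
    have := congrArg (fun y => (e y : FreeGroup ι)) this
    simpa using this
  · right
    refine ⟨(e (FreeGroup.of i₀) : FreeGroup ι), (e (FreeGroup.of i₀)).2, ?_, ?_⟩
    · intro k hk
      have h2 : e (FreeGroup.of i₀ ^ k) = 1 := by
        rw [map_zpow]
        exact Subtype.ext (by push_cast; exact hk)
      rw [← map_one e] at h2
      exact of_pow_eq_one (e.injective h2)
    · intro x hx
      obtain ⟨n, hn⟩ := exists_zpow_of_subsingleton hS i₀ (e.symm ⟨x, hx⟩)
      refine ⟨n, ?_⟩
      have := congrArg (fun y => (e y : FreeGroup ι)) hn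
      simpa [map_zpow] using this

/-- Two commuting elements of a free group have a common root. -/
lemma commute_common_root {a b : FreeGroup ι} (h : Commute a b) :
    ∃ z : FreeGroup ι, (∃ m : ℤ, a = z ^ m) ∧ ∃ n : ℤ, b = z ^ n := by
  have ha : a ∈ Subgroup.closure {a, b} :=
    Subgroup.subset_closure (Set.mem_insert _ _)
  have hb : b ∈ Subgroup.closure {a, b} :=
    Subgroup.subset_closure (Set.mem_insert_of_mem _ rfl)
  have hcomm : ∀ x ∈ Subgroup.closure {a, b}, ∀ y ∈ Subgroup.closure {a, b}, Commute x y := by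
    intro x hx y hy
    induction hx, hy using Subgroup.closure_induction₂ with
    | mem x y hx hy =>
      rcases hx with rfl | hx <;> rcases hy with rfl | hy
      · exact Commute.refl _
      · rw [Set.mem_singleton_iff] at hy; subst hy; exact h
      · rw [Set.mem_singleton_iff] at hx; subst hx; exact h.symm
      · rw [Set.mem_singleton_iff] at hx hy; subst hx; subst hy; exact Commute.refl _
    | one_left x hx => exact Commute.one_left _
    | one_right x hx => exact Commute.one_right _
    | mul_left x y z hx hy hz h1 h2 => exact h1.mul_left h2
    | mul_right y z x hy hz hx h1 h2 => exact h1.mul_right h2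
    | inv_left x y hx hy h1 => exact h1.inv_left
    | inv_right x y hx hy h1 => exact h1.inv_right
  rcases cyclic_of_comm_subgroup _ hcomm with h1 | ⟨z, _, _, hz⟩
  · exact ⟨1, ⟨1, by simp [h1 a ha]⟩, ⟨1, by simp [h1 b hb]⟩⟩
  · exact ⟨z, hz a ha, hz b hb⟩

/-- Free groups are torsion-free. -/
lemma tf {x : FreeGroup ι} (hx : x ≠ 1) {n : ℤ} (h : x ^ n = 1) : n = 0 := by
  have hxx : x ∈ Subgroup.closure {x} := Subgroup.subset_closure rfl
  have hcomm : ∀ p ∈ Subgroup.closure {x}, ∀ q ∈ Subgroup.closure ({x} : Set (FreeGroup ι)),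
      Commute p q := by
    intro p hp q hq
    induction hp, hq using Subgroup.closure_induction₂ with
    | mem p q hp hq =>
      rw [Set.mem_singleton_iff] at hp hq; subst hp; subst hq; exact Commute.refl _
    | one_left x hx => exact Commute.one_left _
    | one_right x hx => exact Commute.one_right _
    | mul_left x y z hx hy hz h1 h2 => exact h1.mul_left h2
    | mul_right y z x hy hz hx h1 h2 => exact h1.mul_right h2
    | inv_left x y hx hy h1 => exact h1.inv_left
    | inv_right x y hx hy h1 => exact h1.inv_right
  rcases cyclic_of_comm_subgroup _ hcomm with h1 | ⟨z, _, hzt, hz⟩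
  · exact absurd (h1 x hxx) hx
  · obtain ⟨m, hm⟩ := hz x hxx
    have hmn : z ^ (m * n) = 1 := by rw [zpow_mul, ← hm, h]
    rcases mul_eq_zero.1 (hzt _ hmn) with h0 | h0
    · exact absurd (by rw [hm, h0, zpow_zero]) hx
    · exact h0
variable {ι : Type u}


/-- additive exponent sum -/
noncomputable def E (i : ι) (x : FreeGroup ι) : ℤ := Multiplicative.toAdd (expSum i x)

lemma E_zpow (i : ι) (x : FreeGroup ι) (n : ℤ) : E i (x ^ n) = n * E i x := by
  unfold E
  rw [map_zpow]
  simp [toAdd_zpow]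

lemma E_of_self (i : ι) : E i (FreeGroup.of i) = 1 := by
  unfold E; rw [expSum_of_self]; rfl

lemma E_of_ne {i j : ι} (h : j ≠ i) : E i (FreeGroup.of j) = 0 := by
  unfold E; rw [expSum_of_ne h]; rfl

lemma conj_commute_iff {G : Type v} [Group G] (u a b : G) :
    Commute (u * a * u⁻¹) (u * b * u⁻¹) ↔ Commute a b := by
  constructor
  · intro h
    have := h.map (MulAut.conj u⁻¹).toMonoidHom
    simpa [mul_assoc] using this
  · intro h
    have := h.map (MulAut.conj u).toMonoidHom
    simpa [mul_assoc] using this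

/-- Centralizers in free groups are abelian (commutation is transitive). -/
lemma centralizer_abelian {c : FreeGroup ι} (hc : c ≠ 1) :
    ∀ a b : FreeGroup ι, Commute a c → Commute b c → Commute a b := by
  intro a b hac hbc
  set W : Subgroup (FreeGroup ι) := Subgroup.closure {a, b, c} with hW
  have haW : a ∈ W := Subgroup.subset_closure (by simp)
  have hbW : b ∈ W := Subgroup.subset_closure (by simp)
  have hcW : c ∈ W := Subgroup.subset_closure (by simp)
  have hcComm : ∀ x ∈ W, Commute c x := by
    intro x hx
    induction hx using Subgroup.closure_induction with
    | mem x hx =>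
      rcases hx with rfl | rfl | hx
      · exact hac.symm
      · exact hbc.symm
      · rw [Set.mem_singleton_iff] at hx; subst hx; exact Commute.refl _
    | one => exact Commute.one_right _
    | mul x y hx hy h1 h2 => exact h1.mul_right h2
    | inv x hx h1 => exact h1.inv_right
  let S := IsFreeGroup.Generators W
  let e : FreeGroup S ≃* W := IsFreeGroup.mulEquiv W
  set ζ : FreeGroup S := e.symm ⟨c, hcW⟩ with hζdef
  have heζ : (e ζ : FreeGroup ι) = c := by rw [hζdef]; simp
  have hζ1 : ζ ≠ 1 := by
    intro h
    apply hc
    rw [← heζ, h, map_one]; rfl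
  have hζcomm : ∀ u : FreeGroup S, Commute ζ u := by
    intro u
    have h1 : Commute c ((e u : W) : FreeGroup ι) := hcComm _ (e u).2
    have : e (ζ * u) = e (u * ζ) := by
      rw [map_mul, map_mul]
      apply Subtype.ext
      push_cast [heζ]
      exact h1
    exact e.injective this
  -- S is a subsingleton
  have hS : ∀ s₁ s₂ : S, s₁ = s₂ := by
    by_contra hne
    push_neg at hne
    obtain ⟨s₁, s₂, h12⟩ := hne
    have key : ∀ s : S, ∃ N : ℤ, ζ = FreeGroup.of s ^ N := by
      intro s
      obtain ⟨z, ⟨k, hk⟩, ⟨m, hm⟩⟩ := commute_common_root (hζcomm (FreeGroup.of s))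
      have hE : (1 : ℤ) = m * E s z := by
        have := congrArg (E s) hm
        rwa [E_of_self, E_zpow] at this
      have hm1 : m = 1 ∨ m = -1 := by
        exact Int.isUnit_iff.mp (IsUnit.of_mul_eq_one (a := m) (E s z) hE.symm) |>.imp id id
      have hzof : ∃ ε : ℤ, z = FreeGroup.of s ^ ε := by
        rcases hm1 with rfl | rfl
        · exact ⟨1, by rw [zpow_one] at hm ⊢; exact hm.symm⟩
        · refine ⟨-1, ?_⟩
          rw [hm]; group
      obtain ⟨ε, hε⟩ := hzof
      exact ⟨ε * k, by rw [hk, hε, ← zpow_mul, mul_comm]⟩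
    obtain ⟨N₁, hN₁⟩ := key s₁
    obtain ⟨N₂, hN₂⟩ := key s₂
    have e1 : E s₁ ζ = N₁ := by rw [hN₁, E_zpow, E_of_self, mul_one]
    have e2 : E s₁ ζ = 0 := by rw [hN₂, E_zpow, E_of_ne (Ne.symm h12), mul_zero]
    have : N₁ = 0 := by rw [← e1, e2]
    exact hζ1 (by rw [hN₁, this, zpow_zero])
  -- hence W is abelian
  have hWcomm : ∀ u v : FreeGroup S, Commute u v := by
    rcases isEmpty_or_nonempty S with hE | ⟨⟨i₀⟩⟩
    · intro u v; rw [freeGroup_eq_one_of_isEmpty u]; exact Commute.one_left _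
    · intro u v
      obtain ⟨n, hn⟩ := exists_zpow_of_subsingleton hS i₀ u
      obtain ⟨m, hm⟩ := exists_zpow_of_subsingleton hS i₀ v
      rw [hn, hm]
      exact (Commute.refl _).zpow_zpow n m
  have := hWcomm (e.symm ⟨a, haW⟩) (e.symm ⟨b, hbW⟩)
  have h2 : Commute (⟨a, haW⟩ : W) ⟨b, hbW⟩ := by
    have := this.map e.toMonoidHom
    simpa using this
  have h3 := congrArg (fun (x : W) => (x : FreeGroup ι)) h2
  push_cast at h3
  exact h3

/-- If `c` commutes with its conjugate by a generator, it commutes with the generator. -/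
lemma commute_of_commute_conj {c : FreeGroup ι} (hc : c ≠ 1) (i : ι)
    (h : Commute c (FreeGroup.of i * c * (FreeGroup.of i)⁻¹)) :
    Commute c (FreeGroup.of i) := by
  set g : FreeGroup ι := FreeGroup.of i with hg
  set d : FreeGroup ι := g * c * g⁻¹ with hd
  have hd1 : d ≠ 1 := by
    intro h1
    apply hc
    have : c = g⁻¹ * d * g := by rw [hd]; group
    rw [this, h1]; group
  set A : Subgroup (FreeGroup ι) := Subgroup.centralizer {c} with hA
  have memA : ∀ t, t ∈ A ↔ Commute c t := by
    intro t
    rw [hA, Subgroup.mem_centralizer_iff]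
    constructor
    · intro h1; exact (h1 c rfl)
    · intro h1 y hy; rw [Set.mem_singleton_iff] at hy; subst hy; exact h1
  have hAcomm : ∀ x ∈ A, ∀ y ∈ A, Commute x y := by
    intro x hx y hy
    exact centralizer_abelian hc x y ((memA x).1 hx).symm ((memA y).1 hy).symm
  have hcA : c ∈ A := (memA c).2 (Commute.refl c)
  rcases cyclic_of_comm_subgroup A hAcomm with h1 | ⟨z, hzA, hzt, hz⟩
  · exact absurd (h1 c hcA) hc
  have hz1 : z ≠ 1 := by
    intro h1
    obtain ⟨n, hn⟩ := hz c hcA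
    exact hc (by rw [hn, h1, one_zpow])
  obtain ⟨nc, hnc⟩ := hz c hcA
  -- conjugation by g preserves A
  have step1 : ∀ t, Commute c t ↔ Commute d t := by
    intro t
    constructor
    · intro h1
      exact (centralizer_abelian hc t d h1.symm h.symm).symm
    · intro h1
      exact (centralizer_abelian hd1 t c h1.symm h).symm
  have hconjA : ∀ t, t ∈ A ↔ g⁻¹ * t * g ∈ A := by
    intro t
    rw [memA, memA, step1]
    have h2 := conj_commute_iff g⁻¹ d t
    rw [inv_inv] at h2
    have hcd : g⁻¹ * d * g = c := by rw [hd]; group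
    rw [hcd] at h2
    exact h2.symm
  obtain ⟨k, hk⟩ := hz _ ((hconjA z).1 hzA)
  obtain ⟨l, hl⟩ := hz (g * z * g⁻¹) ((hconjA (g * z * g⁻¹)).2 (by
    have : g⁻¹ * (g * z * g⁻¹) * g = z := by group
    rw [this]; exact hzA))
  have conjpow : ∀ (u v : FreeGroup ι) (n : ℤ), (u * v * u⁻¹) ^ n = u * v ^ n * u⁻¹ := by
    intro u v n
    have := map_zpow (MulAut.conj u).toMonoidHom v n
    simpa [MulAut.conj_apply] using this
  have hzlk : z ^ (l * k) = z := by
    rw [zpow_mul, ← hl, conjpow, ← hk]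
    group
  have hlk1 : l * k = 1 := by
    have h0 : z ^ (l * k - 1) = 1 := by
      rw [zpow_sub, hzlk, zpow_one, mul_inv_cancel]
    have := tf hz1 h0
    omega
  have hk1 : k = 1 ∨ k = -1 :=
    Int.isUnit_iff.mp (IsUnit.of_mul_eq_one (a := k) l (by rw [mul_comm]; exact hlk1)) |>.imp id id
  rcases hk1 with rfl | rfl
  · -- g⁻¹ z g = z, so z and g commute
    rw [zpow_one] at hk
    have hzg : Commute z g := by
      rw [Commute, SemiconjBy]
      calc z * g = g * (g⁻¹ * z * g) := by group
        _ = g * z := by rw [hk]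
    rw [hnc]
    exact (hzg.zpow_left nc).symm.symm
  · -- g⁻¹ z g = z⁻¹ leads to a contradiction
    exfalso
    rw [zpow_neg_one] at hk
    have hzgg : Commute z (g * g) := by
      rw [Commute, SemiconjBy]
      have h2 : g⁻¹ * (g⁻¹ * z * g) * g = z := by
        calc g⁻¹ * (g⁻¹ * z * g) * g = g⁻¹ * z⁻¹ * g := by rw [hk]
          _ = (g⁻¹ * z * g)⁻¹ := by group
          _ = (z⁻¹)⁻¹ := by rw [hk]
          _ = z := inv_inv z
      calc z * (g * g) = (g * g) * (g⁻¹ * (g⁻¹ * z * g) * g) := by group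
        _ = (g * g) * z := by rw [h2]
    have hggA : g * g ∈ A := by
      rw [memA, hnc]
      exact ((hzgg.zpow_left nc).symm).symm
    obtain ⟨p, hp⟩ := hz _ hggA
    have hzp : z ^ p = z ^ (-p) := by
      have e1 : g⁻¹ * (g * g) * g = g * g := by group
      have e2 : g⁻¹ * z ^ p * g = z ^ (-p) := by
        calc g⁻¹ * z ^ p * g = (g⁻¹ * z * (g⁻¹)⁻¹) ^ p := by rw [conjpow, inv_inv]
          _ = (z⁻¹) ^ p := by rw [inv_inv, hk]
          _ = z ^ (-p) := by group
      calc z ^ p = g * g := hp.symm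
        _ = g⁻¹ * (g * g) * g := e1.symm
        _ = g⁻¹ * z ^ p * g := by rw [← hp]
        _ = z ^ (-p) := e2
    have h2p : z ^ (2 * p) = 1 := by
      rw [two_mul, zpow_add]
      nth_rewrite 1 [hzp]
      group
    have : 2 * p = 0 := tf hz1 h2p
    have hp0 : p = 0 := by omega
    have hgg1 : g * g = 1 := by rw [hp, hp0, zpow_zero]
    have : (FreeGroup.of i : FreeGroup ι) ^ (2 : ℤ) = 1 := by
      rw [show (2:ℤ) = 1 + 1 by norm_num, zpow_add, zpow_one, ← hg]
      exact hgg1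
    have := of_pow_eq_one this
    omega

/-- Part A: every open neighborhood of 1 contains a non-commuting pair. -/
theorem partA [Nontrivial ι] [TopologicalSpace (FreeGroup ι)] [IsTopologicalGroup (FreeGroup ι)]
    (hnd : ¬ DiscreteTopology (FreeGroup ι))
    (U : Set (FreeGroup ι)) (hU : IsOpen U) (h1 : (1 : FreeGroup ι) ∈ U) :
    ∃ a ∈ U, ∃ b ∈ U, a * b ≠ b * a := by
  by_contra hcon
  push_neg at hcon
  obtain ⟨i, j, hij⟩ := exists_pair_ne ι
  set x : FreeGroup ι := FreeGroup.of i with hx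
  set y : FreeGroup ι := FreeGroup.of j with hy
  have cx : Continuous fun t : FreeGroup ι => x * t * x⁻¹ := by
    exact (continuous_const.mul continuous_id).mul continuous_const
  have cy : Continuous fun t : FreeGroup ι => y * t * y⁻¹ := by
    exact (continuous_const.mul continuous_id).mul continuous_const
  set W : Set (FreeGroup ι) :=
    U ∩ ((fun t => x * t * x⁻¹) ⁻¹' U) ∩ ((fun t => y * t * y⁻¹) ⁻¹' U) with hWdef
  have hWopen : IsOpen W := ((hU.inter (hU.preimage cx)).inter (hU.preimage cy))
  have hW1 : (1 : FreeGroup ι) ∈ W := by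
    refine ⟨⟨h1, ?_⟩, ?_⟩ <;> simp [Set.mem_preimage, h1]
  obtain ⟨w, hwW, hw1⟩ : ∃ w ∈ W, w ≠ 1 := by
    by_contra hcon2
    push_neg at hcon2
    have : W = {1} := Set.eq_singleton_iff_unique_mem.2 ⟨hW1, hcon2⟩
    rw [this] at hWopen
    exact hnd (discreteTopology_of_isOpen_singleton_one hWopen)
  obtain ⟨⟨hwU, hwx⟩, hwy⟩ := hwW
  have hcomm1 : Commute w (x * w * x⁻¹) := hcon w hwU _ hwx
  have hcomm2 : Commute w (y * w * y⁻¹) := hcon w hwU _ hwy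
  have hwx2 : Commute w x := commute_of_commute_conj hw1 i hcomm1
  have hwy2 : Commute w y := commute_of_commute_conj hw1 j hcomm2
  have : Commute x y := centralizer_abelian hw1 x y hwx2.symm hwy2.symm
  exact hij (eq_of_commute_of i j this)
variable {ι : Type u}

/-- no cancelling adjacent pair -/
def NoCancel (M : List (ι × Bool)) : Prop :=
  ∀ (s : ℕ) (x : ι) (b : Bool), M[s]? = some (x, b) → M[s + 1]? = some (x, !b) → False

open Classical in
/-- the partial shift bijection associated to the letter `i` -/
noncomputable def stepEquiv (M : List (ι × Bool)) (hred : NoCancel M) (i : ι) :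
    {m : Fin (M.length + 1) //
        M[(m : ℕ)]? = some (i, true) ∨ ∃ t, (m : ℕ) = t + 1 ∧ M[t]? = some (i, false)} ≃
    {m : Fin (M.length + 1) //
        (∃ t, (m : ℕ) = t + 1 ∧ M[t]? = some (i, true)) ∨ M[(m : ℕ)]? = some (i, false)} where
  toFun x := if h : M[(x.1 : ℕ)]? = some (i, true)
    then ⟨⟨(x.1 : ℕ) + 1, by
        have := (List.getElem?_eq_some_iff.mp h).1; omega⟩, Or.inl ⟨x.1, rfl, h⟩⟩
    else ⟨⟨(x.1 : ℕ) - 1, by have := x.1.2; omega⟩, by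
      rcases x.2 with h1 | ⟨t, ht, hM⟩
      · exact absurd h1 h
      · right; simpa [ht] using hM⟩
  invFun x := if h : 1 ≤ (x.1 : ℕ) ∧ M[(x.1 : ℕ) - 1]? = some (i, true)
    then ⟨⟨(x.1 : ℕ) - 1, by have := x.1.2; omega⟩, Or.inl h.2⟩
    else ⟨⟨(x.1 : ℕ) + 1, by
        rcases x.2 with ⟨t, ht, hMt⟩ | h2
        · exact absurd ⟨by omega, by rw [ht]; simpa using hMt⟩ h
        · have := (List.getElem?_eq_some_iff.mp h2).1; omega⟩, by
      rcases x.2 with ⟨t, ht, hMt⟩ | h2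
      · exact absurd ⟨by omega, by rw [ht]; simpa using hMt⟩ h
      · exact Or.inr ⟨x.1, rfl, h2⟩⟩
  left_inv := by
    rintro ⟨⟨m, hmlt⟩, hm⟩
    by_cases h : M[m]? = some (i, true)
    · simp only [dif_pos h]
      have hcond : 1 ≤ m + 1 ∧ M[m + 1 - 1]? = some (i, true) := ⟨by omega, by simpa using h⟩
      simp only [dif_pos hcond]
      exact Subtype.ext (Fin.ext (by simp))
    · simp only [dif_neg h]
      have hm2 : ∃ t, m = t + 1 ∧ M[t]? = some (i, false) := by
        rcases hm with h1 | h2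
        · exact absurd h1 h
        · exact h2
      obtain ⟨t, rfl, hMt⟩ := hm2
      have hcond : ¬ (1 ≤ t + 1 - 1 ∧ M[t + 1 - 1 - 1]? = some (i, true)) := by
        rintro ⟨h1, h2⟩
        simp only [Nat.add_sub_cancel] at h1 h2
        exact hred (t - 1) i true h2 (by simpa [Nat.sub_add_cancel h1] using hMt)
      simp only [dif_neg hcond]
      exact Subtype.ext (Fin.ext (by simp))
  right_inv := by
    rintro ⟨⟨m, hmlt⟩, hm⟩
    by_cases h : 1 ≤ m ∧ M[m - 1]? = some (i, true)
    · simp only [dif_pos h]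
      have hcond : M[(m - 1 : ℕ)]? = some (i, true) := h.2
      simp only [dif_pos hcond]
      exact Subtype.ext (Fin.ext (by simp; omega))
    · simp only [dif_neg h]
      have hm2 : M[m]? = some (i, false) := by
        rcases hm with ⟨t, ht, hMt⟩ | h2
        · have ht' : m = t + 1 := ht
          exact absurd ⟨by omega, by rw [ht']; simpa using hMt⟩ h
        · exact h2
      have hcond : ¬ M[m + 1]? = some (i, true) := fun hc => hred m i false hm2 (by simpa using hc)
      simp only [dif_neg hcond]
      exact Subtype.ext (Fin.ext (by simp))

open Classical in
/-- the permutation associated to the letter `i` -/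
noncomputable def permAt (M : List (ι × Bool)) (hred : NoCancel M) (i : ι) :
    Equiv.Perm (Fin (M.length + 1)) :=
  (stepEquiv M hred i).extendSubtype

lemma permAt_true {M : List (ι × Bool)} {hred : NoCancel M} {i : ι} {s : ℕ}
    (h : M[s]? = some (i, true)) :
    permAt M hred i ⟨s, by have := (List.getElem?_eq_some_iff.mp h).1; omega⟩ =
      ⟨s + 1, by have := (List.getElem?_eq_some_iff.mp h).1; omega⟩ := by
  classical
  unfold permAt
  refine (Equiv.extendSubtype_apply_of_mem (stepEquiv M hred i) _ (Or.inl h)).trans ?_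
  show ((stepEquiv M hred i) ⟨_, _⟩ : _).1 = _
  unfold stepEquiv
  simp only [Equiv.coe_fn_mk, dif_pos h]

lemma permAt_false {M : List (ι × Bool)} {hred : NoCancel M} {i : ι} {s : ℕ}
    (h : M[s]? = some (i, false)) :
    permAt M hred i ⟨s + 1, by have := (List.getElem?_eq_some_iff.mp h).1; omega⟩ =
      ⟨s, by have := (List.getElem?_eq_some_iff.mp h).1; omega⟩ := by
  classical
  have hmem : (M[(s+1 : ℕ)]? = some (i, true) ∨ ∃ t, (s+1 : ℕ) = t + 1 ∧ M[t]? = some (i, false)) :=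
    Or.inr ⟨s, rfl, h⟩
  unfold permAt
  refine (Equiv.extendSubtype_apply_of_mem (stepEquiv M hred i) _ hmem).trans ?_
  show ((stepEquiv M hred i) ⟨_, _⟩ : _).1 = _
  unfold stepEquiv
  have hcond : ¬ M[s + 1]? = some (i, true) := fun hc => hred s i false h (by simpa using hc)
  simp only [Equiv.coe_fn_mk, dif_neg hcond]
  exact Fin.ext (by simp)

/-- the homomorphism to a finite permutation group -/
noncomputable def rfHom (M : List (ι × Bool)) (hred : NoCancel M) :
    FreeGroup ι →* Equiv.Perm (Fin (M.length + 1)) :=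
  FreeGroup.lift (fun i => permAt M hred i)

lemma mk_single_false (x : ι) :
    (FreeGroup.of x : FreeGroup ι)⁻¹ = FreeGroup.mk [(x, false)] := by
  rw [show (FreeGroup.of x : FreeGroup ι) = FreeGroup.mk [(x, true)] from rfl, FreeGroup.inv_mk]
  rfl

lemma rfHom_eval (M : List (ι × Bool)) (hred : NoCancel M) :
    ∀ s, ∀ hs : s ≤ M.length,
      rfHom M hred (FreeGroup.mk ((M.take s).reverse)) ⟨0, by omega⟩ = ⟨s, by omega⟩ := by
  intro s
  induction s with
  | zero =>
    intro _
    show rfHom M hred (FreeGroup.mk []) _ = _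
    rw [← FreeGroup.one_eq_mk, map_one]
    rfl
  | succ s ih =>
    intro hs
    have hsn : s < M.length := by omega
    have hsome : M[s]? = some (M[s]'hsn) := List.getElem?_eq_getElem hsn
    have htake : M.take (s + 1) = M.take s ++ [M[s]'hsn] := by
      rw [List.take_succ, hsome]
      rfl
    rw [htake, List.reverse_append]
    have hmk : FreeGroup.mk ([M[s]'hsn].reverse ++ (M.take s).reverse)
        = FreeGroup.mk [M[s]'hsn] * FreeGroup.mk ((M.take s).reverse) := by
      rw [FreeGroup.mul_mk]
      rfl
    rw [show ([M[s]'hsn].reverse ++ (M.take s).reverse) = [M[s]'hsn] ++ (M.take s).reverse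
      from rfl, ← FreeGroup.mul_mk, map_mul, Equiv.Perm.mul_apply, ih (by omega)]
    rcases hl : M[s]'hsn with ⟨x, b⟩
    rw [hl] at hsome
    cases b
    · rw [← mk_single_false, map_inv]
      have h3 : (rfHom M hred) (FreeGroup.of x) = permAt M hred x := FreeGroup.lift_apply_of
      rw [h3]
      have h2 := permAt_false (hred := hred) hsome
      rw [← h2, Equiv.Perm.inv_def, Equiv.symm_apply_apply]
    · rw [show FreeGroup.mk [(x, true)] = FreeGroup.of x from rfl]
      show (FreeGroup.lift (fun i => permAt M hred i)) (FreeGroup.of x) _ = _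
      rw [FreeGroup.lift_apply_of]
      exact permAt_true hsome

/-- Free groups are residually finite. -/
theorem residually_finite (w : FreeGroup ι) (hw : w ≠ 1) :
    ∃ (m : ℕ) (φ : FreeGroup ι →* Equiv.Perm (Fin m)), φ w ≠ 1 := by
  classical
  set L : List (ι × Bool) := FreeGroup.toWord w with hLdef
  have hLred : FreeGroup.reduce L = L := FreeGroup.reduce_toWord w
  have hLnil : L ≠ [] := fun h => hw (FreeGroup.toWord_eq_nil_iff.mp h)
  have hLlen : 1 ≤ L.length := List.length_pos_iff.mpr hLnil
  have hLnc : ∀ (j : ℕ) (x : ι) (c : Bool), L[j]? = some (x, c) → L[j+1]? = some (x, !c) → False := by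
    intro j x c h1 h2
    obtain ⟨hj1, hg1⟩ := List.getElem?_eq_some_iff.mp h1
    obtain ⟨hj2, hg2⟩ := List.getElem?_eq_some_iff.mp h2
    have hsplit : L = L.take j ++ (x, c) :: (x, !c) :: L.drop (j+2) := by
      conv_lhs => rw [← List.take_append_drop j L]
      congr 1
      rw [List.drop_eq_getElem_cons (by omega), hg1]
      congr 1
      rw [List.drop_eq_getElem_cons (by omega), hg2]
    exact FreeGroup.reduce.not (hLred.trans hsplit)
  have hred : NoCancel L.reverse := by
    intro s x b h1 h2
    obtain ⟨hs2, _⟩ := List.getElem?_eq_some_iff.mp h2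
    rw [List.length_reverse] at hs2
    rw [List.getElem?_reverse (by omega)] at h1
    rw [List.getElem?_reverse (by omega)] at h2
    have hje : L.length - 1 - s = (L.length - 1 - (s + 1)) + 1 := by omega
    rw [hje] at h1
    exact hLnc _ x (!b) h2 (by rw [Bool.not_not]; exact h1)
  refine ⟨L.reverse.length + 1, rfHom L.reverse hred, ?_⟩
  have hev := rfHom_eval L.reverse hred L.reverse.length le_rfl
  rw [List.take_length, List.reverse_reverse] at hev
  have hmkL : FreeGroup.mk L = w := FreeGroup.mk_toWord
  rw [hmkL] at hev
  intro h1
  rw [h1] at hev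
  have h0 : (0 : ℕ) = L.reverse.length := by
    have := congrArg Fin.val hev
    simpa using this
  rw [List.length_reverse] at h0
  omega
variable {ι : Type u}


/-- Part B: a non-commuting pair in a free group generates a free subgroup of rank 2. -/
theorem partB {a b : FreeGroup ι} (h : a * b ≠ b * a) :
    Function.Injective (FreeGroup.lift ![a, b]) := by
  classical
  by_contra hinj
  rw [injective_iff_map_eq_one (FreeGroup.lift ![a, b])] at hinj
  push_neg at hinj
  obtain ⟨k, hk1, hkne⟩ := hinj
  set H : Subgroup (FreeGroup ι) := (FreeGroup.lift ![a, b]).range with hHdef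
  have haH : a ∈ H := ⟨FreeGroup.of 0, by rw [FreeGroup.lift_apply_of]; rfl⟩
  have hbH : b ∈ H := ⟨FreeGroup.of 1, by rw [FreeGroup.lift_apply_of]; rfl⟩
  set π : FreeGroup (Fin 2) →* H := (FreeGroup.lift ![a, b]).rangeRestrict with hπdef
  have hπsurj : Function.Surjective π := (FreeGroup.lift ![a, b]).rangeRestrict_surjective
  have hπk : π k = 1 := by
    apply Subtype.val_injective
    rw [MonoidHom.coe_rangeRestrict, OneMemClass.coe_one]
    exact hk1
  set S := IsFreeGroup.Generators H with hSdef
  set e : FreeGroup S ≃* H := IsFreeGroup.mulEquiv H with hedef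
  set f : FreeGroup (Fin 2) →* FreeGroup S := e.symm.toMonoidHom.comp π with hfdef
  have hfsurj : Function.Surjective f := fun y => by
    obtain ⟨x, hx⟩ := hπsurj (e y)
    exact ⟨x, by simp [hfdef, hx]⟩
  have hfk : f k = 1 := by simp [hfdef, hπk]
  by_cases hS1 : ∀ s t : S, s = t
  · -- H is abelian, contradiction with a * b ≠ b * a
    have hcomm : ∀ u v : FreeGroup S, Commute u v := by
      rcases isEmpty_or_nonempty S with hE | ⟨⟨i₀⟩⟩
      · intro u v; rw [freeGroup_eq_one_of_isEmpty u]; exact Commute.one_left _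
      · intro u v
        obtain ⟨n, hn⟩ := exists_zpow_of_subsingleton hS1 i₀ u
        obtain ⟨m, hm⟩ := exists_zpow_of_subsingleton hS1 i₀ v
        rw [hn, hm]
        exact (Commute.refl _).zpow_zpow n m
    have h2 : Commute (⟨a, haH⟩ : H) ⟨b, hbH⟩ := by
      have := (hcomm (e.symm ⟨a, haH⟩) (e.symm ⟨b, hbH⟩)).map e.toMonoidHom
      simpa using this
    have h3 := congrArg (fun (x : H) => (x : FreeGroup ι)) h2
    push_cast at h3
    exact h h3
  push_neg at hS1
  obtain ⟨s₁, s₂, h12⟩ := hS1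
  by_cases hS3 : ∃ s₃ : S, s₃ ≠ s₁ ∧ s₃ ≠ s₂
  · -- at least three generators: cardinality contradiction
    obtain ⟨s₃, h31, h32⟩ := hS3
    set K := Equiv.Perm (Fin 3) with hKdef
    have Φinj : Function.Injective (fun v : Fin 3 → K =>
        (FreeGroup.lift (fun s : S =>
          if s = s₁ then v 0 else if s = s₂ then v 1 else if s = s₃ then v 2 else 1)).comp f) := by
      intro v v' hvv
      rw [MonoidHom.cancel_right hfsurj] at hvv
      funext j
      fin_cases j
      · have := congrArg (fun φ : FreeGroup S →* K => φ (FreeGroup.of s₁)) hvv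
        simpa [FreeGroup.lift_apply_of] using this
      · have := congrArg (fun φ : FreeGroup S →* K => φ (FreeGroup.of s₂)) hvv
        simpa [FreeGroup.lift_apply_of, Ne.symm h12] using this
      · have := congrArg (fun φ : FreeGroup S →* K => φ (FreeGroup.of s₃)) hvv
        simpa [FreeGroup.lift_apply_of, h31, h32] using this
    have Ψinj : Function.Injective (fun φ : FreeGroup (Fin 2) →* K => (fun j => φ (FreeGroup.of j))) := by
      intro φ φ' hφ
      apply FreeGroup.ext_hom
      intro j
      exact congrFun hφ j
    have hemb := Fintype.card_le_of_embedding
      ((⟨_, Φinj⟩ : (Fin 3 → K) ↪ (FreeGroup (Fin 2) →* K)).trans ⟨_, Ψinj⟩)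
    rw [Fintype.card_fun, Fintype.card_fun, Fintype.card_perm] at hemb
    norm_num [Nat.factorial] at hemb
  · -- exactly two generators: Malcev / Hopfian argument
    push_neg at hS3
    have hS2 : ∀ s : S, s = s₁ ∨ s = s₂ := by
      intro s
      by_cases h1 : s = s₁
      · exact Or.inl h1
      · exact Or.inr (hS3 s h1)
    obtain ⟨m, χ, hχ⟩ := residually_finite k hkne
    set K := Equiv.Perm (Fin m) with hKdef
    -- the generator type is equivalent to `Fin 2`
    have eS : S ≃ Fin 2 :=
      { toFun := fun s => if s = s₁ then 0 else 1
        invFun := fun j => if j = 0 then s₁ else s₂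
        left_inv := by
          intro s
          rcases hS2 s with rfl | rfl
          · simp
          · simp [Ne.symm h12]
        right_inv := by
          intro j
          fin_cases j
          · simp
          · simp [Ne.symm h12] }
    have E1 : (Fin 2 → K) ≃ (FreeGroup S →* K) :=
      (Equiv.arrowCongr eS (Equiv.refl K)).symm.trans FreeGroup.lift
    have E2 : (Fin 2 → K) ≃ (FreeGroup (Fin 2) →* K) := FreeGroup.lift
    haveI : Fintype (FreeGroup S →* K) := Fintype.ofEquiv _ E1
    haveI : Fintype (FreeGroup (Fin 2) →* K) := Fintype.ofEquiv _ E2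
    have hcard : Fintype.card (FreeGroup S →* K) = Fintype.card (FreeGroup (Fin 2) →* K) := by
      rw [← Fintype.card_congr E1, ← Fintype.card_congr E2]
    have Θinj : Function.Injective (fun ψ : FreeGroup S →* K => ψ.comp f) := by
      intro ψ ψ' hψ
      rwa [MonoidHom.cancel_right hfsurj] at hψ
    have Θbij := (Fintype.bijective_iff_injective_and_card (fun ψ : FreeGroup S →* K => ψ.comp f)).mpr
      ⟨Θinj, hcard⟩
    obtain ⟨ψ, hψ⟩ := Θbij.2 χ
    apply hχ
    have hψ' : ψ.comp f = χ := hψ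
    rw [← hψ']
    show ψ (f k) = 1
    rw [hfk, map_one]
end FG

/-- If `ι` has at least two elements and `F = FreeGroup ι` carries a non-discrete group
topology, then every open neighborhood `U` of the identity is not commutative, and
hence `U` contains two elements freely generating a free subgroup of rank 2. -/
theorem stmt_6 {ι : Type u} [Nontrivial ι]
    [TopologicalSpace (FreeGroup ι)] [IsTopologicalGroup (FreeGroup ι)]
    (hnd : ¬ DiscreteTopology (FreeGroup ι))
    (U : Set (FreeGroup ι)) (hU : IsOpen U) (h1 : (1 : FreeGroup ι) ∈ U) :
    (∃ a ∈ U, ∃ b ∈ U, a * b ≠ b * a) ∧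
    ∃ a ∈ U, ∃ b ∈ U, Function.Injective (FreeGroup.lift ![a, b]) := by
  obtain ⟨a, ha, b, hb, hab⟩ := FG.partA hnd U hU h1
  exact ⟨⟨a, ha, b, hb, hab⟩, ⟨a, ha, b, hb, FG.partB hab⟩⟩
end

section
/- Let F be a free group of rank κ > 0 equipped with the discrete topology, and let H be a nontrivial group in which every element has finite order, equipped with the indiscrete (trivial) topology. Then in the topological group G = F × H (with the product topology), the subgroup F × {1} is dense and is freely generated, but G is not almost κ-free. -/
universe u v

/-- In a free group, powers of a generator are nontrivial. -/
lemma free_of_pow_ne_one {ι : Type u} (i : ι) {n : ℕ} (hn : 0 < n) :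
    (FreeGroup.of i : FreeGroup ι) ^ n ≠ 1 := by
  intro h
  have := congrArg (FreeGroup.lift fun _ : ι => Multiplicative.ofAdd (1 : ℤ)) h
  simp only [map_pow, map_one, FreeGroup.lift_apply_of] at this
  have : (n : ℤ) • (1 : ℤ) = 0 := by
    have := congrArg Multiplicative.toAdd (this.trans (rfl : (1 : Multiplicative ℤ) = 1))
    simpa [toAdd_pow] using this
  simp at this
  omega

lemma lift_eq_inl {ι : Type u} {H : Type v} [Group H] :
    (FreeGroup.lift fun i => ((FreeGroup.of i, 1) : FreeGroup ι × H)) =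
      MonoidHom.inl (FreeGroup ι) H := by
  apply FreeGroup.ext_hom
  intro i
  simp

/-- Let `F = FreeGroup ι` be a free group of rank `κ > 0` with the discrete topology,
and `H` a nontrivial group all of whose elements have finite order, with the indiscrete
topology. Then in `G = F × H` (with the product topology) the subgroup `F × {1}` (the
range of the canonical embedding of `F`) is dense and freely generated, but `G` is not
almost `κ`-free. -/
theorem stmt_12 (κ : Cardinal.{u}) (hκ : 0 < κ) (ι : Type u) (hι : Cardinal.mk ι = κ)
    {H : Type v} [Group H] [Nontrivial H] (hfin : ∀ h : H, IsOfFinOrder h)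
    [tF : TopologicalSpace (FreeGroup ι)] (htF : tF = ⊥)
    [IsTopologicalGroup (FreeGroup ι)]
    [tH : TopologicalSpace H] (htH : tH = ⊤) [IsTopologicalGroup H] :
    Function.Injective
      (FreeGroup.lift fun i => ((FreeGroup.of i, 1) : FreeGroup ι × H)) ∧
    Dense ((FreeGroup.lift fun i => ((FreeGroup.of i, 1) : FreeGroup ι × H)).range :
      Set (FreeGroup ι × H)) ∧
    ¬ AlmostFree (FreeGroup ι × H) κ := by
  subst htF htH
  letI : TopologicalSpace (FreeGroup ι) := ⊥
  letI : TopologicalSpace H := ⊤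
  have hι0 : Nonempty ι := by
    rw [← Cardinal.mk_ne_zero_iff, hι]; exact hκ.ne'
  obtain ⟨i₀⟩ := hι0
  have hinj : Function.Injective
      (FreeGroup.lift fun i => ((FreeGroup.of i, 1) : FreeGroup ι × H)) := by
    rw [lift_eq_inl]
    intro x y h
    exact congrArg Prod.fst h
  refine ⟨hinj, ?_, ?_⟩
  · -- density of the range
    have hrange : ((FreeGroup.lift fun i =>
        ((FreeGroup.of i, 1) : FreeGroup ι × H)).range : Set (FreeGroup ι × H)) =
        (Set.univ : Set (FreeGroup ι)) ×ˢ ({1} : Set H) := by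
      rw [lift_eq_inl]
      ext ⟨x, h⟩
      simp [MonoidHom.mem_range, Prod.ext_iff, eq_comm]
    rw [hrange]
    apply Dense.prod dense_univ
    intro x
    rw [mem_closure_iff]
    intro U hU hxU
    rcases (TopologicalSpace.isOpen_top_iff U).mp hU with rfl | rfl
    · exact absurd hxU (Set.notMem_empty x)
    · exact ⟨1, Set.mem_inter trivial rfl⟩
  · -- not almost free
    intro hAF
    have hd := hAF ι hι
    -- the open set of tuples whose i₀-th component has trivial first coordinate
    set U : Set (ι → FreeGroup ι × H) :=
      (fun g => g i₀) ⁻¹' (({1} : Set (FreeGroup ι)) ×ˢ (Set.univ : Set H)) with hUdef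
    have hUopen : IsOpen U := by
      haveI : DiscreteTopology (FreeGroup ι) := ⟨rfl⟩
      apply (continuous_apply i₀).isOpen_preimage
      exact IsOpen.prod (isOpen_discrete _) isOpen_univ
    have hUne : U.Nonempty := ⟨fun _ => 1, by simp [hUdef]⟩
    obtain ⟨g, hgU, hgfree⟩ := hd.inter_open_nonempty U hUopen hUne
    -- g i₀ = (1, h) with h of finite order
    have h1 : (g i₀).1 = 1 := hgU.1
    obtain ⟨n, hn, hpow⟩ := isOfFinOrder_iff_pow_eq_one.mp (hfin (g i₀).2)
    have hpow' : (g i₀) ^ n = 1 := by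
      rw [Prod.pow_def, h1, hpow]; simp
    have : (FreeGroup.lift g) ((FreeGroup.of i₀) ^ n) = (FreeGroup.lift g) 1 := by
      simp [map_pow, hpow']
    exact free_of_pow_ne_one i₀ hn (hgfree this)
end

section
/- Let Ω be an infinite set. Then Sym(Ω), the group of all permutations of Ω, contains a free subgroup of rank 2^|Ω|; moreover this free subgroup can be taken to be dense in the function topology. That is, there is a type ι of cardinality 2^|Ω| and a map f : ι → Sym(Ω) such that the induced homomorphism FreeGroup ι → Sym(Ω) is injective and the image subgroup is dense. -/
universe u

/-- The function topology on `Equiv.Perm Ω`: the topology induced by the embedding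
`f ↦ (f, f⁻¹)` into `(Ω → Ω) × (Ω → Ω)`, where `Ω → Ω` carries the product topology
with `Ω` discrete. -/
def permFunctionTopology (Ω : Type u) : TopologicalSpace (Equiv.Perm Ω) :=
  letI : TopologicalSpace Ω := ⊥
  TopologicalSpace.induced
    (fun f : Equiv.Perm Ω => ((f : Ω → Ω), ((f⁻¹ : Equiv.Perm Ω) : Ω → Ω)))
    inferInstance

set_option linter.unusedSectionVars false
set_option maxHeartbeats 1000000

namespace DeBruijnAux

/-- Any finite partial injection extends to a finitely supported permutation. -/
theorem exists_perm_extend {α : Type*} (P : Finset (α × α))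
    (hP : ∀ p ∈ P, ∀ q ∈ P, p.1 = q.1 ↔ p.2 = q.2) :
    ∃ τ : Equiv.Perm α, (∀ p ∈ P, τ p.1 = p.2) ∧ {y | τ y ≠ y}.Finite := by
  classical
  induction P using Finset.induction_on with
  | empty => exact ⟨1, by simp, by simp⟩
  | @insert p P hpP ih =>
    obtain ⟨τ', h1, h2⟩ := ih (fun a ha b hb =>
      hP a (Finset.mem_insert_of_mem ha) b (Finset.mem_insert_of_mem hb))
    refine ⟨Equiv.swap (τ' p.1) p.2 * τ', ?_, ?_⟩
    · intro q hq
      rcases Finset.mem_insert.1 hq with rfl | hq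
      · simp [Equiv.Perm.mul_apply]
      · have hq2 : τ' q.1 = q.2 := h1 q hq
        have hqp : q ≠ p := fun h => hpP (h ▸ hq)
        have hne2 : q.2 ≠ p.2 := by
          intro h
          have h1' : q.1 = p.1 :=
            (hP q (Finset.mem_insert_of_mem hq) p (Finset.mem_insert_self p P)).2 h
          exact hqp (Prod.ext h1' h)
        have hne1 : q.2 ≠ τ' p.1 := by
          intro h
          have : q.1 = p.1 := τ'.injective (by rw [hq2, h])
          exact hne2 ((hP q (Finset.mem_insert_of_mem hq) p (Finset.mem_insert_self p P)).1 this)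
        simp only [Equiv.Perm.mul_apply, hq2]
        exact Equiv.swap_apply_of_ne_of_ne hne1 hne2
    · apply (h2.union (Set.Finite.insert (τ' p.1) (Set.finite_singleton p.2))).subset
      intro y hy
      by_cases h : τ' y = y
      · right
        simp only [Set.mem_setOf_eq, Equiv.Perm.mul_apply, h] at hy
        rcases eq_or_ne y (τ' p.1) with rfl | h1
        · exact Set.mem_insert _ _
        · rcases eq_or_ne y p.2 with rfl | h2
          · exact Set.mem_insert_of_mem _ rfl
          · exact absurd (Equiv.swap_apply_of_ne_of_ne h1 h2) hy
      · exact Or.inl h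

/-- A letterwise-injective map preserves reducedness of words. -/
theorem reduce_map_eq {α β : Type*} [DecidableEq α] [DecidableEq β] (g : α → β)
    (L : List (α × Bool)) (hred : FreeGroup.reduce L = L)
    (hinj : ∀ p ∈ L, ∀ q ∈ L, g p.1 = g q.1 → p.1 = q.1) :
    FreeGroup.reduce (L.map fun p => (g p.1, p.2)) = L.map fun p => (g p.1, p.2) := by
  induction L with
  | nil => simp
  | cons a t ih =>
    rcases hr : FreeGroup.reduce t with _ | ⟨hd, tl⟩
    · rw [FreeGroup.reduce.cons, hr] at hred
      simp only at hred
      have ht : t = [] := by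
        have h1 := congrArg List.length hred
        simp only [List.length_cons, List.length_nil] at h1
        exact List.eq_nil_of_length_eq_zero (by omega)
      subst ht
      simp [FreeGroup.reduce_singleton]
    · rw [FreeGroup.reduce.cons, hr] at hred
      simp only at hred
      by_cases hc : a.1 = hd.1 ∧ a.2 = !hd.2
      · rw [if_pos hc] at hred
        exfalso
        have hlen : (FreeGroup.reduce t).length ≤ t.length :=
          FreeGroup.Red.length_le FreeGroup.reduce.red
        rw [hr] at hlen
        have h1 := congrArg List.length hred
        simp only [List.length_cons] at h1 hlen
        omega
      · rw [if_neg hc] at hred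
        have ht : t = hd :: tl := by
          injection hred with _ h
          exact h.symm
        have hredt : FreeGroup.reduce t = t := by rw [hr, ht]
        have ihm := ih hredt (fun p hp q hq => hinj p (List.mem_cons_of_mem _ hp) q
          (List.mem_cons_of_mem _ hq))
        have hmt : (t.map fun p => (g p.1, p.2)) = (g hd.1, hd.2) :: (tl.map fun p => (g p.1, p.2)) := by
          rw [ht]; rfl
        rw [List.map_cons, FreeGroup.reduce.cons, ihm, hmt]
        simp only
        rw [if_neg (by
          rintro ⟨hg, hb⟩
          exact hc ⟨hinj a List.mem_cons_self hd
            (by rw [ht]; exact List.mem_cons_of_mem _ List.mem_cons_self) hg, hb⟩)]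

variable (Ω : Type u) [Infinite Ω]

/-- The section of a set `A ⊆ Ω` on a finite block index `F`. -/
noncomputable def sec (A : Set Ω) (F : Finset Ω) : Finset Ω :=
  @Finset.filter _ (fun a => a ∈ A) (Classical.decPred _) F

lemma mem_sec {A : Set Ω} {F : Finset Ω} {a : Ω} : a ∈ sec Ω A F ↔ a ∈ F ∧ a ∈ A := by
  simp [sec, Finset.mem_filter]

/-- The "pure" block-diagonal permutation attached to `A : Set Ω`. -/
noncomputable def pureP (A : Set Ω) :
    Equiv.Perm (Finset Ω × FreeGroup (Finset Ω)) where
  toFun y := (y.1, FreeGroup.of (sec Ω A y.1) * y.2)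
  invFun y := (y.1, (FreeGroup.of (sec Ω A y.1))⁻¹ * y.2)
  left_inv y := by simp
  right_inv y := by simp

lemma card_freeGroup : Cardinal.mk (FreeGroup (Finset Ω)) = Cardinal.mk Ω := by
  classical
  have hF : Cardinal.mk (Finset Ω) = Cardinal.mk Ω := Cardinal.mk_finset_of_infinite Ω
  have hB : Cardinal.mk (ULift.{u} Bool) ≤ Cardinal.mk Ω :=
    le_trans (Cardinal.mk_le_aleph0) (Cardinal.aleph0_le_mk Ω)
  apply le_antisymm
  · calc Cardinal.mk (FreeGroup (Finset Ω))
        ≤ Cardinal.mk (List (Finset Ω × Bool)) :=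
          Cardinal.mk_le_of_injective FreeGroup.toWord_injective
      _ = Cardinal.mk (Finset Ω × Bool) := Cardinal.mk_list_eq_mk _
      _ = Cardinal.mk (Finset Ω × (ULift.{u} Bool)) :=
          Cardinal.mk_congr (Equiv.prodCongr (Equiv.refl _) Equiv.ulift.symm)
      _ = Cardinal.mk (Finset Ω) * Cardinal.mk (ULift.{u} Bool) := by
          simp [Cardinal.mk_prod]
      _ ≤ Cardinal.mk Ω * Cardinal.mk Ω := mul_le_mul' hF.le hB
      _ = Cardinal.mk Ω := Cardinal.mul_eq_self (Cardinal.aleph0_le_mk Ω)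
  · rw [← hF]
    exact Cardinal.mk_le_of_injective FreeGroup.of_injective

lemma card_Y : Nonempty (Ω ≃ Finset Ω × FreeGroup (Finset Ω)) := by
  rw [← Cardinal.eq]
  rw [Cardinal.mk_prod]
  simp only [Cardinal.lift_id, Cardinal.mk_finset_of_infinite Ω, card_freeGroup Ω]
  rw [Cardinal.mul_eq_self (Cardinal.aleph0_le_mk Ω)]

/-- A fixed bijection of `Ω` with the block space. -/
noncomputable def eY : Ω ≃ Finset Ω × FreeGroup (Finset Ω) := (card_Y Ω).some

/-- `P` is the graph of a finite partial injection. -/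
def Good (P : Finset (Ω × Ω)) : Prop := ∀ p ∈ P, ∀ q ∈ P, p.1 = q.1 ↔ p.2 = q.2

lemma enc_aux : Nonempty (Finset (Ω × Ω) ↪ Set Ω) := by
  rw [← Cardinal.le_def]
  rw [Cardinal.mk_finset_of_infinite, Cardinal.mk_set]
  calc Cardinal.mk (Ω × Ω) = Cardinal.mk Ω := by
        rw [Cardinal.mk_prod]
        simp only [Cardinal.lift_id]
        exact Cardinal.mul_eq_self (Cardinal.aleph0_le_mk Ω)
    _ ≤ 2 ^ Cardinal.mk Ω := (Cardinal.cantor _).le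

/-- Code each finite partial injection by a subset of `Ω`. -/
noncomputable def enc : Finset (Ω × Ω) ↪ Set Ω := (enc_aux Ω).some

lemma tau_exists (A : Set Ω) :
    ∃ τ : Equiv.Perm (Finset Ω × FreeGroup (Finset Ω)),
      {y | τ y ≠ y}.Finite ∧
      ∀ P : Finset (Ω × Ω), Good Ω P → enc Ω P = A →
        ∀ p ∈ P, τ (pureP Ω A (eY Ω p.1)) = eY Ω p.2 := by
  classical
  by_cases h : ∃ P : Finset (Ω × Ω), Good Ω P ∧ enc Ω P = A
  · obtain ⟨P, hG, hA⟩ := h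
    have hinj : Function.Injective (fun a : Ω => pureP Ω A (eY Ω a)) :=
      (pureP Ω A).injective.comp (eY Ω).injective
    obtain ⟨τ, h1, h2⟩ := exists_perm_extend
      (P.image fun p => (pureP Ω A (eY Ω p.1), eY Ω p.2)) (by
        intro x hx y hy
        obtain ⟨p, hp, rfl⟩ := Finset.mem_image.1 hx
        obtain ⟨q, hq, rfl⟩ := Finset.mem_image.1 hy
        constructor
        · intro hxy
          exact congrArg (eY Ω) ((hG p hp q hq).1 (hinj hxy))
        · intro hxy
          exact congrArg (fun a => pureP Ω A (eY Ω a))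
            ((hG p hp q hq).2 ((eY Ω).injective hxy)))
    refine ⟨τ, h2, ?_⟩
    intro P' hG' hA' p hp
    have hPP : P' = P := (enc Ω).injective (hA'.trans hA.symm)
    subst hPP
    exact h1 _ (Finset.mem_image_of_mem _ hp)
  · exact ⟨1, by simp, fun P hG hA _ _ => absurd ⟨P, hG, hA⟩ h⟩

noncomputable def tauP (A : Set Ω) : Equiv.Perm (Finset Ω × FreeGroup (Finset Ω)) :=
  (tau_exists Ω A).choose

lemma tauP_finite (A : Set Ω) : {y | tauP Ω A y ≠ y}.Finite :=
  (tau_exists Ω A).choose_spec.1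

lemma tauP_spec {P : Finset (Ω × Ω)} (hG : Good Ω P) :
    ∀ p ∈ P, tauP Ω (enc Ω P) (pureP Ω (enc Ω P) (eY Ω p.1)) = eY Ω p.2 :=
  (tau_exists Ω (enc Ω P)).choose_spec.2 P hG rfl

noncomputable def fullP (A : Set Ω) : Equiv.Perm (Finset Ω × FreeGroup (Finset Ω)) :=
  tauP Ω A * pureP Ω A

/-- Conjugation by `eY` as a homomorphism of permutation groups. -/
noncomputable def conjHom : Equiv.Perm (Finset Ω × FreeGroup (Finset Ω)) →* Equiv.Perm Ω where
  toFun p := (eY Ω).trans (p.trans (eY Ω).symm)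
  map_one' := by ext x; simp
  map_mul' p q := by
    ext x
    simp [Equiv.Perm.mul_apply]

lemma conjHom_eq_one {p : Equiv.Perm (Finset Ω × FreeGroup (Finset Ω))}
    (h : conjHom Ω p = 1) : p = 1 := by
  apply Equiv.ext
  intro y
  have := congrArg (fun q : Equiv.Perm Ω => eY Ω (q ((eY Ω).symm y))) h
  simpa [conjHom] using this

/-- The generators of our free dense subgroup. -/
noncomputable def gens (A : Set Ω) : Equiv.Perm Ω := conjHom Ω (fullP Ω A)

lemma gens_apply (A : Set Ω) (a : Ω) :
    gens Ω A a = (eY Ω).symm (fullP Ω A (eY Ω a)) := rfl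

lemma fullP_apply_good {A : Set Ω} {F : Finset Ω}
    (h : ∀ y : Finset Ω × FreeGroup (Finset Ω), tauP Ω A y ≠ y → y.1 ≠ F)
    (x : FreeGroup (Finset Ω)) :
    fullP Ω A (F, x) = (F, FreeGroup.of (sec Ω A F) * x) := by
  have h1 : pureP Ω A (F, x) = (F, FreeGroup.of (sec Ω A F) * x) := rfl
  show tauP Ω A (pureP Ω A (F, x)) = _
  rw [h1]
  by_contra hne
  exact h _ hne rfl

lemma fullP_inv_apply_good {A : Set Ω} {F : Finset Ω}
    (h : ∀ y : Finset Ω × FreeGroup (Finset Ω), tauP Ω A y ≠ y → y.1 ≠ F)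
    (x : FreeGroup (Finset Ω)) :
    (fullP Ω A)⁻¹ (F, x) = (F, (FreeGroup.of (sec Ω A F))⁻¹ * x) := by
  have h2 : fullP Ω A (F, (FreeGroup.of (sec Ω A F))⁻¹ * x) = (F, x) := by
    rw [fullP_apply_good Ω h]
    simp
  rw [Equiv.Perm.inv_eq_iff_eq]
  exact h2.symm

lemma prod_apply_good (L : List (Set Ω × Bool)) (F : Finset Ω)
    (hF : ∀ p ∈ L, ∀ y : Finset Ω × FreeGroup (Finset Ω), tauP Ω p.1 y ≠ y → y.1 ≠ F)
    (x : FreeGroup (Finset Ω)) :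
    (L.map fun p => cond p.2 (fullP Ω p.1) (fullP Ω p.1)⁻¹).prod (F, x)
      = (F, (L.map fun p =>
          cond p.2 (FreeGroup.of (sec Ω p.1 F)) (FreeGroup.of (sec Ω p.1 F))⁻¹).prod * x) := by
  induction L with
  | nil => simp
  | cons a t ih =>
    have hFa : ∀ y : Finset Ω × FreeGroup (Finset Ω), tauP Ω a.1 y ≠ y → y.1 ≠ F :=
      hF a List.mem_cons_self
    have iht := ih (fun p hp => hF p (List.mem_cons_of_mem _ hp))
    rw [List.map_cons, List.map_cons, List.prod_cons, List.prod_cons,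
      Equiv.Perm.mul_apply, iht]
    cases hb : a.2
    · simp only [cond_false]
      rw [fullP_inv_apply_good Ω hFa, mul_assoc]
    · simp only [cond_true]
      rw [fullP_apply_good Ω hFa, mul_assoc]

lemma exists_goodF (t : Finset (Set Ω)) :
    ∃ F : Finset Ω,
      (∀ A ∈ t, ∀ B ∈ t, A ≠ B → sec Ω A F ≠ sec Ω B F) ∧
      (∀ A ∈ t, ∀ y : Finset Ω × FreeGroup (Finset Ω), tauP Ω A y ≠ y → y.1 ≠ F) := by
  classical
  have hw : ∀ A B : Set Ω, A ≠ B → ∃ w, (w ∈ A ∧ w ∉ B) ∨ (w ∈ B ∧ w ∉ A) := by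
    intro A B hAB
    by_contra h
    push_neg at h
    apply hAB
    ext a
    have := h a
    tauto
  set wit : Set Ω × Set Ω → Ω := fun pq =>
    if h : pq.1 ≠ pq.2 then (hw _ _ h).choose else Classical.arbitrary Ω with hwit
  set S : Finset Ω := (t ×ˢ t).image wit with hS
  set Bad : Set (Finset Ω) :=
    ⋃ A ∈ (t : Set (Set Ω)), Prod.fst '' {y : Finset Ω × FreeGroup (Finset Ω) | tauP Ω A y ≠ y}
    with hBadDef
  have hBad : Bad.Finite :=
    Set.Finite.biUnion t.finite_toSet (fun A _ => (tauP_finite Ω A).image _)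
  have hbadx : {x : Ω | x ∉ S ∧ insert x S ∈ Bad}.Finite := by
    apply Set.Finite.of_finite_image (f := fun x => insert x S)
    · apply hBad.subset
      rintro F ⟨x, ⟨_, hxB⟩, rfl⟩
      exact hxB
    · intro x hx y hy hxy
      have hxy' : insert x S = insert y S := hxy
      have : x ∈ insert y S := hxy' ▸ Finset.mem_insert_self x S
      rcases Finset.mem_insert.1 this with h | h
      · exact h
      · exact absurd h hx.1
  obtain ⟨x, hx⟩ : ∃ x : Ω, x ∉ (↑S : Set Ω) ∪ {x | x ∉ S ∧ insert x S ∈ Bad} := by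
    have hfin : ((↑S : Set Ω) ∪ {x | x ∉ S ∧ insert x S ∈ Bad}).Finite :=
      S.finite_toSet.union hbadx
    obtain ⟨x, hx⟩ := hfin.infinite_compl.nonempty
    exact ⟨x, hx⟩
  have hxS : x ∉ S := fun h => hx (Or.inl h)
  refine ⟨insert x S, ?_, ?_⟩
  · intro A hA B hB hAB
    have hwm : wit (A, B) ∈ S := Finset.mem_image_of_mem _ (Finset.mem_product.2 ⟨hA, hB⟩)
    have hww : (wit (A, B) ∈ A ∧ wit (A, B) ∉ B) ∨ (wit (A, B) ∈ B ∧ wit (A, B) ∉ A) := by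
      have : wit (A, B) = (hw A B hAB).choose := by
        rw [hwit]; exact dif_pos hAB
      rw [this]
      exact (hw A B hAB).choose_spec
    have hwF : wit (A, B) ∈ insert x S := Finset.mem_insert_of_mem hwm
    intro hEq
    rcases hww with ⟨h1, h2⟩ | ⟨h1, h2⟩
    · have : wit (A, B) ∈ sec Ω A (insert x S) := (mem_sec Ω).2 ⟨hwF, h1⟩
      rw [hEq] at this
      exact h2 ((mem_sec Ω).1 this).2
    · have : wit (A, B) ∈ sec Ω B (insert x S) := (mem_sec Ω).2 ⟨hwF, h1⟩
      rw [← hEq] at this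
      exact h2 ((mem_sec Ω).1 this).2
  · intro A hA y hy hyF
    have hyB : y.1 ∈ Bad := by
      rw [hBadDef]
      exact Set.mem_biUnion hA ⟨y, hy, rfl⟩
    rw [hyF] at hyB
    exact hx (Or.inr ⟨hxS, hyB⟩)

theorem lift_gens_injective : Function.Injective (FreeGroup.lift (gens Ω)) := by
  classical
  rw [injective_iff_map_eq_one]
  intro x hx
  by_contra hx1
  set L := x.toWord with hLdef
  have hLne : L ≠ [] := fun h => hx1 (FreeGroup.toWord_eq_nil_iff.1 h)
  set t : Finset (Set Ω) := (L.map Prod.fst).toFinset with ht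
  obtain ⟨F, hsep, hfix⟩ := exists_goodF Ω t
  have hmem : ∀ p ∈ L, p.1 ∈ t := by
    intro p hp
    rw [ht, List.mem_toFinset]
    exact List.mem_map_of_mem hp
  have hcomm : FreeGroup.lift (gens Ω) = (conjHom Ω).comp (FreeGroup.lift (fullP Ω)) := by
    apply FreeGroup.ext_hom
    intro A
    simp [FreeGroup.lift_apply_of, gens]
  have e1 : FreeGroup.lift (fullP Ω) x
      = (L.map fun p => cond p.2 (fullP Ω p.1) (fullP Ω p.1)⁻¹).prod := by
    conv_lhs => rw [← FreeGroup.mk_toWord (x := x)]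
    rw [FreeGroup.lift_mk]
  have e2 := prod_apply_good Ω L F (fun p hp => hfix p.1 (hmem p hp)) 1
  set m : FreeGroup (Finset Ω) := (L.map fun p =>
    cond p.2 (FreeGroup.of (sec Ω p.1 F)) (FreeGroup.of (sec Ω p.1 F))⁻¹).prod with hm
  have hm2 : m = FreeGroup.mk (L.map fun p => (sec Ω p.1 F, p.2)) := by
    have h1 : m = FreeGroup.lift (fun A => FreeGroup.of (sec Ω A F)) (FreeGroup.mk L) := by
      rw [FreeGroup.lift_mk]
    have h2 : FreeGroup.lift (fun A => FreeGroup.of (sec Ω A F)) (FreeGroup.mk L)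
        = FreeGroup.map (fun A => sec Ω A F) (FreeGroup.mk L) := by
      rw [FreeGroup.map_eq_lift]
      rfl
    rw [h1, h2, FreeGroup.map.mk]
  have hmne : m ≠ 1 := by
    intro hm1
    rw [hm2] at hm1
    have h3 := congrArg FreeGroup.toWord hm1
    rw [FreeGroup.toWord_mk, FreeGroup.toWord_one] at h3
    rw [reduce_map_eq (fun A => sec Ω A F) L (FreeGroup.reduce_toWord x)] at h3
    · exact hLne (List.map_eq_nil_iff.1 h3)
    · intro p hp q hq hsec
      by_contra hne
      exact hsep p.1 (hmem p hp) q.1 (hmem q hq) hne hsec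
  have hfull1 : FreeGroup.lift (fullP Ω) x = 1 := by
    apply conjHom_eq_one Ω
    rw [← MonoidHom.comp_apply, ← hcomm, hx]
  rw [hfull1] at e1
  have e3 : ((1 : Equiv.Perm (Finset Ω × FreeGroup (Finset Ω)))) (F, (1 : FreeGroup (Finset Ω))) = (F, m * 1) := by
    rw [e1]
    exact e2
  simp only [Equiv.Perm.one_apply, mul_one, Prod.mk.injEq] at e3
  exact hmne e3.2.symm

/-- The single generator attached to (the code of) a finite partial injection extends it. -/
lemma gens_extends {P : Finset (Ω × Ω)} (hG : Good Ω P) :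
    ∀ p ∈ P, gens Ω (enc Ω P) p.1 = p.2 := by
  intro p hp
  rw [gens_apply]
  show (eY Ω).symm (tauP Ω (enc Ω P) (pureP Ω (enc Ω P) (eY Ω p.1))) = p.2
  rw [tauP_spec Ω hG p hp, Equiv.symm_apply_apply]

theorem dense_range :
    @Dense (Equiv.Perm Ω) (permFunctionTopology Ω)
      ((FreeGroup.lift (gens Ω)).range : Set (Equiv.Perm Ω)) := by
  classical
  letI : TopologicalSpace Ω := ⊥
  letI T : TopologicalSpace (Equiv.Perm Ω) := permFunctionTopology Ω
  intro g
  rw [mem_closure_iff]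
  intro o ho hgo
  obtain ⟨w, hw, rfl⟩ := isOpen_induced_iff.1 ho
  set Φ : Equiv.Perm Ω → (Ω → Ω) × (Ω → Ω) :=
    fun f => ((f : Ω → Ω), ((f⁻¹ : Equiv.Perm Ω) : Ω → Ω)) with hΦ
  have hgw : Φ g ∈ w := hgo
  obtain ⟨u, v, hu, hv, hgu, hgv, huv⟩ := isOpen_prod_iff.1 hw _ _ hgw
  obtain ⟨I₁, u₁, h₁, hsub₁⟩ := isOpen_pi_iff.1 hu _ hgu
  obtain ⟨I₂, u₂, h₂, hsub₂⟩ := isOpen_pi_iff.1 hv _ hgv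
  set T' : Finset Ω := I₁ ∪ I₂.image (fun a => g⁻¹ a) with hT'
  set P : Finset (Ω × Ω) := T'.image (fun a => (a, g a)) with hP
  have hGood : Good Ω P := by
    intro p hp q hq
    obtain ⟨a, _, rfl⟩ := Finset.mem_image.1 hp
    obtain ⟨b, _, rfl⟩ := Finset.mem_image.1 hq
    simp only at *
    exact ⟨fun h => by rw [h], fun h => g.injective h⟩
  set h : Equiv.Perm Ω := gens Ω (enc Ω P) with hh
  have hagree : ∀ a ∈ T', h a = g a := by
    intro a ha
    exact gens_extends Ω hGood (a, g a) (Finset.mem_image_of_mem _ ha)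
  have hagree1 : ∀ a ∈ I₁, h a = g a := fun a ha => hagree a (Finset.mem_union_left _ ha)
  have hagree2 : ∀ a ∈ I₂, h⁻¹ a = g⁻¹ a := by
    intro a ha
    have hmem : g⁻¹ a ∈ T' :=
      Finset.mem_union_right _ (Finset.mem_image_of_mem _ ha)
    have : h (g⁻¹ a) = a := by rw [hagree _ hmem]; simp
    calc h⁻¹ a = h⁻¹ (h (g⁻¹ a)) := by rw [this]
      _ = g⁻¹ a := Equiv.symm_apply_apply h _
  refine ⟨h, ?_, ?_⟩
  · show Φ h ∈ w
    apply huv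
    constructor
    · apply hsub₁
      intro i hi
      rw [show (Φ h).1 i = h i from rfl, hagree1 i hi]
      exact (h₁ i hi).2
    · apply hsub₂
      intro i hi
      rw [show (Φ h).2 i = h⁻¹ i from rfl, hagree2 i hi]
      exact (h₂ i hi).2
  · exact ⟨FreeGroup.of (enc Ω P), FreeGroup.lift_apply_of⟩

end DeBruijnAux

/-- (de Bruijn) For any infinite set `Ω`, the group `Sym(Ω)` of all permutations of
`Ω` contains a free subgroup of rank `2^|Ω|`, which moreover can be taken to be dense
in the function topology. -/
theorem stmt_14 (Ω : Type u) [Infinite Ω] :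
    ∃ (ι : Type u) (f : ι → Equiv.Perm Ω),
      Cardinal.mk ι = 2 ^ Cardinal.mk Ω ∧
      Function.Injective (FreeGroup.lift f) ∧
      @Dense (Equiv.Perm Ω) (permFunctionTopology Ω)
        ((FreeGroup.lift f).range : Set (Equiv.Perm Ω)) := by
  exact ⟨Set Ω, DeBruijnAux.gens Ω, Cardinal.mk_set,
    DeBruijnAux.lift_gens_injective Ω, DeBruijnAux.dense_range Ω⟩
end

section
/- Let Ω be an infinite set. Then Sym(Ω), with the function topology, is almost 2^|Ω|-free. -/
universe u v

open Equiv Function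

namespace AlmostFreeProof

variable {Ω : Type u}

section PartOne


variable {Ω : Type u}

/-- A finitary permutation agreeing with a given permutation on a finite set. -/
lemma exists_finitary_agree (q : Equiv.Perm Ω) (S : Finset Ω) :
    ∃ π : Equiv.Perm Ω, (∀ x ∈ S, π x = q x) ∧ {x | π x ≠ x}.Finite := by
  classical
  induction S using Finset.induction_on with
  | empty => exact ⟨1, by simp, by simp⟩
  | @insert a S ha ih =>
    obtain ⟨π, hπ, hfin⟩ := ih
    refine ⟨π * Equiv.swap (π⁻¹ (q a)) a, ?_, ?_⟩
    · intro x hx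
      by_cases hxa : x = a
      · subst hxa
        rw [Equiv.Perm.mul_apply, Equiv.swap_apply_right]; exact π.apply_symm_apply _
      · have hx' : x ∈ S := (Finset.mem_insert.mp hx).resolve_left hxa
        have hne2 : x ≠ π⁻¹ (q a) := by
          intro heq
          have h3 : π x = q a := by rw [heq]; exact π.apply_symm_apply _
          rw [hπ x hx'] at h3
          exact hxa (q.injective h3)
        rw [Equiv.Perm.mul_apply, Equiv.swap_apply_of_ne_of_ne hne2 hxa, hπ x hx']
    · apply Set.Finite.subset (hfin.union ((Set.finite_singleton a).insert (π⁻¹ (q a))))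
      intro x hx
      by_cases h1 : x = π⁻¹ (q a)
      · exact Or.inr (by simp [h1])
      by_cases h2 : x = a
      · exact Or.inr (by simp [h2])
      · left
        simpa only [Set.mem_setOf_eq, Equiv.Perm.mul_apply, Equiv.swap_apply_of_ne_of_ne h1 h2] using hx

lemma inv_diff_finite {f g : Equiv.Perm Ω} (h : {x | f x ≠ g x}.Finite) :
    {x | f⁻¹ x ≠ g⁻¹ x}.Finite := by
  apply Set.Finite.subset (h.image f)
  intro x hx
  refine ⟨f⁻¹ x, ?_, by simp⟩
  intro heq
  apply hx
  have h2 : g (f⁻¹ x) = x := by rw [← heq]; simp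
  exact Equiv.Perm.eq_inv_iff_eq.mpr h2

lemma exists_patch (g h : Equiv.Perm Ω) (S : Finset Ω) :
    ∃ f : Equiv.Perm Ω, (∀ x ∈ S, f x = h x ∧ f⁻¹ x = h⁻¹ x) ∧ {x | f x ≠ g x}.Finite := by
  classical
  obtain ⟨π, hπ, hfin⟩ := exists_finitary_agree (g⁻¹ * h) (S ∪ S.image (h⁻¹ : Equiv.Perm Ω))
  refine ⟨g * π, ?_, ?_⟩
  · intro x hx
    have h1 : (g * π) x = h x := by
      rw [Equiv.Perm.mul_apply, hπ x (Finset.mem_union_left _ hx)]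
      simp
    refine ⟨h1, ?_⟩
    have h2 : (g * π) (h⁻¹ x) = x := by
      rw [Equiv.Perm.mul_apply, hπ (h⁻¹ x) (Finset.mem_union_right _ (Finset.mem_image_of_mem _ hx))]
      simp
    exact (Equiv.Perm.eq_inv_iff_eq.mpr h2).symm
  · apply Set.Finite.subset hfin
    intro x hx
    simp only [Set.mem_setOf_eq] at hx ⊢
    intro heq
    exact hx (by rw [Equiv.Perm.mul_apply, heq])


end PartOne

section PartTwo
variable {ι : Type v}


variable {Ω : Type u} {ι : Type*}

/-- The permutation associated to a single letter of a word. -/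
def itemPerm (f : ι → Equiv.Perm Ω) (p : ι × Bool) : Equiv.Perm Ω :=
  cond p.2 (f p.1) (f p.1)⁻¹

/-- Evaluation of a word (as a list of letters) in a family of permutations. -/
def ev (f : ι → Equiv.Perm Ω) (L : List (ι × Bool)) : Equiv.Perm Ω :=
  (L.map (itemPerm f)).prod

lemma ev_nil (f : ι → Equiv.Perm Ω) : ev f [] = 1 := rfl

lemma ev_cons (f : ι → Equiv.Perm Ω) (p : ι × Bool) (L : List (ι × Bool)) :
    ev f (p :: L) = itemPerm f p * ev f L := by
  simp [ev]

lemma lift_eq_ev [DecidableEq ι] (f : ι → Equiv.Perm Ω) (w : FreeGroup ι) :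
    FreeGroup.lift f w = ev f w.toWord := by
  conv_lhs => rw [← FreeGroup.mk_toWord (x := w)]
  exact FreeGroup.lift_mk

lemma ev_congr (f g : ι → Equiv.Perm Ω) (T : Set Ω) :
    ∀ (L : List (ι × Bool)) (x : Ω),
      (∀ p ∈ L, ∀ y ∉ T, itemPerm f p y = itemPerm g p y) →
      (∀ L₂, L₂ <:+ L → ev g L₂ x ∉ T) →
      ev f L x = ev g L x := by
  intro L
  induction L with
  | nil => intro x _ _; rfl
  | cons p L ih =>
    intro x hagree htail
    have h1 : ev f L x = ev g L x :=
      ih x (fun p' hp' => hagree p' (List.mem_cons_of_mem _ hp'))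
        (fun L₂ hL₂ => htail L₂ (hL₂.trans (List.suffix_cons p L)))
    rw [ev_cons, ev_cons, Equiv.Perm.mul_apply, Equiv.Perm.mul_apply, h1]
    exact hagree p List.mem_cons_self _ (htail L (List.suffix_cons p L))

/-- The key perturbation lemma: if every nontrivial word in `g` moves infinitely many
points, and each `f i` differs from `g i` in finitely many points, then `f` is free. -/
lemma lift_injective_of_close (g f : ι → Equiv.Perm Ω)
    (hg : ∀ w : FreeGroup ι, w ≠ 1 → {x | FreeGroup.lift g w x ≠ x}.Infinite)
    (hfg : ∀ i, {x | f i x ≠ g i x}.Finite) :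
    Function.Injective (FreeGroup.lift f) := by
  classical
  refine (injective_iff_map_eq_one _).mpr ?_
  intro w
  contrapose!
  intro hw
  set L := w.toWord with hL
  set T : Set Ω := ⋃ p ∈ L, {x | itemPerm f p x ≠ itemPerm g p x} with hT
  have hTfin : T.Finite := by
    apply Set.Finite.biUnion L.finite_toSet
    rintro ⟨i, b⟩ _
    cases b
    · exact inv_diff_finite (hfg i)
    · exact hfg i
  set B : Set Ω := ⋃ L₂ ∈ L.tails, (ev g L₂) ⁻¹' T with hB
  have hBfin : B.Finite := by
    apply Set.Finite.biUnion L.tails.finite_toSet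
    intro L₂ _
    exact hTfin.preimage (Equiv.injective _).injOn
  obtain ⟨x, hx⟩ := ((hg w hw).diff hBfin).nonempty
  have hxM : FreeGroup.lift g w x ≠ x := hx.1
  have hxB : x ∉ B := hx.2
  have key : ev f L x = ev g L x := by
    apply ev_congr
    · intro p hp y hy
      by_contra hne
      exact hy (Set.mem_iUnion₂.mpr ⟨p, hp, hne⟩)
    · intro L₂ hL₂
      intro hmem
      exact hxB (Set.mem_iUnion₂.mpr ⟨L₂, (List.mem_tails _ _).mpr hL₂, hmem⟩)
  intro h1
  have hfx : ev f L x = x := by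
    have h2 : FreeGroup.lift f w x = x := by rw [h1]; rfl
    rwa [lift_eq_ev, ← hL] at h2
  apply hxM
  rw [lift_eq_ev, ← hL, ← key]
  exact hfx


end PartTwo

section PartThree


lemma freeGroup_map_injective {α β : Type*} [Nonempty α] {u : α → β} (hu : Injective u) :
    Injective (FreeGroup.map u) := by
  obtain ⟨r, hr⟩ := hu.hasLeftInverse
  intro x y hxy
  have key : ∀ z : FreeGroup α, FreeGroup.map r (FreeGroup.map u z) = z := by
    intro z
    rw [FreeGroup.map.comp, (funext hr : r ∘ u = id), FreeGroup.map.id]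
  rw [← key x, ← key y, hxy]

lemma map_ne_one_of_injOn {α : Type*} [DecidableEq α] {v : α → ℕ} (w : FreeGroup α)
    (hw : w ≠ 1) (hv : Set.InjOn v {i | i ∈ w.toWord.map Prod.fst}) :
    FreeGroup.map v w ≠ 1 := by
  set A : Finset α := (w.toWord.map Prod.fst).toFinset with hA
  have hmem : ∀ q ∈ w.toWord, q.1 ∈ A := by
    intro q hq
    exact List.mem_toFinset.mpr (List.mem_map.mpr ⟨q, hq, rfl⟩)
  set L' : List ({x // x ∈ A} × Bool) :=
    w.toWord.attach.map (fun q => (⟨q.1.1, hmem q.1 q.2⟩, q.1.2)) with hL'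
  set w' : FreeGroup {x // x ∈ A} := FreeGroup.mk L' with hw'
  have h1 : FreeGroup.map Subtype.val w' = w := by
    rw [hw', FreeGroup.map.mk, hL', List.map_map]
    conv_rhs => rw [← FreeGroup.mk_toWord (x := w)]
    congr 1
    exact List.attach_map_subtype_val w.toWord
  have h2 : w' ≠ 1 := by
    intro h
    apply hw
    rw [← h1, h, map_one]
  have hne : Nonempty {x // x ∈ A} := by
    have : w.toWord ≠ [] := by
      intro h
      exact hw (FreeGroup.toWord_eq_nil_iff.mp h)
    obtain ⟨q, hq⟩ := List.exists_mem_of_ne_nil _ this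
    exact ⟨⟨q.1, hmem q hq⟩⟩
  have hinj : Injective (v ∘ (Subtype.val : {x // x ∈ A} → α)) := by
    rintro ⟨a, ha⟩ ⟨b, hb⟩ hab
    have ha' : a ∈ {i | i ∈ w.toWord.map Prod.fst} := by
      simpa [hA] using ha
    have hb' : b ∈ {i | i ∈ w.toWord.map Prod.fst} := by
      simpa [hA] using hb
    exact Subtype.ext (hv ha' hb' hab)
  intro hcontra
  apply h2
  apply freeGroup_map_injective hinj
  rw [← FreeGroup.map.comp Subtype.val v w', h1, hcontra, map_one]


end PartThree

section PartFour
variable {ι : Type v}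


variable {Ω : Type u} {ι : Type v}

/-- The countable-per-point index type used for the independent family of functions. -/
abbrev DD (Ω : Type u) : Type u := Finset Ω × Finset (Finset Ω × ℕ)

open scoped Classical in
noncomputable def keyF (σ : ι → Set Ω) (F : Finset Ω) (s : ι) : Finset Ω :=
  F.filter (fun x => x ∈ σ s)

open scoped Classical in
noncomputable def indF (σ : ι → Set Ω) (s : ι) (d : DD Ω) : ℕ :=
  (d.2.filter (fun p : Finset Ω × ℕ => p.1 = keyF σ d.1 s)).sum Prod.snd

lemma mem_keyF {σ : ι → Set Ω} {F : Finset Ω} {s : ι} {x : Ω} :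
    x ∈ keyF σ F s ↔ x ∈ F ∧ x ∈ σ s := by
  classical
  unfold keyF
  rw [Finset.filter_congr_decidable]
  exact Finset.mem_filter

/-- The independence property of the family `indF`. -/
lemma indF_spec [Nonempty Ω] {σ : ι → Set Ω} (hσ : Injective σ) (A : Finset ι) (m : ι → ℕ) :
    ∃ d : DD Ω, ∀ s ∈ A, indF σ s d = m s := by
  classical
  have hsep : ∀ s t : ι, s ≠ t → ∃ x : Ω, ¬(x ∈ σ s ↔ x ∈ σ t) := by
    intro s t hst
    by_contra h
    push_neg at h
    exact hst (hσ (Set.ext h))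
  set wit : ι × ι → Ω := fun st =>
    if h : st.1 ≠ st.2 then Classical.choose (hsep st.1 st.2 h) else Classical.arbitrary Ω
    with hwit
  set F : Finset Ω := (A ×ˢ A).image wit with hF
  have hkeyinj : ∀ s ∈ A, ∀ t ∈ A, keyF σ F s = keyF σ F t → s = t := by
    intro s hs t ht hkey
    by_contra hst
    have hxF : wit (s, t) ∈ F := Finset.mem_image_of_mem wit (Finset.mk_mem_product hs ht)
    have hw : wit (s, t) = Classical.choose (hsep s t hst) := by
      rw [hwit]
      exact dif_pos hst
    have hx : ¬(wit (s, t) ∈ σ s ↔ wit (s, t) ∈ σ t) := by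
      rw [hw]
      exact Classical.choose_spec (hsep s t hst)
    apply hx
    constructor
    · intro hmem
      have h5 : wit (s, t) ∈ keyF σ F s := mem_keyF.mpr ⟨hxF, hmem⟩
      rw [hkey] at h5
      exact (mem_keyF.mp h5).2
    · intro hmem
      have h5 : wit (s, t) ∈ keyF σ F t := mem_keyF.mpr ⟨hxF, hmem⟩
      rw [← hkey] at h5
      exact (mem_keyF.mp h5).2
  refine ⟨(F, A.image (fun t => (keyF σ F t, m t))), ?_⟩
  intro s hs
  have hfilter : ∀ (inst : DecidablePred fun p : Finset Ω × ℕ => p.1 = keyF σ F s),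
      (A.image (fun t => (keyF σ F t, m t))).filter
      (fun p : Finset Ω × ℕ => p.1 = keyF σ F s) = {(keyF σ F s, m s)} := by
    intro inst
    ext p
    simp only [Finset.mem_filter, Finset.mem_image, Finset.mem_singleton]
    constructor
    · rintro ⟨⟨t, ht, rfl⟩, h2⟩
      simp only at h2
      have := hkeyinj t ht s hs h2
      subst this
      rfl
    · rintro rfl
      exact ⟨⟨s, hs, rfl⟩, rfl⟩
  show (Finset.filter _ _).sum Prod.snd = m s
  rw [hfilter _, Finset.sum_singleton]


end PartFour

section PartFive
variable {ι : Type u}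
lemma exists_nice_family [Infinite Ω] (hcard : Cardinal.mk ι = 2 ^ Cardinal.mk Ω) :
    ∃ g : ι → Equiv.Perm Ω,
      ∀ w : FreeGroup ι, w ≠ 1 → {x | FreeGroup.lift g w x ≠ x}.Infinite := by
  classical
  have hset : Cardinal.mk ι = Cardinal.mk (Set Ω) := by rw [hcard, Cardinal.mk_set]
  obtain ⟨eσ⟩ := Cardinal.eq.mp hset
  set σ : ι → Set Ω := fun s => eσ s with hσdef
  have hσ : Injective σ := eσ.injective
  have hemb : Cardinal.mk (DD Ω × FreeGroup ℕ) ≤ Cardinal.mk Ω := by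
    have h0 : Cardinal.mk (FreeGroup ℕ) = Cardinal.aleph0 := by
      rw [Cardinal.mk_freeGroup]; simp
    have h1 : Cardinal.mk (Finset Ω × ℕ) = Cardinal.mk Ω := by
      simp [Cardinal.mk_prod, Cardinal.mk_finset_of_infinite, Cardinal.mk_mul_aleph0_eq]
    have h2 : Cardinal.mk (Finset (Finset Ω × ℕ)) = Cardinal.mk Ω := by
      rw [Cardinal.mk_finset_of_infinite, h1]
    have h3 : Cardinal.mk (DD Ω) = Cardinal.mk Ω := by
      simp [Cardinal.mk_prod, Cardinal.mk_finset_of_infinite, h2,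
        Cardinal.mul_eq_self (Cardinal.aleph0_le_mk Ω)]
    rw [Cardinal.mk_prod, h3, h0]
    simp [Cardinal.mk_mul_aleph0_eq]
  obtain ⟨emb⟩ := Cardinal.le_def _ _ |>.mp hemb
  set M : (DD Ω → FreeGroup ℕ) →* Equiv.Perm (DD Ω × FreeGroup ℕ) :=
    MonoidHom.mk' (fun c => Equiv.prodShear (Equiv.refl (DD Ω)) (fun d => Equiv.mulLeft (c d)))
      (by
        intro a b
        apply Equiv.ext
        rintro ⟨d, z⟩
        simp [Equiv.prodShear_apply, Equiv.Perm.mul_apply, mul_assoc]) with hM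
  set N : FreeGroup ι →* (DD Ω → FreeGroup ℕ) :=
    FreeGroup.lift (fun s d => FreeGroup.of (indF σ s d)) with hN
  set extH : Equiv.Perm (DD Ω × FreeGroup ℕ) →* Equiv.Perm Ω :=
    Equiv.Perm.viaEmbeddingHom emb with hextH
  set g : ι → Equiv.Perm Ω :=
    fun s => extH (M (fun d => FreeGroup.of (indF σ s d))) with hg
  have hfact : FreeGroup.lift g = extH.comp (M.comp N) := by
    apply FreeGroup.ext_hom
    intro s
    rw [FreeGroup.lift_apply_of]
    simp only [MonoidHom.comp_apply, hN, FreeGroup.lift_apply_of]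
    rfl
  have hcoord : ∀ (w : FreeGroup ι) (d : DD Ω),
      N w d = FreeGroup.map (fun s => indF σ s d) w := by
    intro w d
    have h : (Pi.evalMonoidHom (fun _ : DD Ω => FreeGroup ℕ) d).comp N
        = FreeGroup.map (fun s => indF σ s d) := by
      apply FreeGroup.ext_hom
      intro s
      simp only [MonoidHom.comp_apply, hN, FreeGroup.lift_apply_of, Pi.evalMonoidHom_apply,
        FreeGroup.map.of]
    exact DFunLike.congr_fun h w
  refine ⟨g, ?_⟩
  intro w hw
  set A : Finset ι := (w.toWord.map Prod.fst).toFinset with hA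
  set m : ι → ℕ := fun s => if h : s ∈ A then ((A.equivFin ⟨s, h⟩ : Fin _) : ℕ) else 0 with hm
  obtain ⟨d, hd⟩ := indF_spec hσ A m
  have hv : Set.InjOn (fun s => indF σ s d) {i | i ∈ w.toWord.map Prod.fst} := by
    intro a ha b hb hab
    have haA : a ∈ A := List.mem_toFinset.mpr ha
    have hbA : b ∈ A := List.mem_toFinset.mpr hb
    have hab' : indF σ a d = indF σ b d := hab
    rw [hd a haA, hd b hbA, hm] at hab'
    simp only [dif_pos haA, dif_pos hbA] at hab'
    have h6 := Fin.val_injective hab'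
    have h7 := A.equivFin.injective h6
    exact congrArg Subtype.val h7
  have hNw : N w d ≠ 1 := by
    rw [hcoord]
    exact map_ne_one_of_injOn w hw hv
  have hMapp : ∀ (c : DD Ω → FreeGroup ℕ) (d' : DD Ω) (z : FreeGroup ℕ),
      M c (d', z) = (d', c d' * z) := by
    intro c d' z
    rw [hM]
    simp [Equiv.prodShear_apply]
  refine Set.infinite_of_injective_forall_mem
    (f := fun z : FreeGroup ℕ => emb (d, z)) ?_ ?_
  · intro a b hab
    have := emb.injective hab
    exact (Prod.mk.injEq _ _ _ _ ▸ this).2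
  · intro z
    show FreeGroup.lift g w (emb (d, z)) ≠ emb (d, z)
    rw [hfact]
    have happ : extH (M (N w)) (emb (d, z)) = emb (d, N w d * z) := by
      rw [hextH]
      rw [Equiv.Perm.viaEmbeddingHom_apply]
      rw [Equiv.Perm.viaEmbedding_apply, hMapp]
    rw [MonoidHom.comp_apply, MonoidHom.comp_apply, happ]
    intro hcontra
    have := emb.injective hcontra
    have h2 : N w d * z = z := (Prod.mk.injEq _ _ _ _ ▸ this).2
    exact hNw (mul_eq_right.mp h2)


end PartFive

section PartSix


variable {Ω : Type u}

lemma mem_nhds_pi_bot {A B : Type*} {u : A → B} {V : Set (A → B)}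
    (hV : V ∈ @nhds (A → B) (@Pi.topologicalSpace A (fun _ => B) (fun _ => ⊥)) u) :
    ∃ S : Finset A, {v : A → B | ∀ α ∈ S, v α = u α} ⊆ V := by
  letI : TopologicalSpace B := ⊥
  haveI : DiscreteTopology B := ⟨rfl⟩
  rw [nhds_pi] at hV
  obtain ⟨I, hIfin, t, ht, hsub⟩ := Filter.mem_pi.mp hV
  refine ⟨hIfin.toFinset, ?_⟩
  intro v hv
  apply hsub
  intro α hα
  have h1 : v α = u α := hv α (hIfin.mem_toFinset.mpr hα)
  have h2 : t α ∈ (pure (u α) : Filter B) := by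
    rw [← nhds_discrete B]
    exact ht α
  rw [h1]
  exact Filter.mem_pure.mp h2

lemma nhds_constraint {ι : Type v} (h : ι → Equiv.Perm Ω) (U : Set (ι → Equiv.Perm Ω))
    (hU : U ∈ @nhds _ (@Pi.topologicalSpace ι (fun _ => Equiv.Perm Ω)
      (fun _ => permFunctionTopology Ω)) h) :
    ∃ (I : Finset ι) (S : Finset Ω), ∀ f : ι → Equiv.Perm Ω,
      (∀ i ∈ I, ∀ α ∈ S, f i α = h i α ∧ (f i)⁻¹ α = (h i)⁻¹ α) → f ∈ U := by
  classical
  letI tΩ : TopologicalSpace Ω := ⊥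
  letI tP : TopologicalSpace (Equiv.Perm Ω) := permFunctionTopology Ω
  rw [nhds_pi] at hU
  obtain ⟨I, hIfin, t, ht, hsub⟩ := Filter.mem_pi.mp hU
  have key : ∀ i : ι, ∃ S : Finset Ω,
      {f : Equiv.Perm Ω | ∀ α ∈ S, f α = h i α ∧ f⁻¹ α = (h i)⁻¹ α} ⊆ t i := by
    intro i
    have hti : t i ∈ @nhds _ (permFunctionTopology Ω) (h i) := ht i
    rw [show permFunctionTopology Ω = TopologicalSpace.induced
      (fun f : Equiv.Perm Ω => ((f : Ω → Ω), ((f⁻¹ : Equiv.Perm Ω) : Ω → Ω)))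
      inferInstance from rfl, nhds_induced] at hti
    obtain ⟨V, hV, hVsub⟩ := Filter.mem_comap.mp hti
    rw [nhds_prod_eq] at hV
    obtain ⟨V₁, hV₁, V₂, hV₂, hVprod⟩ := Filter.mem_prod_iff.mp hV
    obtain ⟨S₁, hS₁⟩ := mem_nhds_pi_bot hV₁
    obtain ⟨S₂, hS₂⟩ := mem_nhds_pi_bot hV₂
    refine ⟨S₁ ∪ S₂, ?_⟩
    intro f hf
    apply hVsub
    have : ((f : Ω → Ω), ((f⁻¹ : Equiv.Perm Ω) : Ω → Ω)) ∈ V₁ ×ˢ V₂ := by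
      constructor
      · exact hS₁ (fun α hα => (hf α (Finset.mem_union_left _ hα)).1)
      · exact hS₂ (fun α hα => (hf α (Finset.mem_union_right _ hα)).2)
    exact hVprod this
  choose S hS using key
  refine ⟨hIfin.toFinset, hIfin.toFinset.biUnion S, ?_⟩
  intro f hf
  apply hsub
  intro i hi
  apply hS i
  intro α hα
  exact hf i (hIfin.mem_toFinset.mpr hi) α
    (Finset.mem_biUnion.mpr ⟨i, hIfin.mem_toFinset.mpr hi, hα⟩)


end PartSix

end AlmostFreeProof

/-- For any infinite set `Ω`, the group `Sym(Ω)` of all permutations of `Ω`, with the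
function topology, is almost `2^|Ω|`-free. -/
theorem stmt_15 (Ω : Type u) [Infinite Ω] :
    @AlmostFree (Equiv.Perm Ω) _ (permFunctionTopology Ω) (2 ^ Cardinal.mk Ω) := by
  intro ι hcard
  classical
  obtain ⟨g, hg⟩ := AlmostFreeProof.exists_nice_family (Ω := Ω) hcard
  letI tP : TopologicalSpace (Equiv.Perm Ω) := permFunctionTopology Ω
  rw [dense_iff_inter_open]
  rintro U hUopen ⟨h, hh⟩
  obtain ⟨I, S, hIS⟩ := AlmostFreeProof.nhds_constraint h U (hUopen.mem_nhds hh)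
  have hpatch : ∀ i : ι, ∃ f : Equiv.Perm Ω,
      (∀ x ∈ S, f x = h i x ∧ f⁻¹ x = (h i)⁻¹ x) ∧ {x | f x ≠ g i x}.Finite :=
    fun i => AlmostFreeProof.exists_patch (g i) (h i) S
  choose f hf1 hf2 using hpatch
  refine ⟨f, hIS f (fun i _ α hα => hf1 i α hα), ?_⟩
  exact AlmostFreeProof.lift_injective_of_close g f hg hf2
end

section
/- Let n be a positive integer and let w be a nonidentity element of the free group on n generators. Then there exist a positive integer m and permutations f_1, …, f_n in the symmetric group S_m = Sym(Fin m) such that the image of w under the homomorphism FreeGroup (Fin n) → S_m sending the i-th generator to f_i is not the identity. -/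
open FreeGroup

namespace Stmt16Aux

variable {n : ℕ}

/-- domain predicate for the partial shift associated to generator `x`. -/
def P (L : List (Fin n × Bool)) (x : Fin n) (p : ℕ) : Prop :=
  L[p]? = some (x, false) ∨ (0 < p ∧ L[p-1]? = some (x, true))

def Q (L : List (Fin n × Bool)) (x : Fin n) (q : ℕ) : Prop :=
  L[q]? = some (x, true) ∨ (0 < q ∧ L[q-1]? = some (x, false))

instance (L : List (Fin n × Bool)) (x : Fin n) : DecidablePred (P L x) := by
  unfold P; infer_instance

instance (L : List (Fin n × Bool)) (x : Fin n) : DecidablePred (Q L x) := by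
  unfold Q; infer_instance

theorem notAdj {L : List (Fin n × Bool)} (hL : reduce L = L) {i : ℕ} {x : Fin n} {b : Bool}
    (h1 : L[i]? = some (x, b)) (h2 : L[i+1]? = some (x, !b)) : False := by
  rw [List.getElem?_eq_some_iff] at h1 h2
  obtain ⟨hi1, e1⟩ := h1
  obtain ⟨hi2, e2⟩ := h2
  have hd1 : L.drop i = (x, b) :: (x, !b) :: L.drop (i+2) := by
    rw [List.drop_eq_getElem_cons hi1, e1]
    congr 1
    rw [List.drop_eq_getElem_cons hi2, e2]
  have : reduce L = L.take i ++ (x, b) :: (x, !b) :: L.drop (i+2) := by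
    rw [hL, ← hd1, List.take_append_drop]
  exact reduce.not this

variable (L : List (Fin n × Bool)) (hL : reduce L = L)

/-- the partial bijection, as an equivalence of subtypes of `Fin (L.length + 1)`. -/
def e (x : Fin n) : {p : Fin (L.length + 1) // P L x p.val} ≃ {q : Fin (L.length + 1) // Q L x q.val} where
  toFun := fun ⟨p, hp⟩ =>
    if h : L[(p : ℕ)]? = some (x, false) then
      ⟨⟨(p : ℕ) + 1, by
        have := (List.getElem?_eq_some_iff.mp h).1; omega⟩, Or.inr ⟨Nat.succ_pos _, by simpa using h⟩⟩
    else
      ⟨⟨(p : ℕ) - 1, by omega⟩, Or.inl (by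
        rcases hp with h' | ⟨h0, h1⟩
        · exact absurd h' h
        · exact h1)⟩
  invFun := fun ⟨q, hq⟩ =>
    if h : L[(q : ℕ)]? = some (x, true) then
      ⟨⟨(q : ℕ) + 1, by
        have := (List.getElem?_eq_some_iff.mp h).1; omega⟩, Or.inr ⟨Nat.succ_pos _, by simpa using h⟩⟩
    else
      ⟨⟨(q : ℕ) - 1, by omega⟩, Or.inl (by
        rcases hq with h' | ⟨h0, h1⟩
        · exact absurd h' h
        · exact h1)⟩
  left_inv := by
    rintro ⟨p, hp⟩
    by_cases h : L[(p : ℕ)]? = some (x, false)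
    · have h2 : ¬ (L[(p : ℕ) + 1]? = some (x, true)) := fun h2 => notAdj hL h h2
      simp only [dif_pos h]
      simp only [dif_neg (by simpa using h2)]
      ext
      simp
    · rcases hp with h' | ⟨h0, h1⟩
      · exact absurd h' h
      · simp only [dif_neg h]
        simp only [dif_pos (show L[(p : ℕ) - 1]? = some (x, true) from h1)]
        ext
        simp
        omega
  right_inv := by
    rintro ⟨q, hq⟩
    by_cases h : L[(q : ℕ)]? = some (x, true)
    · have h2 : ¬ (L[(q : ℕ) + 1]? = some (x, false)) := fun h2 => notAdj hL h (by simpa using h2)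
      simp only [dif_pos h]
      simp only [dif_neg (by simpa using h2)]
      ext
      simp
    · rcases hq with h' | ⟨h0, h1⟩
      · exact absurd h' h
      · simp only [dif_neg h]
        simp only [dif_pos (show L[(q : ℕ) - 1]? = some (x, false) from h1)]
        ext
        simp
        omega

/-- the permutation of `Fin (L.length + 1)` associated to generator `x`. -/
noncomputable def perm (x : Fin n) : Equiv.Perm (Fin (L.length + 1)) :=
  (e L hL x).extendSubtype

theorem perm_false {i : ℕ} {x : Fin n} (h : L[i]? = some (x, false)) (hi : i < L.length + 1)
    (hi1 : i + 1 < L.length + 1) :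
    perm L hL x ⟨i, hi⟩ = ⟨i + 1, hi1⟩ := by
  have hp : P L x i := Or.inl h
  rw [perm, Equiv.extendSubtype_apply_of_mem (e L hL x) ⟨i, hi⟩ hp]
  show ((e L hL x) ⟨⟨i, hi⟩, hp⟩ : {q : Fin (L.length + 1) // Q L x q.val}).val = _
  simp only [e, Equiv.coe_fn_mk, dif_pos h]

theorem perm_true {i : ℕ} {x : Fin n} (h : L[i]? = some (x, true)) (hi : i < L.length + 1)
    (hi1 : i + 1 < L.length + 1) :
    perm L hL x ⟨i + 1, hi1⟩ = ⟨i, hi⟩ := by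
  have hp : P L x (i + 1) := Or.inr ⟨Nat.succ_pos _, by simpa using h⟩
  rw [perm, Equiv.extendSubtype_apply_of_mem (e L hL x) ⟨i + 1, hi1⟩ hp]
  show ((e L hL x) ⟨⟨i + 1, hi1⟩, hp⟩ : {q : Fin (L.length + 1) // Q L x q.val}).val = _
  have h2 : ¬ (L[i + 1]? = some (x, false)) := fun h2 => notAdj hL h (by simpa using h2)
  simp only [e, Equiv.coe_fn_mk, dif_neg h2]
  ext
  simp

theorem prod_drop : ∀ (s : List (Fin n × Bool)) (j : ℕ) (hj : j ≤ L.length),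
    L.drop j = s →
    (s.map fun p => cond p.2 (perm L hL p.1) (perm L hL p.1)⁻¹).prod
        ⟨L.length, Nat.lt_succ_self _⟩ = ⟨j, by omega⟩ := by
  intro s
  induction s with
  | nil =>
    intro j hj hd
    have : L.length ≤ j := by
      by_contra hlt
      push_neg at hlt
      have := List.drop_eq_nil_iff.mp hd
      omega
    have : j = L.length := le_antisymm hj this
    subst this
    simp
  | cons a t ih =>
    intro j hj hd
    have hjlt : j < L.length := by
      by_contra hlt
      push_neg at hlt
      rw [List.drop_eq_nil_iff.mpr hlt] at hd
      simp at hd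
    have hja : L[j]? = some a := by
      have : (L.drop j)[0]? = some a := by rw [hd]; simp
      rwa [List.getElem?_drop, Nat.add_zero] at this
    have hdt : L.drop (j + 1) = t := by
      have h1 : (L.drop j).tail = t := by rw [hd]; rfl
      rw [← h1, List.tail_drop]

    have iht := ih (j + 1) (by omega) hdt
    obtain ⟨x, b⟩ := a
    cases b
    · simp only [List.map_cons, List.prod_cons, Equiv.Perm.mul_apply, cond_false]
      rw [iht]
      have := perm_false L hL hja (by omega) (by omega)
      exact ((Equiv.Perm.eq_inv_iff_eq).mpr this).symm
    · simp only [List.map_cons, List.prod_cons, Equiv.Perm.mul_apply, cond_true]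
      rw [iht]
      exact perm_true L hL hja (by omega) (by omega)

end Stmt16Aux



/-- For every nonidentity element `w` of the free group on `n ≥ 1` generators, there are
a positive integer `m` and permutations `f_1, …, f_n ∈ Sym(Fin m)` such that the image of
`w` under the induced homomorphism `FreeGroup (Fin n) →* Sym(Fin m)` is not the
identity. -/
theorem stmt_16 (n : ℕ) (hn : 0 < n) (w : FreeGroup (Fin n)) (hw : w ≠ 1) :
    ∃ (m : ℕ), 0 < m ∧ ∃ f : Fin n → Equiv.Perm (Fin m),
      FreeGroup.lift f w ≠ 1 := by
  classical
  have hL : FreeGroup.reduce w.toWord = w.toWord := FreeGroup.reduce_toWord w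
  have hne : w.toWord ≠ [] := fun h => hw (FreeGroup.toWord_eq_nil_iff.mp h)
  have hlen : 0 < w.toWord.length := List.length_pos_iff.mpr hne
  refine ⟨w.toWord.length + 1, Nat.succ_pos _, Stmt16Aux.perm w.toWord hL, ?_⟩
  intro hone
  have hw' : FreeGroup.lift (Stmt16Aux.perm w.toWord hL) (FreeGroup.mk w.toWord) = 1 := by
    rw [FreeGroup.mk_toWord]; exact hone
  rw [FreeGroup.lift_mk] at hw'
  have key := Stmt16Aux.prod_drop w.toWord hL w.toWord 0 (Nat.zero_le _) (List.drop_zero (l := _))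
  rw [hw'] at key
  simp only [Equiv.Perm.one_apply] at key
  have : w.toWord.length = 0 := by
    have := (Fin.mk.injEq _ _ _ _).mp key
    omega
  omega
end

section
/- Let ι be an infinite type, let φ : ι → ℕ be a function with φ(i) ≥ 1 for all i, and suppose that for every positive integer l the set {i ∈ ι : φ(i) ≥ l} has the same cardinality as ι. Then the product group G = ∏_{i∈ι} Sym(Fin (φ i)) contains a free subgroup of rank |ι|: there is a map f : ι → G such that the induced homomorphism FreeGroup ι → G is injective. -/
universe u

namespace Stmt17

open Equiv Sum

variable {α : Type*}

noncomputable def mix (D R : Set α) (g h : α → α) : α ⊕ α → α ⊕ α := fun z =>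
  haveI := Classical.dec
  match z with
  | .inl x => if x ∈ D then .inl (g x) else if x ∈ R then .inr x else .inl x
  | .inr y => if y ∈ R then .inr (h y) else if y ∈ D then .inl y else .inr y

theorem mix_li (D R : Set α) (g h : α → α)
    (h12 : ∀ x ∈ D, g x ∈ R ∧ h (g x) = x) (h34 : ∀ y ∈ R, h y ∈ D ∧ g (h y) = y) :
    Function.LeftInverse (mix R D h g) (mix D R g h) := by
  classical
  intro z
  match z with
  | .inl x =>
    by_cases hD : x ∈ D
    · obtain ⟨hR, hgh⟩ := h12 x hD
      simp [mix, hD, hR, hgh]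
    · by_cases hR : x ∈ R
      · simp [mix, hD, hR]
      · simp [mix, hD, hR]
  | .inr y =>
    by_cases hR : y ∈ R
    · obtain ⟨hD, hhg⟩ := h34 y hR
      simp [mix, hR, hD, hhg]
    · by_cases hD : y ∈ D
      · simp [mix, hR, hD]
      · simp [mix, hR, hD]

noncomputable def mixPerm (D R : Set α) (g h : α → α)
    (h12 : ∀ x ∈ D, g x ∈ R ∧ h (g x) = x) (h34 : ∀ y ∈ R, h y ∈ D ∧ g (h y) = y) :
    Equiv.Perm (α ⊕ α) :=
  ⟨mix D R g h, mix R D h g, mix_li D R g h h12 h34, mix_li R D h g h34 h12⟩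

theorem mixPerm_apply_inl (D R : Set α) (g h : α → α) (h12) (h34) {x : α} (hx : x ∈ D) :
    mixPerm D R g h h12 h34 (.inl x) = .inl (g x) := by
  classical
  show mix D R g h (.inl x) = .inl (g x)
  simp [mix, hx]

theorem mixPerm_inv_apply_inl (D R : Set α) (g h : α → α) (h12) (h34) {y : α} (hy : y ∈ R) :
    (mixPerm D R g h h12 h34)⁻¹ (.inl y) = .inl (h y) := by
  classical
  show mix R D h g (.inl y) = .inl (h y)
  simp [mix, hy]

/-! ### Permutations from a reduced word -/

section Word

variable {ι : Type u} (L : List (ι × Bool)) (a : ι)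

/-- "Domain" condition: the point `x` should move (down if the `(x-1)`-st letter is `(a, true)`,
up if the `x`-th letter is `(a, false)`). -/
def PA (x : ℕ) : Prop := x ≠ 0 ∧ L[x-1]? = some (a, true)
def PB (x : ℕ) : Prop := L[x]? = some (a, false)
def QA (y : ℕ) : Prop := y ≠ 0 ∧ L[y-1]? = some (a, false)
def QB (y : ℕ) : Prop := L[y]? = some (a, true)

noncomputable def gN (x : ℕ) : ℕ :=
  haveI := Classical.dec; if PA L a x then x - 1 else min (x+1) L.length
noncomputable def hN (y : ℕ) : ℕ :=
  haveI := Classical.dec; if QA L a y then y - 1 else min (y+1) L.length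

theorem gN_le {x : ℕ} : gN L a x ≤ L.length := by
  classical
  unfold gN
  split
  · rename_i h
    have := (List.getElem?_eq_some_iff.mp h.2).1
    omega
  · omega

theorem hN_le {y : ℕ} : hN L a y ≤ L.length := by
  classical
  unfold hN
  split
  · rename_i h
    have := (List.getElem?_eq_some_iff.mp h.2).1
    omega
  · omega

variable (hred : ∀ (j : ℕ) (b : ι) (c d : Bool), L[j]? = some (b,c) → L[j+1]? = some (b,d) → c = d)

/-- The `Fin`-valued versions. -/
noncomputable def gF (x : Fin (L.length + 1)) : Fin (L.length + 1) :=
  ⟨gN L a x.1, Nat.lt_succ_of_le (gN_le L a)⟩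
noncomputable def hF (y : Fin (L.length + 1)) : Fin (L.length + 1) :=
  ⟨hN L a y.1, Nat.lt_succ_of_le (hN_le L a)⟩

def Dset : Set (Fin (L.length + 1)) := {x | PA L a x.1 ∨ PB L a x.1}
def Rset : Set (Fin (L.length + 1)) := {y | QA L a y.1 ∨ QB L a y.1}

include hred

theorem compatD : ∀ x ∈ Dset L a, gF L a x ∈ Rset L a ∧ hF L a (gF L a x) = x := by
  classical
  rintro x (⟨hx0, hget⟩ | hget)
  · -- PA case: move down, `L[x-1] = (a, true)`
    have hlt : x.1 - 1 < L.length := (List.getElem?_eq_some_iff.mp hget).1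
    have hg : gN L a x.1 = x.1 - 1 := if_pos ⟨hx0, hget⟩
    have hgF : (gF L a x).1 = x.1 - 1 := by simp [gF, hg]
    have hmem : gF L a x ∈ Rset L a := by
      right
      show L[(gF L a x).1]? = some (a, true)
      rw [hgF]
      exact hget
    refine ⟨hmem, ?_⟩
    have hnQA : ¬ QA L a (x.1 - 1) := by
      rintro ⟨h0, hget'⟩
      have : (x.1 - 1 - 1) + 1 = x.1 - 1 := by omega
      have := hred (x.1 - 1 - 1) a false true hget' (by rw [this]; exact hget)
      simp at this
    have hh : hN L a (x.1 - 1) = x.1 := by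
      unfold hN
      rw [if_neg hnQA]
      omega
    apply Fin.ext
    simp [hF, gF, hg, hh]
  · -- PB case: move up, `L[x] = (a, false)`
    have hlt : x.1 < L.length := (List.getElem?_eq_some_iff.mp hget).1
    have hnPA : ¬ PA L a x.1 := by
      rintro ⟨h0, hget'⟩
      have : (x.1 - 1) + 1 = x.1 := by omega
      have := hred (x.1 - 1) a true false hget' (by rw [this]; exact hget)
      simp at this
    have hg : gN L a x.1 = x.1 + 1 := by
      unfold gN
      rw [if_neg hnPA]
      omega
    have hQA : QA L a (x.1 + 1) := ⟨by omega, by simp only [Nat.add_sub_cancel]; exact hget⟩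
    refine ⟨Or.inl (by simpa [Rset, gF, hg] using hQA), ?_⟩
    have hh : hN L a (x.1 + 1) = x.1 := by
      unfold hN
      rw [if_pos hQA]
      omega
    apply Fin.ext
    simp [hF, gF, hg, hh]

theorem compatR : ∀ y ∈ Rset L a, hF L a y ∈ Dset L a ∧ gF L a (hF L a y) = y := by
  classical
  rintro y (⟨hy0, hget⟩ | hget)
  · have hlt : y.1 - 1 < L.length := (List.getElem?_eq_some_iff.mp hget).1
    have hh : hN L a y.1 = y.1 - 1 := if_pos ⟨hy0, hget⟩
    have hhF : (hF L a y).1 = y.1 - 1 := by simp [hF, hh]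
    have hmem : hF L a y ∈ Dset L a := by
      right
      show L[(hF L a y).1]? = some (a, false)
      rw [hhF]
      exact hget
    refine ⟨hmem, ?_⟩
    have hnPA : ¬ PA L a (y.1 - 1) := by
      rintro ⟨h0, hget'⟩
      have : (y.1 - 1 - 1) + 1 = y.1 - 1 := by omega
      have := hred (y.1 - 1 - 1) a true false hget' (by rw [this]; exact hget)
      simp at this
    have hg : gN L a (y.1 - 1) = y.1 := by
      unfold gN
      rw [if_neg hnPA]
      omega
    apply Fin.ext
    simp [hF, gF, hh, hg]
  · have hlt : y.1 < L.length := (List.getElem?_eq_some_iff.mp hget).1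
    have hnQA : ¬ QA L a y.1 := by
      rintro ⟨h0, hget'⟩
      have : (y.1 - 1) + 1 = y.1 := by omega
      have := hred (y.1 - 1) a false true hget' (by rw [this]; exact hget)
      simp at this
    have hh : hN L a y.1 = y.1 + 1 := by
      unfold hN
      rw [if_neg hnQA]
      omega
    have hPA : PA L a (y.1 + 1) := ⟨by omega, by simp only [Nat.add_sub_cancel]; exact hget⟩
    refine ⟨Or.inl (by simpa [Dset, hF, hh] using hPA), ?_⟩
    have hg : gN L a (y.1 + 1) = y.1 := by
      unfold gN
      rw [if_pos hPA]
      omega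
    apply Fin.ext
    simp [hF, gF, hh, hg]

/-- The permutation associated to the generator `a`, relative to the reduced word `L`. -/
noncomputable def sig : Equiv.Perm (Fin (L.length + 1) ⊕ Fin (L.length + 1)) :=
  mixPerm (Dset L a) (Rset L a) (gF L a) (hF L a) (compatD L a hred) (compatR L a hred)

theorem sig_move_true {j : ℕ} (hj : L[j]? = some (a, true))
    (h1 : j + 1 < L.length + 1) (h2 : j < L.length + 1) :
    sig L a hred (.inl ⟨j+1, h1⟩) = .inl ⟨j, h2⟩ := by
  classical
  have hPA : PA L a (j+1) := ⟨by omega, by simpa using hj⟩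
  have hmem : (⟨j+1, h1⟩ : Fin (L.length + 1)) ∈ Dset L a := Or.inl hPA
  have key := mixPerm_apply_inl (Dset L a) (Rset L a) (gF L a) (hF L a)
    (compatD L a hred) (compatR L a hred) hmem
  rw [sig, key]
  congr 1
  apply Fin.ext
  show gN L a (j+1) = j
  unfold gN
  rw [if_pos hPA]
  omega

theorem sig_move_false {j : ℕ} (hj : L[j]? = some (a, false))
    (h1 : j + 1 < L.length + 1) (h2 : j < L.length + 1) :
    (sig L a hred)⁻¹ (.inl ⟨j+1, h1⟩) = .inl ⟨j, h2⟩ := by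
  classical
  have hQA : QA L a (j+1) := ⟨by omega, by simpa using hj⟩
  have hmem : (⟨j+1, h1⟩ : Fin (L.length + 1)) ∈ Rset L a := Or.inl hQA
  have key := mixPerm_inv_apply_inl (Dset L a) (Rset L a) (gF L a) (hF L a)
    (compatD L a hred) (compatR L a hred) hmem
  rw [sig, key]
  congr 1
  apply Fin.ext
  show hN L a (j+1) = j
  unfold hN
  rw [if_pos hQA]
  omega

end Word


section Eval

variable {ι : Type u} (L : List (ι × Bool))
variable (hred : ∀ (j : ℕ) (b : ι) (c d : Bool), L[j]? = some (b,c) → L[j+1]? = some (b,d) → c = d)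

theorem eval_drop : ∀ (m j : ℕ) (hjm : j + m = L.length),
    (((L.drop j).map (fun x => cond x.2 (sig L x.1 hred) (sig L x.1 hred)⁻¹)).prod)
        (.inl ⟨L.length, Nat.lt_succ_self _⟩)
      = .inl ⟨j, by omega⟩ := by
  intro m
  induction m with
  | zero =>
    intro j hjm
    have hj : j = L.length := by omega
    subst hj
    simp [List.drop_length]
  | succ m ih =>
    intro j hjm
    have hjlt : j < L.length := by omega
    rw [List.drop_eq_getElem_cons hjlt]
    rw [List.map_cons, List.prod_cons, Equiv.Perm.mul_apply]
    rw [ih (j+1) (by omega)]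
    have hget : L[j]? = some L[j] := List.getElem?_eq_getElem hjlt
    generalize h : L[j] = p at hget ⊢
    obtain ⟨a, c⟩ := p
    cases c
    · simpa only [cond_false] using sig_move_false L a hred hget _ _
    · simpa only [cond_true] using sig_move_true L a hred hget _ _

end Eval


/-- Free groups are residually "symmetric groups": any nontrivial element survives in some
homomorphism to a finite symmetric group. -/
theorem detect {ι : Type u} (w : FreeGroup ι) :
    ∃ (n : ℕ) (ρ : FreeGroup ι →* Equiv.Perm (Fin n)), w ≠ 1 → ρ w ≠ 1 := by
  classical
  by_cases hw : w = 1
  · exact ⟨0, 1, fun h => absurd hw h⟩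
  set L := w.toWord with hL
  have hredL : FreeGroup.reduce L = L := FreeGroup.reduce_toWord w
  have hred : ∀ (j : ℕ) (b : ι) (c d : Bool),
      L[j]? = some (b,c) → L[j+1]? = some (b,d) → c = d := by
    intro j b c d h1 h2
    by_contra hcd
    have hd : d = !c := by cases c <;> cases d <;> simp_all
    subst hd
    have hj1 : j < L.length := (List.getElem?_eq_some_iff.mp h1).1
    have hj2 : j + 1 < L.length := (List.getElem?_eq_some_iff.mp h2).1
    have e1 : L[j] = (b, c) :=
      Option.some.inj ((List.getElem?_eq_getElem hj1).symm.trans h1)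
    have e2 : L[j+1] = (b, !c) :=
      Option.some.inj ((List.getElem?_eq_getElem hj2).symm.trans h2)
    have hdecomp : L = L.take j ++ (b, c) :: (b, !c) :: L.drop (j + 2) := by
      conv_lhs => rw [← List.take_append_drop j L]
      congr 1
      rw [List.drop_eq_getElem_cons hj1, List.drop_eq_getElem_cons hj2, e1, e2]
    exact FreeGroup.reduce.not (hredL.trans hdecomp)
  set ρ₀ : FreeGroup ι →* Equiv.Perm (Fin (L.length+1) ⊕ Fin (L.length+1)) :=
    FreeGroup.lift (fun a => sig L a hred) with hρ₀
  have heval : ρ₀ w (.inl ⟨L.length, Nat.lt_succ_self _⟩) = .inl ⟨0, by omega⟩ := by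
    have hw' : w = FreeGroup.mk L := (FreeGroup.mk_toWord (x := w)).symm
    rw [hρ₀]
    conv_lhs => rw [hw']
    rw [FreeGroup.lift_mk]
    have := eval_drop L hred L.length 0 (by omega)
    rw [List.drop_zero] at this
    exact this
  have hne : ρ₀ w ≠ 1 := by
    intro h
    rw [h, Equiv.Perm.one_apply] at heval
    have hlen : L.length = 0 := by
      have h2 := congrArg (fun z => Sum.elim Fin.val Fin.val z) heval
      simpa using h2
    have hnil : L = [] := List.eq_nil_of_length_eq_zero hlen
    exact hw (FreeGroup.toWord_eq_nil_iff.mp (hL ▸ hnil))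
  refine ⟨_, (Equiv.Perm.viaEmbeddingHom finSumFinEquiv.toEmbedding).comp ρ₀, fun _ h => ?_⟩
  exact hne (Equiv.Perm.viaEmbeddingHom_injective finSumFinEquiv.toEmbedding
    (by rw [MonoidHom.comp_apply] at h; rw [h, map_one]))


open Cardinal in
/-- Greedy transfinite matching: if each `N b` has at least `#ι` elements and `#β ≤ #ι`,
one can injectively pick `θ b ∈ N b`. -/
theorem exists_matching {β ι : Type u} (N : β → Set ι)
    (hN : ∀ b, #ι ≤ #(N b)) (hβ : #β ≤ #ι) :
    ∃ θ : β → ι, Function.Injective θ ∧ ∀ b, θ b ∈ N b := by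
  classical
  set γ := (#ι).ord.ToType with hγ
  have hβγ : #β ≤ #γ := by
    rw [hγ, Cardinal.mk_toType, Cardinal.card_ord]
    exact hβ
  obtain ⟨e⟩ := (Cardinal.le_def β γ).mp hβγ
  set N' : γ → Set ι := fun x => if h : ∃ b, e b = x then N h.choose else Set.univ with hN'def
  have hN' : ∀ x, #ι ≤ #(N' x) := by
    intro x
    rw [hN'def]
    dsimp only
    split
    · exact hN _
    · rw [Cardinal.mk_univ]
  have hIio : ∀ x : γ, #(Set.Iio x) < #ι := fun x => Cardinal.mk_Iio_ord_toType x
  have key : ∀ (x : γ) (rec : ∀ y, y < x → ι),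
      (N' x \ Set.range (fun y : Set.Iio x => rec y.1 y.2)).Nonempty := by
    intro x rec
    rw [Set.diff_nonempty]
    intro hsub
    have h1 : #ι ≤ #(Set.range (fun y : Set.Iio x => rec y.1 y.2)) :=
      le_trans (hN' x) (Cardinal.mk_le_mk_of_subset hsub)
    have h2 : #(Set.range (fun y : Set.Iio x => rec y.1 y.2)) ≤ #(Set.Iio x) :=
      Cardinal.mk_range_le
    exact absurd (lt_of_le_of_lt (le_trans h1 h2) (hIio x)) (lt_irrefl _)
  have wf : WellFounded ((· < ·) : γ → γ → Prop) := IsWellFounded.wf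
  set F : ∀ x : γ, (∀ y, y < x → ι) → ι := fun x rec => (key x rec).some with hF
  set t : γ → ι := fun x => WellFounded.fix wf F x with ht
  have hteq : ∀ x, t x = F x (fun y _ => t y) := fun x => WellFounded.fix_eq wf F x
  have hmem : ∀ x, t x ∈ N' x \ Set.range (fun y : Set.Iio x => t y.1) := by
    intro x
    rw [hteq x]
    exact (key x (fun y _ => t y)).some_mem
  have htinj : Function.Injective t := by
    intro x y hxy
    rcases lt_trichotomy x y with h | h | h
    · exact absurd (Set.mem_range.mpr ⟨⟨x, h⟩, hxy⟩) (fun hc => (hmem y).2 hc)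
    · exact h
    · exact absurd (Set.mem_range.mpr ⟨⟨y, h⟩, hxy.symm⟩) (fun hc => (hmem x).2 hc)
  refine ⟨fun b => t (e b), htinj.comp e.injective, fun b => ?_⟩
  have h1 : t (e b) ∈ N' (e b) := (hmem (e b)).1
  have hex : ∃ b', e b' = e b := ⟨b, rfl⟩
  have h2 : N' (e b) = N b := by
    rw [hN'def]
    simp only
    rw [dif_pos hex]
    exact congrArg N (e.injective hex.choose_spec)
  rwa [h2] at h1

end Stmt17

/-- Let `ι` be infinite and `φ : ι → ℕ` take positive values, with
`#{i : φ i ≥ l} = #ι` for every positive integer `l`. Then the product group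
`∏ i, Sym(Fin (φ i))` contains a free subgroup of rank `#ι`. -/
theorem stmt_17 (ι : Type u) [Infinite ι] (φ : ι → ℕ) (hφ1 : ∀ i, 1 ≤ φ i)
    (hφ : ∀ l : ℕ, 0 < l → Cardinal.mk {i : ι // l ≤ φ i} = Cardinal.mk ι) :
    ∃ f : ι → (∀ i, Equiv.Perm (Fin (φ i))),
      Function.Injective (FreeGroup.lift f) := by
  classical
  choose nn ρ hρ using fun w : FreeGroup ι => Stmt17.detect w
  have haleph : Cardinal.aleph0 ≤ Cardinal.mk ι := Cardinal.infinite_iff.mp inferInstance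
  have hcard : Cardinal.mk (FreeGroup ι) ≤ Cardinal.mk ι := by
    have h1 : Cardinal.mk (FreeGroup ι) ≤ Cardinal.mk (List (ι × Bool)) :=
      Cardinal.mk_le_of_injective FreeGroup.toWord_injective
    have h2 : Cardinal.mk (List (ι × Bool)) = Cardinal.mk (ι × Bool) :=
      Cardinal.mk_list_eq_mk _
    have h3 : Cardinal.mk (ι × Bool) = Cardinal.mk ι := by
      rw [Cardinal.mk_prod, Cardinal.mk_bool, Cardinal.lift_uzero]
      simp only [Cardinal.lift_ofNat]
      exact Cardinal.mul_eq_left haleph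
        (le_trans (by exact_mod_cast (Cardinal.nat_lt_aleph0 2).le) haleph) (by norm_num)
    calc Cardinal.mk (FreeGroup ι) ≤ _ := h1
      _ = _ := h2
      _ = _ := h3
  have hN : ∀ w : FreeGroup ι, Cardinal.mk ι ≤ Cardinal.mk ({i : ι | nn w ≤ φ i} : Set ι) := by
    intro w
    cases hnw : nn w with
    | zero =>
      have huniv : ({i : ι | 0 ≤ φ i} : Set ι) = Set.univ := by ext i; simp
      rw [huniv, Cardinal.mk_univ]
    | succ l =>
      exact (hφ (l+1) (Nat.succ_pos l)).symm.le
  obtain ⟨θ, θinj, hθ⟩ := Stmt17.exists_matching (fun w => {i : ι | nn w ≤ φ i}) hN hcard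
  set G : ∀ i : ι, FreeGroup ι →* Equiv.Perm (Fin (φ i)) := fun i =>
    if h : ∃ w, θ w = i then
      (Equiv.Perm.viaEmbeddingHom
        (Fin.castLEEmb (show nn h.choose ≤ φ i by
          have hmm := hθ h.choose
          rw [h.choose_spec] at hmm
          exact hmm))).comp (ρ h.choose)
    else 1 with hG
  set f : ι → (∀ i, Equiv.Perm (Fin (φ i))) := fun j i => G i (FreeGroup.of j) with hf
  refine ⟨f, ?_⟩
  rw [injective_iff_map_eq_one]
  intro w hw1
  by_contra hw
  have hcomm : (Pi.evalMonoidHom (fun i => Equiv.Perm (Fin (φ i))) (θ w)).comp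
      (FreeGroup.lift f) = G (θ w) := by
    apply FreeGroup.ext_hom
    intro a
    simp [hf]
  have h1 : G (θ w) w = 1 := by
    rw [← hcomm]
    simp [MonoidHom.comp_apply, hw1]
  have hex : ∃ w', θ w' = θ w := ⟨w, rfl⟩
  have hch : hex.choose = w := θinj hex.choose_spec
  rw [hG] at h1
  simp only at h1
  rw [dif_pos hex] at h1
  rw [MonoidHom.comp_apply] at h1
  have h2 : ρ hex.choose w = 1 :=
    Equiv.Perm.viaEmbeddingHom_injective _ (by rw [h1, map_one])
  have h3 : ρ hex.choose hex.choose = 1 := (congrArg (ρ hex.choose) hch).trans h2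
  exact hρ hex.choose (by rw [hch]; exact hw) h3
end

section
/- Let F be the free group on countably many generators and let κ be an infinite cardinal. Then the direct product F^κ contains a free subgroup of rank 2^κ: for any type ι of cardinality κ there is a type σ of cardinality 2^κ and a map f : σ → (ι → F) such that the induced homomorphism FreeGroup σ → ∏_{i∈ι} F is injective. -/
universe u

open Function

lemma freeGroup_mem_finite_range {α : Type*} (w : FreeGroup α) :
    ∃ (T : Finset α) (w' : FreeGroup {x // x ∈ T}),
      FreeGroup.map (Subtype.val) w' = w := by
  classical
  rcases w with ⟨L⟩
  refine ⟨(L.map Prod.fst).toFinset,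
    FreeGroup.mk (L.attach.map fun p =>
      (⟨p.1.1, by simpa [List.mem_toFinset] using List.mem_map_of_mem (f := Prod.fst) p.2⟩, p.1.2)), ?_⟩
  rw [FreeGroup.quot_mk_eq_mk, FreeGroup.map.mk]
  congr 1
  simp [List.map_map, Function.comp_def]
  exact List.attach_map_subtype_val L

lemma freeGroup_map_ne_one {α β : Type*} {h : α → β} (hinj : Injective h)
    {w : FreeGroup α} (hw : w ≠ 1) : FreeGroup.map h w ≠ 1 := by
  classical
  have hne : Nonempty α := by
    have := FreeGroup.toWord_eq_nil_iff.not.mpr hw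
    rcases hd : w.toWord with _ | ⟨p, _⟩
    · exact absurd hd this
    · exact ⟨p.1⟩
  obtain ⟨g, hg⟩ := hinj.hasLeftInverse
  intro h1
  apply hw
  have : FreeGroup.map g (FreeGroup.map h w) = w := by
    rw [FreeGroup.map.comp]
    have hgh : g ∘ h = id := funext hg
    rw [hgh]
    exact FreeGroup.map.id w
  rw [h1, map_one] at this
  exact this.symm

lemma freeGroup_lift_comp_map {α β G : Type*} [Group G] (g : α → β)
    (f : β → G) (w : FreeGroup α) :
    FreeGroup.lift f (FreeGroup.map g w) = FreeGroup.lift (f ∘ g) w := by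
  have : (FreeGroup.lift f).comp (FreeGroup.map g) = FreeGroup.lift (f ∘ g) := by
    apply FreeGroup.ext_hom
    intro a
    simp
  exact DFunLike.congr_fun this w

/-- (Bergman) Let `F = FreeGroup ℕ` be the free group on countably many generators and
let `κ = #ι` be an infinite cardinal. Then the direct product `F^κ = (ι → F)` contains a
free subgroup of rank `2^κ`. -/
theorem stmt_18 (κ : Cardinal.{u}) (hκ : Cardinal.aleph0 ≤ κ)
    (ι : Type u) (hι : Cardinal.mk ι = κ) :
    ∃ (σ : Type u) (f : σ → (ι → FreeGroup ℕ)),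
      Cardinal.mk σ = 2 ^ κ ∧ Function.Injective (FreeGroup.lift f) := by
  classical
  subst hι
  have hinf : Infinite ι := Cardinal.infinite_iff.mpr hκ
  obtain ⟨e⟩ : Nonempty (Finset ι ≃ ι) := Cardinal.eq.mp (Cardinal.mk_finset_of_infinite ι)
  choose enc hencinj using fun A : Finset ι =>
    Countable.exists_injective_nat ({x // x ∈ A} → Bool)
  set f : (ι → Bool) → (ι → FreeGroup ℕ) := fun s i =>
    FreeGroup.of (enc (e.symm i) (fun j => s j.val)) with hf
  refine ⟨ι → Bool, f, ?_, ?_⟩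
  · simp [Cardinal.mk_arrow]
  · rw [injective_iff_map_eq_one]
    intro w
    rw [← not_imp_not]
    intro hw
    obtain ⟨T, w', rfl⟩ := freeGroup_mem_finite_range w
    have hw' : w' ≠ 1 := fun h => hw (by rw [h, map_one])
    choose d hd using fun (s t : ι → Bool) (h : s ≠ t) => Function.ne_iff.mp h
    set A : Finset ι :=
      T.biUnion (fun s => T.biUnion (fun t => if h : s ≠ t then {d s t h} else ∅)) with hA
    have hdA : ∀ s ∈ T, ∀ t ∈ T, ∀ (h : s ≠ t), d s t h ∈ A := by
      intro s hs t ht h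
      rw [hA]
      rw [Finset.mem_biUnion]
      exact ⟨s, hs, Finset.mem_biUnion.mpr
        ⟨t, ht, by rw [dif_pos h]; exact Finset.mem_singleton_self _⟩⟩
    set hT : {x // x ∈ T} → ℕ := fun t => enc A (fun j => t.val j.val) with hhT
    have hTinj : Function.Injective hT := by
      intro t₁ t₂ h12
      have h12' := hencinj A h12
      apply Subtype.ext
      by_contra hne
      have hm : d t₁.val t₂.val hne ∈ A := hdA _ t₁.2 _ t₂.2 hne
      exact hd t₁.val t₂.val hne (congrFun h12' ⟨_, hm⟩)
    set i₀ := e A with hi₀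
    have heval : FreeGroup.lift f (FreeGroup.map Subtype.val w') i₀ = FreeGroup.map hT w' := by
      rw [freeGroup_lift_comp_map]
      have h1 : (Pi.evalMonoidHom (fun _ : ι => FreeGroup ℕ) i₀).comp
          (FreeGroup.lift (f ∘ (Subtype.val : {x // x ∈ T} → (ι → Bool)))) =
          FreeGroup.lift (fun t : {x // x ∈ T} => f t.val i₀) := by
        apply FreeGroup.ext_hom; intro a; simp
      have h2 := DFunLike.congr_fun h1 w'
      refine h2.trans ?_
      rw [FreeGroup.map_eq_lift]
      have h3 : (fun t : {x // x ∈ T} => f t.val i₀) = FreeGroup.of ∘ hT := by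
        funext t
        simp only [hf, hhT, hi₀, Function.comp_apply]
        rw [Equiv.symm_apply_apply]
      rw [h3]
    intro h1
    apply freeGroup_map_ne_one hTinj hw'
    rw [← heval, h1]
    rfl
end

section
/- Let ι be an infinite type, let φ : ι → ℕ be a function with φ(i) ≥ 1 for all i, and suppose that for every positive integer l the set {i ∈ ι : φ(i) ≥ l} has the same cardinality as ι. Endow G = ∏_{i∈ι} Sym(Fin (φ i)) with the product topology arising from the discrete topology on each factor Sym(Fin (φ i)). Then G contains a dense free subgroup of rank 2^|ι|: there is a type σ of cardinality 2^|ι| and a map f : σ → G such that the induced homomorphism FreeGroup σ → G is injective and the image subgroup is dense. In particular, G is almost 2^|ι|-free. -/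
universe u v

open Cardinal

lemma exists_sdr {ι : Type u} [Infinite ι] (S : ℕ → Set ι) (hS : ∀ L, #(S L) = #ι) :
    ∃ Φ : ℕ × ι → ι, Function.Injective Φ ∧ ∀ p, Φ p ∈ S p.1 := by
  classical
  set κ := #ι with hκ
  have hcard : #(ℕ × ι) = κ := by
    rw [mk_prod, mk_nat, lift_aleph0, lift_uzero]
    exact mul_eq_right (aleph0_le_mk ι) (aleph0_le_mk ι) aleph0_ne_zero
  obtain ⟨E⟩ : Nonempty (ℕ × ι ≃ κ.ord.ToType) :=
    Cardinal.eq.1 (hcard.trans (mk_ord_toType κ).symm)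
  haveI hwo : IsWellOrder κ.ord.ToType ((· < ·) : κ.ord.ToType → κ.ord.ToType → Prop) :=
    isWellOrder_lt
  have key : ∀ (x : κ.ord.ToType) (prev : ∀ y, y < x → ι),
      (S (E.symm x).1 \ Set.range (fun y : {y // y < x} => prev y.1 y.2)).Nonempty := by
    intro x prev
    rw [Set.nonempty_iff_ne_empty]
    intro h
    have hsub := Set.diff_eq_empty.1 h
    have h1 : κ ≤ #(Set.range fun y : {y // y < x} => prev y.1 y.2) :=
      (hS (E.symm x).1).symm.le.trans (mk_le_mk_of_subset hsub)
    have h3 : #{y : κ.ord.ToType // y < x} < κ := by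
      have h4 : Ordinal.typein ((· < ·) : κ.ord.ToType → κ.ord.ToType → Prop) x < κ.ord := by
        have := Ordinal.typein_lt_type ((· < ·) : κ.ord.ToType → κ.ord.ToType → Prop) x
        rwa [Ordinal.type_toType] at this
      convert Cardinal.lt_ord.1 h4 using 1
      exact (Ordinal.card_typein x).symm
    exact lt_irrefl κ (h1.trans_lt (mk_range_le.trans_lt h3))
  let F : κ.ord.ToType → ι :=
    IsWellFounded.fix (· < ·) (fun x prev => (key x prev).choose)
  have hF : ∀ x, F x ∈ S (E.symm x).1 \ Set.range (fun y : {y // y < x} => F y.1) := by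
    intro x
    have heq : F x = (key x (fun y _ => F y)).choose :=
      IsWellFounded.fix_eq _ _ x
    rw [heq]
    exact (key x (fun y _ => F y)).choose_spec
  have hFinj : Function.Injective F := by
    intro x y hxy
    by_contra hne
    rcases lt_or_gt_of_ne hne with h | h
    · exact (hF y).2 ⟨⟨x, h⟩, hxy⟩
    · exact (hF x).2 ⟨⟨y, h⟩, hxy.symm⟩
  refine ⟨F ∘ E, hFinj.comp E.injective, fun p => ?_⟩
  have := (hF (E p)).1
  rwa [E.symm_apply_apply] at this






section RF

variable {α : Type v}

set_option maxHeartbeats 2000000 in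
lemma perm_word_lemma (t : List (α × Bool)) (hn : t ≠ [])
    (hred : ∀ p (h1 : p < t.length) (h2 : p + 1 < t.length),
      (t[p]).1 = (t[p+1]).1 → (t[p]).2 = (t[p+1]).2) :
    ∃ π : α → Equiv.Perm (Fin (t.length + 1)),
      FreeGroup.lift π (FreeGroup.mk t) ≠ 1 := by
  classical
  set n := t.length with hnlen
  have hn0 : 0 < n := List.length_pos_iff.2 hn
  -- up-moves and down-moves for each letter
  set U : α → Set ℕ := fun a => {k | ∃ p, ∃ _ : p < n, t[p]'(by omega) = (a, true) ∧ k = n - p - 1}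
    with hU
  set D : α → Set ℕ := fun a => {k | ∃ p, ∃ _ : p < n, t[p]'(by omega) = (a, false) ∧ k = n - p}
    with hD
  have fU : ∀ a k, k ∈ U a → k < n := by
    rintro a k ⟨p, hp, -, rfl⟩; omega
  have fD : ∀ a k, k ∈ D a → 1 ≤ k ∧ k ≤ n := by
    rintro a k ⟨p, hp, -, rfl⟩; omega
  have disj : ∀ a k, k ∈ U a → k ∈ D a → False := by
    rintro a k ⟨p, hp, hpt, rfl⟩ ⟨q, hq, hqt, hk⟩
    have hq1 : q = p + 1 := by omega
    subst hq1
    have := hred p (by omega) (by omega) (by rw [hpt, hqt])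
    rw [hpt, hqt] at this
    simp at this
  set τ : α → ℕ → ℕ := fun a k => if k ∈ U a then k + 1 else k - 1 with hτ
  have τinj : ∀ a k k', k ∈ U a ∪ D a → k' ∈ U a ∪ D a → τ a k = τ a k' → k = k' := by
    intro a k k' hk hk' heq
    have hcase : ∀ m m', m ∈ U a → m' ∈ D a → τ a m = τ a m' → False := by
      rintro m m' hm hm' he
      rw [hτ] at he
      simp only [if_pos hm, if_neg (fun h => disj a m' h hm')] at he
      have hm1 := fD a m' hm'
      obtain ⟨p, hp, hpt, rfl⟩ := hm
      obtain ⟨q, hq, hqt, hq'⟩ := hm'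
      -- m' = m + 2, m = n - p - 1, m' = n - q  ⟹  p = q + 1
      have hpq : p = q + 1 := by omega
      subst hpq
      have := hred q (by omega) (by omega) (by rw [hpt, hqt])
      rw [hpt, hqt] at this
      simp at this
    rcases hk with hk | hk <;> rcases hk' with hk' | hk'
    · rw [hτ] at heq; simp only [if_pos hk, if_pos hk'] at heq; omega
    · exact (hcase k k' hk hk' heq).elim
    · exact (hcase k' k hk' hk heq.symm).elim
    · rw [hτ] at heq
      simp only [if_neg (fun h => disj a k h hk), if_neg (fun h => disj a k' h hk')] at heq
      have := fD a k hk; have := fD a k' hk'; omega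
  have τbound : ∀ a k, k ∈ U a ∪ D a → τ a k ≤ n := by
    intro a k hk
    show (if k ∈ U a then k + 1 else k - 1) ≤ n
    rcases hk with hk | hk
    · rw [if_pos hk]; exact fU a k hk
    · rw [if_neg (fun h => disj a k h hk)]; have := fD a k hk; omega
  have kbound : ∀ a k, k ∈ U a ∪ D a → k ≤ n := by
    intro a k hk
    rcases hk with hk | hk
    · exact (fU a k hk).le
    · exact (fD a k hk).2
  -- build the permutations
  have build : ∀ a, ∃ σ : Equiv.Perm (Fin (n + 1)),
      ∀ (x : Fin (n + 1)), (x : ℕ) ∈ U a ∪ D a → ((σ x : Fin (n + 1)) : ℕ) = τ a x := by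
    intro a
    set pS : Fin (n + 1) → Prop := fun x => (x : ℕ) ∈ U a ∪ D a with hpS
    set pT : Fin (n + 1) → Prop := fun x => (x : ℕ) ∈ τ a '' (U a ∪ D a) with hpT
    let Fmap : {x : Fin (n + 1) // pS x} → {x : Fin (n + 1) // pT x} := fun x =>
      ⟨⟨τ a x.1, by have := τbound a x.1 x.2; omega⟩, ⟨(x.1 : ℕ), x.2, rfl⟩⟩
    have hinj : Function.Injective Fmap := by
      rintro ⟨x, hx⟩ ⟨y, hy⟩ h
      have h' : τ a (x : ℕ) = τ a (y : ℕ) :=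
        congrArg (fun z : {x : Fin (n+1) // pT x} => (z.1 : ℕ)) h
      exact Subtype.ext (Fin.ext (τinj a _ _ hx hy h'))
    have hsurj : Function.Surjective Fmap := by
      rintro ⟨y, k, hk, hky⟩
      refine ⟨⟨⟨k, by have := kbound a k hk; omega⟩, hk⟩, ?_⟩
      exact Subtype.ext (Fin.ext hky)
    let e := Equiv.ofBijective Fmap ⟨hinj, hsurj⟩
    refine ⟨e.extendSubtype, ?_⟩
    intro x hx
    have := Equiv.extendSubtype_apply_of_mem e x hx
    rw [this]
    rfl
  choose σ hσ using build
  set g : (α × Bool) → Equiv.Perm (Fin (n + 1)) := fun l => cond l.2 (σ l.1) (σ l.1)⁻¹ with hg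
  have claim : ∀ j, ∀ hj : j ≤ n,
      (List.prod ((t.drop (n - j)).map g)) ⟨0, by omega⟩ = ⟨j, by omega⟩ := by
    intro j
    induction j with
    | zero =>
      intro _
      rw [Nat.sub_zero, show t.drop n = ([] : List (α × Bool)) from List.drop_length]
      simp
    | succ j ih =>
      intro hj
      have hjn : j ≤ n := by omega
      set p := n - j - 1 with hp
      have hpn : p < n := by omega
      have hdrop : t.drop p = t[p]'(by omega) :: t.drop (n - j) := by
        have := List.drop_eq_getElem_cons (l := t) (show p < t.length by omega)
        rw [this, show p + 1 = n - j from by omega]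
      have hstep : n - (j + 1) = p := by omega
      rw [hstep, hdrop, List.map_cons, List.prod_cons, Equiv.Perm.mul_apply, ih hjn]
      -- now apply the letter at position p to ⟨j⟩
      rcases hb : (t[p]'(by omega)).2 with _ | _
      · -- false: inverse of σ
        have hmem : (j + 1 : ℕ) ∈ D (t[p]'(by omega)).1 := by
          exact ⟨p, hpn, Prod.ext rfl hb, by omega⟩
        have happ : σ (t[p]'(by omega)).1 ⟨j + 1, by omega⟩ = ⟨j, by omega⟩ := by
          have h1 := hσ (t[p]'(by omega)).1 ⟨j + 1, by omega⟩ (Or.inr hmem)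
          have h2 : τ (t[p]'(by omega)).1 (j + 1) = j := by
            show (if (j + 1 : ℕ) ∈ U (t[p]'(by omega)).1 then j + 1 + 1 else j + 1 - 1) = j
            rw [if_neg (fun h => disj _ _ h hmem)]
            omega
          apply Fin.ext
          rw [h1]
          exact h2
        rw [hg]
        simp only [hb]
        show ((σ (t[p]'(by omega)).1)⁻¹) ⟨j, by omega⟩ = ⟨j + 1, by omega⟩
        rw [← happ, ← Equiv.Perm.mul_apply, inv_mul_cancel, Equiv.Perm.one_apply]
      · -- true
        have hmem : (j : ℕ) ∈ U (t[p]'(by omega)).1 := by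
          exact ⟨p, hpn, Prod.ext rfl hb, by omega⟩
        have h1 := hσ (t[p]'(by omega)).1 ⟨j, by omega⟩ (Or.inl hmem)
        have h2 : τ (t[p]'(by omega)).1 j = j + 1 := by
          show (if (j : ℕ) ∈ U (t[p]'(by omega)).1 then j + 1 else j - 1) = j + 1
          rw [if_pos hmem]
        rw [hg]
        simp only [hb]
        show (σ (t[p]'(by omega)).1) ⟨j, by omega⟩ = ⟨j + 1, by omega⟩
        apply Fin.ext
        rw [h1]
        exact h2
  refine ⟨σ, ?_⟩
  intro h1
  rw [FreeGroup.lift_mk] at h1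
  have hne := claim n le_rfl
  rw [Nat.sub_self, List.drop_zero] at hne
  have hmap : List.map g t = List.map (fun x => cond x.2 (σ x.1) (σ x.1)⁻¹) t := rfl
  rw [hmap, h1] at hne
  simp only [Equiv.Perm.one_apply] at hne
  have h0 : (0 : ℕ) = n := congrArg Fin.val hne
  omega

end RF

lemma exists_perm_lift_ne_one {α : Type v} (W : FreeGroup α) (hW : W ≠ 1) :
    ∃ (m : ℕ) (π : α → Equiv.Perm (Fin m)), FreeGroup.lift π W ≠ 1 := by
  classical
  set t := W.toWord with ht
  have hn : t ≠ [] := fun h => hW (FreeGroup.toWord_eq_nil_iff.1 h)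
  have hred : ∀ p (h1 : p < t.length) (h2 : p + 1 < t.length),
      (t[p]).1 = (t[p+1]).1 → (t[p]).2 = (t[p+1]).2 := by
    intro p h1 h2 heq
    by_contra hne
    have hb : (t[p+1]).2 = !(t[p]).2 := by
      cases hc : (t[p]).2 <;> cases hc' : (t[p+1]).2 <;> simp_all
    have hdec : t = t.take p ++ (t[p].1, t[p].2) :: ((t[p].1, !(t[p].2)) : α × Bool) :: t.drop (p+2) := by
      conv_lhs => rw [← List.take_append_drop p t]
      congr 1
      rw [List.drop_eq_getElem_cons h1, List.drop_eq_getElem_cons h2]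
      congr 1
      rw [show (t[p+1]'h2) = ((t[p].1, !t[p].2) : α × Bool) from Prod.ext heq.symm hb]
    exact FreeGroup.reduce.not (p := False)
      (by rw [show FreeGroup.reduce t = t from FreeGroup.reduce_toWord W, hdec]) |>.elim
  obtain ⟨π, hπ⟩ := perm_word_lemma t hn hred
  refine ⟨t.length + 1, π, ?_⟩
  rwa [show W = FreeGroup.mk t from (FreeGroup.mk_toWord).symm]

section Helpers

noncomputable def enc (m k : ℕ) : Equiv.Perm (Fin m) :=
  (Fintype.equivFin (Equiv.Perm (Fin m))).symm
    ⟨k % Fintype.card (Equiv.Perm (Fin m)), Nat.mod_lt _ Fintype.card_pos⟩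

noncomputable def encInv (m : ℕ) (π : Equiv.Perm (Fin m)) : ℕ :=
  (Fintype.equivFin (Equiv.Perm (Fin m)) π : ℕ)

lemma enc_encInv (m : ℕ) (π : Equiv.Perm (Fin m)) : enc m (encInv m π) = π := by
  unfold enc encInv
  have h1 : (⟨(Fintype.equivFin (Equiv.Perm (Fin m)) π : ℕ) % Fintype.card (Equiv.Perm (Fin m)),
      Nat.mod_lt _ Fintype.card_pos⟩ : Fin (Fintype.card (Equiv.Perm (Fin m)))) =
      Fintype.equivFin (Equiv.Perm (Fin m)) π := by
    apply Fin.ext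
    simp [Nat.mod_eq_of_lt (Fin.is_lt _)]
  rw [h1, Equiv.symm_apply_apply]

lemma lift_eval {β : Type*} {I : Type*} {Gf : I → Type*} [∀ i, Group (Gf i)]
    (f : β → ∀ i, Gf i) (W : FreeGroup β) (i : I) :
    (FreeGroup.lift f W) i = FreeGroup.lift (fun b => f b i) W := by
  have h : (Pi.evalMonoidHom Gf i).comp (FreeGroup.lift f) = FreeGroup.lift (fun b => f b i) := by
    ext b
    simp
  exact DFunLike.congr_fun h W

lemma lift_comp {β : Type*} {G H : Type*} [Group G] [Group H] (h : G →* H) (f : β → G)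
    (W : FreeGroup β) : h (FreeGroup.lift f W) = FreeGroup.lift (fun b => h (f b)) W := by
  have h2 : h.comp (FreeGroup.lift f) = FreeGroup.lift (fun b => h (f b)) := by
    ext b
    simp
  exact DFunLike.congr_fun h2 W

lemma lift_agree {β : Type*} [DecidableEq β] {G : Type*} [Group G] {f f' : β → G}
    {W : FreeGroup β} (h : ∀ l ∈ W.toWord, f l.1 = f' l.1) :
    FreeGroup.lift f W = FreeGroup.lift f' W := by
  conv_lhs => rw [← FreeGroup.mk_toWord (x := W)]
  conv_rhs => rw [← FreeGroup.mk_toWord (x := W)]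
  rw [FreeGroup.lift_mk, FreeGroup.lift_mk]
  congr 1
  apply List.map_congr_left
  intro l hl
  rw [h l hl]

end Helpers

section Main

variable {ι : Type u}

lemma main_construction [Infinite ι] (φ : ι → ℕ)
    (hφ : ∀ l : ℕ, Cardinal.mk {i : ι // l ≤ φ i} = Cardinal.mk ι) :
    ∃ g : Set ι → (∀ i, Equiv.Perm (Fin (φ i))),
      Function.Injective (FreeGroup.lift g) ∧
      ∀ (F : Finset ι) (h₀ : ∀ i, Equiv.Perm (Fin (φ i))),
        ∃ X : Set ι, ∀ i ∈ F, g X i = h₀ i := by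
  classical
  obtain ⟨Φ, hΦinj, hΦmem⟩ := exists_sdr (fun L => {i : ι | L ≤ φ i}) (fun L => hφ L)
  -- cardinal computations
  have h1 : #(Finset ι) = #ι := mk_finset_of_infinite ι
  have hκ0 : ℵ₀ ≤ #ι := aleph0_le_mk ι
  have h2 : #(Finset ι →₀ ℕ) = #ι := by
    rw [mk_finsupp_lift_of_infinite, h1, mk_nat, lift_uzero, lift_aleph0]
    exact max_eq_left hκ0
  have h2' : #(ι →₀ ℕ) = #ι := by
    rw [mk_finsupp_lift_of_infinite, mk_nat, lift_uzero, lift_aleph0]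
    exact max_eq_left hκ0
  have hAB : #(Finset ι × (Finset ι →₀ ℕ)) = #ι := by
    rw [mk_prod, h1, h2]
    simpa using mul_eq_self hκ0
  -- the pattern type for free generation
  have h3 : #((Finset ι × (Finset ι →₀ ℕ)) × ℕ) = #ι := by
    rw [mk_prod, hAB, mk_nat, lift_uzero, lift_aleph0]
    exact mul_eq_left hκ0 hκ0 aleph0_ne_zero
  obtain ⟨ρ⟩ : Nonempty (((Finset ι × (Finset ι →₀ ℕ)) × ℕ) ↪ ι) := by
    rw [← Cardinal.le_def]
    exact h3.le
  -- the pattern type for density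
  have h4 : #(Finset ι × (ι →₀ ℕ)) ≤ #(Set ι) := by
    rw [mk_prod, h1, h2', mk_set]
    calc Cardinal.lift.{u} #ι * Cardinal.lift.{u} #ι = #ι * #ι := by simp
    _ = #ι := mul_eq_self hκ0
    _ ≤ 2 ^ #ι := (cantor _).le
  obtain ⟨Ξ⟩ : Nonempty ((Finset ι × (ι →₀ ℕ)) ↪ Set ι) := by
    rw [← Cardinal.le_def]
    exact h4
  -- designated coordinates
  set θ : ℕ × ((Finset ι × (Finset ι →₀ ℕ)) × ℕ) → ι := fun q => Φ (q.1, ρ q.2) with hθ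
  have hθinj : Function.Injective θ := by
    intro q q' h
    have := hΦinj h
    have h1' : q.1 = q'.1 := congrArg (fun z : ℕ × ι => z.1) this
    have h2'' : ρ q.2 = ρ q'.2 := congrArg (fun z : ℕ × ι => z.2) this
    exact Prod.ext h1' (ρ.injective h2'')
  have hθlev : ∀ q, q.1 ≤ φ (θ q) := fun q => hΦmem (q.1, ρ q.2)
  -- decoding
  set dec1 : ι → ℕ := fun i => if h : ∃ q, θ q = i then h.choose.1 else 0 with hdec1
  set dec2 : ι → Finset ι × (Finset ι →₀ ℕ) :=
    fun i => if h : ∃ q, θ q = i then h.choose.2.1 else (∅, 0) with hdec2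
  have hdec : ∀ q, dec1 (θ q) = q.1 ∧ dec2 (θ q) = q.2.1 := by
    intro q
    have hex : ∃ q', θ q' = θ q := ⟨q, rfl⟩
    have hch : hex.choose = q := hθinj hex.choose_spec
    constructor
    · show (if h : ∃ q', θ q' = θ q then h.choose.1 else 0) = q.1
      rw [dif_pos hex, hch]
    · show (if h : ∃ q', θ q' = θ q then h.choose.2.1 else (∅, 0)) = q.2.1
      rw [dif_pos hex, hch]
  have hlev : ∀ i, dec1 i ≤ φ i := by
    intro i
    show (if h : ∃ q, θ q = i then h.choose.1 else 0) ≤ φ i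
    split_ifs with h
    · have := hθlev h.choose
      rwa [h.choose_spec] at this
    · exact Nat.zero_le _
  -- value decoding, avoiding dependent types
  set val : (i : ι) → ℕ × ℕ → Equiv.Perm (Fin (φ i)) := fun i c =>
    if h : c.1 ≤ φ i then
      Equiv.Perm.viaEmbeddingHom (Fin.castLEEmb h) (enc c.1 c.2)
    else 1 with hval
  -- the generators
  set g : Set ι → ∀ i, Equiv.Perm (Fin (φ i)) := fun X i =>
    if hc : ∃ c : Finset ι × (ι →₀ ℕ), Ξ c = X ∧ i ∈ c.1 then
      enc (φ i) (hc.choose.2 i)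
    else
      val i (dec1 i, (dec2 i).2 ((dec2 i).1.filter (fun j => j ∈ X))) with hgdef
  refine ⟨g, ?_, ?_⟩
  · -- injectivity of the lift
    rw [injective_iff_map_eq_one]
    intro W hW1
    by_contra hW
    -- residual finiteness witness
    obtain ⟨m₀, π, hπ⟩ := exists_perm_lift_ne_one W hW
    set t := W.toWord with htw
    set sF : Finset (Set ι) := (t.map Prod.fst).toFinset with hsF
    -- separating points
    have sep' : ∀ X Y : Set ι, ∃ j : ι, X ≠ Y → ¬(j ∈ X ↔ j ∈ Y) := by
      intro X Y
      by_cases h : X = Y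
      · exact ⟨Classical.arbitrary ι, fun h' => absurd h h'⟩
      · have : ∃ j, ¬(j ∈ X ↔ j ∈ Y) := by
          by_contra hcon
          push_neg at hcon
          exact h (Set.ext hcon)
        exact this.imp fun j hj _ => hj
    choose sepF hsepF using sep'
    set e : Finset ι := (sF ×ˢ sF).image (fun q => sepF q.1 q.2) with he
    have einj : ∀ X ∈ sF, ∀ Y ∈ sF,
        e.filter (fun j => j ∈ X) = e.filter (fun j => j ∈ Y) → X = Y := by
      intro X hX Y hY hfil
      by_contra hne
      have hj : sepF X Y ∈ e := Finset.mem_image.2 ⟨(X, Y), Finset.mem_product.2 ⟨hX, hY⟩, rfl⟩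
      have := hsepF X Y hne
      apply this
      constructor
      · intro hXj
        have : sepF X Y ∈ e.filter (fun j => j ∈ X) := Finset.mem_filter.2 ⟨hj, hXj⟩
        rw [hfil] at this
        exact (Finset.mem_filter.1 this).2
      · intro hYj
        have : sepF X Y ∈ e.filter (fun j => j ∈ Y) := Finset.mem_filter.2 ⟨hj, hYj⟩
        rw [← hfil] at this
        exact (Finset.mem_filter.1 this).2
    -- the code finsupp
    set u : Finset ι → ℕ := fun k =>
      if h : ∃ X ∈ sF, e.filter (fun j => j ∈ X) = k then encInv m₀ (π h.choose) else 0 with hu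
    have husupp : ∀ k, u k ≠ 0 → k ∈ sF.image (fun X => e.filter (fun j => j ∈ X)) := by
      intro k hk
      by_cases h : ∃ X ∈ sF, e.filter (fun j => j ∈ X) = k
      · obtain ⟨X, hX, hfil⟩ := h
        exact Finset.mem_image.2 ⟨X, hX, hfil⟩
      · exfalso
        apply hk
        show (if h : ∃ X ∈ sF, e.filter (fun j => j ∈ X) = k
          then encInv m₀ (π h.choose) else 0) = 0
        rw [dif_neg h]
    set v : Finset ι →₀ ℕ := Finsupp.onFinset _ u husupp with hv
    have hvval : ∀ X ∈ sF, enc m₀ (v (e.filter (fun j => j ∈ X))) = π X := by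
      intro X hX
      have hex : ∃ Y ∈ sF, e.filter (fun j => j ∈ Y) = e.filter (fun j => j ∈ X) :=
        ⟨X, hX, rfl⟩
      have hv1 : v (e.filter (fun j => j ∈ X)) =
          (if h : ∃ Y ∈ sF, e.filter (fun j => j ∈ Y) = e.filter (fun j => j ∈ X)
            then encInv m₀ (π h.choose) else 0) := rfl
      rw [hv1, dif_pos hex]
      obtain ⟨hmem, hfil⟩ := hex.choose_spec
      rw [show hex.choose = X from einj _ hmem _ hX hfil]
      exact enc_encInv _ _
    -- bad coordinates
    set Bad : Finset ι := sF.biUnion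
      (fun X => if h : ∃ c : Finset ι × (ι →₀ ℕ), Ξ c = X then h.choose.1 else ∅) with hBad
    -- choose a good designated coordinate
    have hgood : ∃ m : ℕ, θ (m₀, ((e, v), m)) ∉ Bad := by
      by_contra hcon
      push_neg at hcon
      have hinj2 : Function.Injective (fun m : ℕ => θ (m₀, ((e, v), m))) := by
        intro m m' h
        have := hθinj h
        simpa using congrArg (fun q => q.2.2) this
      have hrange : Set.range (fun m : ℕ => θ (m₀, ((e, v), m))) ⊆ (Bad : Set ι) := by
        rintro _ ⟨m, rfl⟩
        exact hcon m
      exact Set.infinite_range_of_injective hinj2 (Bad.finite_toSet.subset hrange)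
    obtain ⟨m, hm⟩ := hgood
    set i₀ : ι := θ (m₀, ((e, v), m)) with hi₀
    obtain ⟨hd1, hd2⟩ := hdec (m₀, ((e, v), m))
    have hm₀ : m₀ ≤ φ i₀ := by
      have := hθlev (m₀, ((e, v), m))
      exact this
    -- no density pattern fires at i₀ for letters of W
    have hnoc : ∀ X ∈ sF, ¬∃ c : Finset ι × (ι →₀ ℕ), Ξ c = X ∧ i₀ ∈ c.1 := by
      rintro X hX ⟨c, hcX, hic⟩
      apply hm
      rw [hBad]
      apply Finset.mem_biUnion.2
      refine ⟨X, hX, ?_⟩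
      have hex : ∃ c' : Finset ι × (ι →₀ ℕ), Ξ c' = X := ⟨c, hcX⟩
      rw [dif_pos hex]
      have : hex.choose = c := Ξ.injective (hex.choose_spec.trans hcX.symm)
      rw [this]
      exact hic
    -- value of g at i₀ on letters
    have hkey : ∀ X ∈ sF, g X i₀ =
        Equiv.Perm.viaEmbeddingHom (Fin.castLEEmb hm₀) (π X) := by
      intro X hX
      show (if hc : ∃ c : Finset ι × (ι →₀ ℕ), Ξ c = X ∧ i₀ ∈ c.1 then
          enc (φ i₀) (hc.choose.2 i₀)
        else val i₀ (dec1 i₀, (dec2 i₀).2 ((dec2 i₀).1.filter (fun j => j ∈ X)))) = _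
      rw [dif_neg (hnoc X hX)]
      show (if h : dec1 i₀ ≤ φ i₀ then
          Equiv.Perm.viaEmbeddingHom (Fin.castLEEmb h)
            (enc (dec1 i₀) ((dec2 i₀).2 ((dec2 i₀).1.filter (fun j => j ∈ X))))
        else 1) = _
      rw [hd2]
      have hgen : ∀ (d : ℕ) (hd : d = m₀) (hle : d ≤ φ i₀),
          (if h : d ≤ φ i₀ then
            Equiv.Perm.viaEmbeddingHom (Fin.castLEEmb h)
              (enc d (v (e.filter (fun j => j ∈ X))))
          else 1) =
          Equiv.Perm.viaEmbeddingHom (Fin.castLEEmb hm₀) (π X) := by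
        intro d hd hle
        subst hd
        rw [dif_pos hle, hvval X hX]
      exact hd1 ▸ hgen (dec1 i₀) hd1 (hlev i₀)
    -- conclude
    apply hπ
    have hev : (FreeGroup.lift g W) i₀ = 1 := by rw [hW1]; rfl
    rw [lift_eval] at hev
    have hagree : FreeGroup.lift (fun X => g X i₀) W =
        FreeGroup.lift (fun X =>
          Equiv.Perm.viaEmbeddingHom (Fin.castLEEmb hm₀) (π X)) W := by
      apply lift_agree
      intro l hl
      apply hkey
      rw [hsF]
      rw [List.mem_toFinset]
      exact List.mem_map_of_mem (f := Prod.fst) hl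
    rw [hagree, ← lift_comp] at hev
    exact (injective_iff_map_eq_one' _).1
      (Equiv.Perm.viaEmbeddingHom_injective (Fin.castLEEmb hm₀)) _ |>.1 hev
  · -- density values
    intro F h₀
    set v₀ : ι →₀ ℕ := Finsupp.onFinset F
      (fun i => if i ∈ F then encInv (φ i) (h₀ i) else 0)
      (by intro i hi
          by_contra hcon
          apply hi
          show (if i ∈ F then encInv (φ i) (h₀ i) else 0) = 0
          rw [if_neg hcon]) with hv₀
    refine ⟨Ξ (F, v₀), ?_⟩
    intro i hiF
    have hex : ∃ c : Finset ι × (ι →₀ ℕ), Ξ c = Ξ (F, v₀) ∧ i ∈ c.1 := ⟨(F, v₀), rfl, hiF⟩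
    show (if hc : ∃ c : Finset ι × (ι →₀ ℕ), Ξ c = Ξ (F, v₀) ∧ i ∈ c.1 then
        enc (φ i) (hc.choose.2 i)
      else val i (dec1 i, (dec2 i).2 ((dec2 i).1.filter (fun j => j ∈ Ξ (F, v₀))))) = h₀ i
    rw [dif_pos hex]
    have hch : hex.choose = (F, v₀) := Ξ.injective hex.choose_spec.1
    rw [hch]
    show enc (φ i) (v₀ i) = h₀ i
    have : v₀ i = encInv (φ i) (h₀ i) := by
      show (if i ∈ F then encInv (φ i) (h₀ i) else 0) = _
      rw [if_pos hiF]
    rw [this, enc_encInv]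

end Main

/-- Let `ι` be infinite and `φ : ι → ℕ` take positive values, with `#{i : φ i ≥ l} = #ι`
for every positive integer `l`. Endow `G = ∏ i, Sym(Fin (φ i))` with the product topology
of the discrete topologies. Then `G` contains a dense free subgroup of rank `2^#ι`;
in particular, `G` is almost `2^#ι`-free. -/
theorem stmt_19 (ι : Type u) [Infinite ι] (φ : ι → ℕ) (hφ1 : ∀ i, 1 ≤ φ i)
    (hφ : ∀ l : ℕ, 0 < l → Cardinal.mk {i : ι // l ≤ φ i} = Cardinal.mk ι) :
    letI : ∀ i, TopologicalSpace (Equiv.Perm (Fin (φ i))) := fun _ => ⊥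
    (∃ (σ : Type u) (f : σ → (∀ i, Equiv.Perm (Fin (φ i)))),
      Cardinal.mk σ = 2 ^ Cardinal.mk ι ∧
      Function.Injective (FreeGroup.lift f) ∧
      Dense ((FreeGroup.lift f).range : Set (∀ i, Equiv.Perm (Fin (φ i))))) ∧
    AlmostFree (∀ i, Equiv.Perm (Fin (φ i))) (2 ^ Cardinal.mk ι) := by
  classical
  letI : ∀ i, TopologicalSpace (Equiv.Perm (Fin (φ i))) := fun _ => ⊥
  have hφ' : ∀ (l : ℕ), Cardinal.mk {i : ι // l ≤ φ i} = Cardinal.mk ι := by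
    intro l
    rcases Nat.eq_zero_or_pos l with rfl | hl
    · exact mk_congr (Equiv.subtypeUnivEquiv (fun i => Nat.zero_le _))
    · exact hφ l hl
  have hκ0 : ℵ₀ ≤ #ι := aleph0_le_mk ι
  constructor
  · -- dense free subgroup of rank 2^#ι
    obtain ⟨g, hginj, hgval⟩ := main_construction φ hφ'
    refine ⟨Set ι, g, mk_set, hginj, ?_⟩
    rw [dense_iff_inter_open]
    rintro U hU ⟨h₀, hh₀⟩
    obtain ⟨I, uS, huS, hsub⟩ := isOpen_pi_iff.1 hU h₀ hh₀
    obtain ⟨X, hX⟩ := hgval I h₀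
    refine ⟨g X, hsub ?_, ?_⟩
    · intro i hi
      rw [hX i hi]
      exact (huS i hi).2
    · exact ⟨FreeGroup.of X, FreeGroup.lift_apply_of⟩
  · -- almost 2^#ι-free
    unfold AlmostFree
    intro σ' hσ'
    rw [dense_iff_inter_open]
    rintro U hU ⟨h₀, hh₀⟩
    obtain ⟨Fs, uS, huS, hsub⟩ := isOpen_pi_iff.1 hU h₀ hh₀
    have step : ∀ s, s ∈ Fs → ∃ (I : Finset ι) (w : ∀ i, Set (Equiv.Perm (Fin (φ i)))),
        (∀ i, i ∈ I → IsOpen (w i) ∧ h₀ s i ∈ w i) ∧ (I : Set ι).pi w ⊆ uS s := by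
      intro s hs
      exact isOpen_pi_iff.1 (huS s hs).1 (h₀ s) (huS s hs).2
    choose! I w hIw hIsub using step
    set F : Finset ι := Fs.biUnion I with hF
    set ι' := ((F : Set ι)ᶜ : Set ι) with hι'
    haveI hinf : Infinite ι' := (F.finite_toSet.infinite_compl).to_subtype
    have hι'κ : #ι' = #ι := mk_compl_of_infinite (F : Set ι)
      (F.finite_toSet.lt_aleph0.trans_le hκ0)
    have hφ'' : ∀ l : ℕ, #{j : ι' // l ≤ φ j.1} = #ι' := by
      intro l
      have hE : #{j : ι' // l ≤ φ j.1} = #({i : ι | l ≤ φ i} \ (F : Set ι) : Set ι) := by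
        refine mk_congr ⟨fun x => ⟨x.1.1, x.2, x.1.2⟩, fun y => ⟨⟨y.1, y.2.2⟩, y.2.1⟩,
          fun x => rfl, fun y => rfl⟩
      rw [hE, hι'κ]
      have hA : #({i : ι | l ≤ φ i} : Set ι) = #ι := hφ' l
      have hsplit : #({i : ι | l ≤ φ i} \ (F : Set ι) : Set ι) +
          #({i : ι | l ≤ φ i} ∩ (F : Set ι) : Set ι) = #({i : ι | l ≤ φ i} : Set ι) := by
        have h1 := mk_diff_add_mk (S := {i : ι | l ≤ φ i})
          (T := {i : ι | l ≤ φ i} ∩ (F : Set ι)) Set.inter_subset_left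
        rwa [Set.diff_self_inter] at h1
      refine le_antisymm (mk_set_le _) ?_
      by_contra hlt
      push_neg at hlt
      have hsmall : #({i : ι | l ≤ φ i} ∩ (F : Set ι) : Set ι) < #ι :=
        ((F.finite_toSet.subset Set.inter_subset_right).lt_aleph0).trans_le hκ0
      have := add_lt_of_lt hκ0 hlt hsmall
      rw [hsplit, hA] at this
      exact lt_irrefl _ this
    obtain ⟨g', hg'inj, -⟩ := main_construction (ι := ι') (fun j => φ j.1) hφ''
    -- extension homomorphism
    set J : (∀ j : ι', Equiv.Perm (Fin (φ j.1))) →* (∀ i, Equiv.Perm (Fin (φ i))) :=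
      { toFun := fun p i => if h : i ∈ ((F : Set ι)ᶜ : Set ι) then p ⟨i, h⟩ else 1,
        map_one' := by
          funext i
          beta_reduce
          split_ifs <;> rfl,
        map_mul' := by
          intro p q
          funext i
          simp only [OneHom.toFun_eq_coe, OneHom.coe_mk, Pi.mul_apply]
          split_ifs with hmem
          · rfl
          · exact (one_mul 1).symm } with hJ
    obtain ⟨β⟩ : Nonempty (σ' ≃ Set ι') := by
      apply Cardinal.eq.1
      rw [hσ', mk_set, hι'κ]
    set corr : σ' → ∀ i, Equiv.Perm (Fin (φ i)) :=
      fun s i => if i ∈ F then h₀ s i else 1 with hcorr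
    set h : σ' → ∀ i, Equiv.Perm (Fin (φ i)) := fun s => J (g' (β s)) * corr s with hh
    have hJpos : ∀ (p : ∀ j : ι', Equiv.Perm (Fin (φ j.1))) (i : ι)
        (hi : i ∈ ((F : Set ι)ᶜ : Set ι)), J p i = p ⟨i, hi⟩ := fun p i hi => dif_pos hi
    have hJneg : ∀ (p : ∀ j : ι', Equiv.Perm (Fin (φ j.1))) (i : ι),
        i ∈ F → J p i = 1 := fun p i hi => dif_neg (fun hc => hc hi)
    have hagreeF : ∀ s, ∀ i ∈ F, h s i = h₀ s i := by
      intro s i hi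
      show (J (g' (β s)) i) * (corr s i) = h₀ s i
      have h2 : corr s i = h₀ s i := if_pos hi
      rw [hJneg _ _ hi, h2, one_mul]
    refine ⟨h, ?_, ?_⟩
    · -- h in U
      apply hsub
      intro s hs
      apply hIsub s hs
      intro i hi
      have hiF : i ∈ F := Finset.mem_biUnion.2 ⟨s, hs, hi⟩
      rw [hagreeF s i hiF]
      exact (hIw s hs i hi).2
    · -- h is a free tuple
      show Function.Injective (FreeGroup.lift h)
      rw [injective_iff_map_eq_one]
      intro W hW1
      by_contra hW
      have hW' : FreeGroup.freeGroupCongr β W ≠ 1 := by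
        intro hc
        exact hW ((FreeGroup.freeGroupCongr β).injective (by rw [hc, map_one]))
      have hlift' : FreeGroup.lift g' (FreeGroup.freeGroupCongr β W) ≠ 1 := by
        intro hc
        exact hW' (hg'inj (hc.trans (map_one _).symm))
      obtain ⟨j, hj⟩ := Function.ne_iff.1 hlift'
      have hcomp : FreeGroup.lift g' (FreeGroup.freeGroupCongr β W) =
          FreeGroup.lift (fun s => g' (β s)) W := by
        have hhom : (FreeGroup.lift g').comp (FreeGroup.freeGroupCongr β).toMonoidHom =
            FreeGroup.lift (fun s => g' (β s)) := by
          ext s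
          simp
        exact (DFunLike.congr_fun hhom W)
      have hfun : (fun s => h s j.1) = (fun s => g' (β s) j) := by
        funext s
        show (J (g' (β s)) j.1) * (corr s j.1) = g' (β s) j
        have h1 : J (g' (β s)) j.1 = g' (β s) j := hJpos _ _ j.2
        have h2 : corr s j.1 = 1 := if_neg j.2
        rw [h1, h2, mul_one]
      have hval : (FreeGroup.lift h W) j.1 =
          (FreeGroup.lift g' (FreeGroup.freeGroupCongr β W)) j := by
        calc (FreeGroup.lift h W) j.1
            = FreeGroup.lift (fun s => h s j.1) W := lift_eval h W j.1
          _ = FreeGroup.lift (fun s => g' (β s) j) W := by rw [hfun]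
          _ = (FreeGroup.lift (fun s => g' (β s)) W) j := (lift_eval _ W j).symm
          _ = (FreeGroup.lift g' (FreeGroup.freeGroupCongr β W)) j := by rw [hcomp]
      apply hj
      rw [← hval, hW1]
      rfl
end
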